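/- arXiv:1107.2554 — 8 statements merged into one kernel-verified Lean document; each statement's English description precedes it below -/
import Mathlib

section
/- In the iterative well-linked decomposition with parameters k > 8, γ = Θ(log²k), and α = 1/(2¹¹·γ·log k): starting from a single cluster S and repeatedly replacing a cluster W by the two sides (X,Y) of a (k,α)-violating cut, every partition 𝒲 produced during the process satisfies Σ_{W∈𝒲} |out(W)| ≤ |out(S)|·(1 + 1/(64γ)). -/
open Finset

/-- Edges of `G` with exactly one endpoint in `A`. -/
def outF {V : Type*} [Fintype V] [DecidableEq V] (G : SimpleGraph V)
    [DecidableRel G.Adj] (A : Finset V) : Finset (Sym2 V) :=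
  G.edgeFinset.filter fun e => ∃ u v, e = s(u, v) ∧ u ∈ A ∧ v ∉ A

/-- Edges of `G` with one endpoint in `A` and the other in `B`. -/
def betweenF {V : Type*} [Fintype V] [DecidableEq V] (G : SimpleGraph V)
    [DecidableRel G.Adj] (A B : Finset V) : Finset (Sym2 V) :=
  G.edgeFinset.filter fun e => ∃ u v, e = s(u, v) ∧ u ∈ A ∧ v ∈ B

/-- `(X,Y)` is a `(k,α)`-violating cut of the cluster `X ∪ Y`. -/
def Violating {V : Type*} [Fintype V] [DecidableEq V] (G : SimpleGraph V)
    [DecidableRel G.Adj] (α : ℝ) (k : ℕ) (X Y : Finset V) : Prop :=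
  ∃ T₁ T₂ : Finset (Sym2 V),
    T₁ ⊆ outF G X ∩ outF G (X ∪ Y) ∧ T₂ ⊆ outF G Y ∩ outF G (X ∪ Y) ∧
    Disjoint T₁ T₂ ∧ T₁.card + T₂.card ≤ k ∧
    ((betweenF G X Y).card : ℝ) < α * min (T₁.card : ℝ) (T₂.card : ℝ)

/-- One step of the iterative well-linked decomposition: replace a cluster `W` of the
current partition by the two sides of a `(k,α)`-violating cut of `W`. -/
def DecompStep {V : Type*} [Fintype V] [DecidableEq V] (G : SimpleGraph V)
    [DecidableRel G.Adj] (α : ℝ) (k : ℕ) (𝒲 𝒲' : Finset (Finset V)) : Prop :=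
  ∃ W ∈ 𝒲, ∃ X Y : Finset V, X.Nonempty ∧ Y.Nonempty ∧ Disjoint X Y ∧ X ∪ Y = W ∧
    Violating G α k X Y ∧ 𝒲' = insert X (insert Y (𝒲.erase W))

/-! ### Combinatorial lemmas -/

section Comb
variable {V : Type*} [Fintype V] [DecidableEq V] (G : SimpleGraph V) [DecidableRel G.Adj]

lemma betweenF_comm (A B : Finset V) : betweenF G A B = betweenF G B A := by
  unfold betweenF
  apply filter_congr
  intro e _
  constructor
  · rintro ⟨u, v, rfl, hu, hv⟩; exact ⟨v, u, Sym2.eq_swap, hv, hu⟩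
  · rintro ⟨u, v, rfl, hu, hv⟩; exact ⟨v, u, Sym2.eq_swap, hv, hu⟩

lemma outF_side_eq (X Y : Finset V) (hd : Disjoint X Y) :
    outF G X = (outF G (X ∪ Y) ∩ outF G X) ∪ betweenF G X Y := by
  ext e
  simp only [Finset.mem_union, Finset.mem_inter, outF, betweenF, mem_filter]
  constructor
  · rintro ⟨he, u, v, rfl, hu, hv⟩
    by_cases hvY : v ∈ Y
    · exact Or.inr ⟨he, u, v, rfl, hu, hvY⟩
    · exact Or.inl ⟨⟨he, u, v, rfl, Or.inl hu, by simp [hv, hvY]⟩,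
        he, u, v, rfl, hu, hv⟩
  · rintro (⟨_, h⟩ | ⟨he, u, v, rfl, hu, hv⟩)
    · exact h
    · exact ⟨he, u, v, rfl, hu, fun hx => (Finset.disjoint_left.mp hd hx) hv⟩

lemma disj_out_between (X Y : Finset V) :
    Disjoint (outF G (X ∪ Y) ∩ outF G X) (betweenF G X Y) := by
  rw [Finset.disjoint_left]
  intro e he1 he2
  have he1 := (Finset.mem_inter.mp he1).1
  simp only [outF, betweenF, mem_filter] at he1 he2
  obtain ⟨-, u, v, rfl, hu, hv⟩ := he1
  obtain ⟨-, u', v', heq, hu', hv'⟩ := he2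
  rw [Sym2.eq_iff] at heq
  rcases heq with ⟨rfl, rfl⟩ | ⟨rfl, rfl⟩
  · exact hv (Finset.mem_union_right _ hv')
  · exact hv (Finset.mem_union_left _ hu')

lemma card_outF_side (X Y : Finset V) (hd : Disjoint X Y) :
    (outF G X).card = (outF G (X ∪ Y) ∩ outF G X).card + (betweenF G X Y).card := by
  conv_lhs => rw [outF_side_eq G X Y hd]
  rw [card_union_of_disjoint (disj_out_between G X Y)]

lemma card_outF_union (X Y : Finset V) (hd : Disjoint X Y) :
    (outF G (X ∪ Y)).card
      = (outF G (X ∪ Y) ∩ outF G X).card + (outF G (X ∪ Y) ∩ outF G Y).card := by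
  rw [← card_union_of_disjoint, ← inter_union_distrib_left]
  · congr 1
    apply (inter_eq_left.mpr _).symm
    intro e he
    simp only [outF, Finset.mem_union, mem_filter] at he ⊢
    obtain ⟨he1, u, v, rfl, hu, hv⟩ := he
    rcases hu with hx | hy
    · exact Or.inl ⟨he1, u, v, rfl, hx, fun h => hv (Or.inl h)⟩
    · exact Or.inr ⟨he1, u, v, rfl, hy, fun h => hv (Or.inr h)⟩
  · rw [Finset.disjoint_left]
    intro e heXW heYW
    have heW := (Finset.mem_inter.mp heXW).1
    have heX := (Finset.mem_inter.mp heXW).2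
    have heY := (Finset.mem_inter.mp heYW).2
    simp only [outF, mem_filter] at heW heX heY
    obtain ⟨-, u, v, rfl, hu, hv⟩ := heW
    obtain ⟨-, a, b, hab, ha, hb⟩ := heX
    obtain ⟨-, c, d2, hcd, hc, hd2⟩ := heY
    rw [Sym2.eq_iff] at hab hcd
    have huX : u ∈ X := by
      rcases hab with ⟨rfl, rfl⟩ | ⟨rfl, rfl⟩
      · exact ha
      · exact absurd (Finset.mem_union_left _ ha) hv
    have huY : u ∈ Y := by
      rcases hcd with ⟨rfl, rfl⟩ | ⟨rfl, rfl⟩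
      · exact hc
      · exact absurd (Finset.mem_union_right _ hc) hv
    exact (Finset.disjoint_left.mp hd huX) huY

end Comb

/-! ### The potential function -/

noncomputable def hfun (α K x : ℝ) : ℝ :=
  10*α*Real.logb 2 (min x K) + 12*α*(1 - K / max x K)

lemma hfun_nonneg {α K x : ℝ} (hα : 0 ≤ α) (hK : 1 ≤ K) (hx : 1 ≤ x) :
    0 ≤ hfun α K x := by
  have h1 : 0 ≤ Real.logb 2 (min x K) :=
    Real.logb_nonneg one_lt_two (le_min hx hK)
  have h2 : K / max x K ≤ 1 :=
    div_le_one_of_le₀ (le_max_right _ _) (by positivity)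
  have h3 : 0 ≤ 1 - K / max x K := by linarith
  have hα10 : 0 ≤ 10*α := by linarith
  have hα12 : 0 ≤ 12*α := by linarith
  exact add_nonneg (mul_nonneg hα10 h1) (mul_nonneg hα12 h3)

lemma hfun_mono {α K x y : ℝ} (hα : 0 ≤ α) (hK : 1 ≤ K) (hx : 1 ≤ x) (hxy : x ≤ y) :
    hfun α K x ≤ hfun α K y := by
  have hK0 : (0:ℝ) < K := by linarith
  have h1 : Real.logb 2 (min x K) ≤ Real.logb 2 (min y K) :=
    Real.logb_le_logb_of_le one_lt_two
      (lt_min (by linarith) hK0) (min_le_min hxy le_rfl)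
  have h2 : K / max y K ≤ K / max x K := by
    apply div_le_div_of_nonneg_left (le_of_lt hK0) (by positivity)
    exact max_le_max hxy le_rfl
  have hα10 : 0 ≤ 10*α := by linarith
  have hα12 : 0 ≤ 12*α := by linarith
  unfold hfun
  have := mul_le_mul_of_nonneg_left h1 hα10
  nlinarith [mul_le_mul_of_nonneg_left h2 hα12]

lemma hfun_le {α K x : ℝ} (hα : 0 ≤ α) (hK : 1 ≤ K) (hx : 0 ≤ x) :
    hfun α K x ≤ 10*α*Real.logb 2 K + 12*α := by
  have hK0 : (0:ℝ) < K := by linarith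
  have h1 : Real.logb 2 (min x K) ≤ Real.logb 2 K := by
    rcases le_or_gt 1 (min x K) with h | h
    · exact Real.logb_le_logb_of_le one_lt_two (by linarith) (min_le_right _ _)
    · calc Real.logb 2 (min x K) ≤ 0 :=
            Real.logb_nonpos one_lt_two (le_min hx hK0.le) h.le
        _ ≤ Real.logb 2 K := Real.logb_nonneg one_lt_two hK
  have h2 : 1 - K / max x K ≤ 1 := by
    have : 0 ≤ K / max x K := by positivity
    linarith
  have hα10 : 0 ≤ 10*α := by linarith
  have hα12 : 0 ≤ 12*α := by linarith
  unfold hfun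
  nlinarith [mul_le_mul_of_nonneg_left h1 hα10, mul_le_mul_of_nonneg_left h2 hα12]

lemma logb_one_add_le {α : ℝ} (hα : 0 < α) (hαs : α ≤ 1/6144) :
    Real.logb 2 (1+α) ≤ 1/10 := by
  have hl : Real.log (1+α) ≤ α := by
    have := Real.log_le_sub_one_of_pos (by linarith : (0:ℝ) < 1+α)
    linarith
  have h2 := Real.log_two_gt_d9
  rw [Real.logb, div_le_iff₀ (Real.log_pos one_lt_two)]
  nlinarith

lemma logb_three_halves : (1:ℝ)/2 ≤ Real.logb 2 (3/2) := by
  have h : (1:ℝ) ≤ 2 * Real.logb 2 (3/2) := by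
    have := Real.logb_pow 2 (3/2 : ℝ) 2
    have hle : Real.logb 2 2 ≤ Real.logb 2 ((3/2:ℝ)^2) :=
      Real.logb_le_logb_of_le one_lt_two (by norm_num) (by norm_num)
    rw [Real.logb_self_eq_one one_lt_two] at hle
    · rw [this] at hle; push_cast at hle; linarith
  linarith

lemma crux {α K x : ℝ} (hα : 0 < α) (hαs : α ≤ 1/6144) (hK : 9 ≤ K) (hx : 1 ≤ x) :
    min (4*α) (2*α*K/x) ≤ hfun α K (2*x) - hfun α K ((1+α)*x) := by
  have hx0 : (0:ℝ) < x := by linarith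
  have hK0 : (0:ℝ) < K := by linarith
  have hA0 : (0:ℝ) < (1+α)*x := by positivity
  have hA1 : (1:ℝ) ≤ (1+α)*x := by nlinarith
  have hAB : (1+α)*x < 2*x := by nlinarith
  rcases le_or_gt (2*x) K with h1 | h1
  · -- small regime: both ≤ K
    have e1 : min (2*x) K = 2*x := min_eq_left h1
    have e2 : min ((1+α)*x) K = (1+α)*x := min_eq_left (by linarith)
    have e3 : max (2*x) K = K := max_eq_right h1
    have e4 : max ((1+α)*x) K = K := max_eq_right (by linarith)
    have hlog : Real.logb 2 (2*x) - Real.logb 2 ((1+α)*x)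
        = 1 - Real.logb 2 (1+α) := by
      rw [Real.logb_mul (by norm_num) (ne_of_gt hx0),
          Real.logb_mul (by positivity) (ne_of_gt hx0),
          Real.logb_self_eq_one one_lt_two]
      ring
    have hsmall := logb_one_add_le hα hαs
    have hmin : min (4*α) (2*α*K/x) ≤ 4*α := min_le_left _ _
    unfold hfun
    rw [e1, e2, e3, e4]
    have : 10*α*Real.logb 2 (2*x) - 10*α*Real.logb 2 ((1+α)*x)
        = 10*α*(1 - Real.logb 2 (1+α)) := by rw [← mul_sub, hlog]
    nlinarith
  · rcases le_or_gt K ((1+α)*x) with h2 | h2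
    · -- large regime: both ≥ K
      have e1 : min (2*x) K = K := min_eq_right (by linarith)
      have e2 : min ((1+α)*x) K = K := min_eq_right h2
      have e3 : max (2*x) K = 2*x := max_eq_left (by linarith)
      have e4 : max ((1+α)*x) K = (1+α)*x := max_eq_left h2
      have hdiff : K/((3/2)*x) - K/(2*x) = K/(6*x) := by
        field_simp; ring
      have hfrac : K/((3/2)*x) ≤ K/((1+α)*x) := by
        apply div_le_div_of_nonneg_left hK0.le hA0
        nlinarith
      have hmin : min (4*α) (2*α*K/x) ≤ 2*α*K/x := min_le_right _ _
      have key : 2*α*K/x ≤ 12*α*(K/((1+α)*x) - K/(2*x)) := by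
        have h6 : 12*α*(K/(6*x)) = 2*α*K/x := by ring
        nlinarith [hdiff, hfrac]
      unfold hfun
      rw [e1, e2, e3, e4]
      calc min (4*α) (2*α*K/x) ≤ 2*α*K/x := hmin
        _ ≤ 12*α*(K/((1+α)*x) - K/(2*x)) := key
        _ = 10*α*Real.logb 2 K + 12*α*(1 - K/(2*x))
            - (10*α*Real.logb 2 K + 12*α*(1 - K/((1+α)*x))) := by ring
    · -- mixed regime: (1+α)x < K < 2x
      have e1 : min (2*x) K = K := min_eq_right h1.le
      have e2 : min ((1+α)*x) K = (1+α)*x := min_eq_left h2.le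
      have e3 : max (2*x) K = 2*x := max_eq_left h1.le
      have e4 : max ((1+α)*x) K = K := max_eq_right h2.le
      unfold hfun
      rw [e1, e2, e3, e4]
      have hKK : (1:ℝ) - K/K = 0 := by field_simp; norm_num
      have hlogmono : Real.logb 2 ((1+α)*x) ≤ Real.logb 2 K :=
        Real.logb_le_logb_of_le one_lt_two hA0 h2.le
      rcases le_or_gt K ((3/2)*x) with h3 | h3
      · -- second term big
        have hfr : K/(2*x) ≤ 3/4 := by
          rw [div_le_iff₀ (by positivity)]; nlinarith
        have hmin : min (4*α) (2*α*K/x) ≤ 2*α*K/x := min_le_right _ _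
        have hkx : 2*α*K/x ≤ 3*α := by
          rw [div_le_iff₀ hx0]; nlinarith
        nlinarith [mul_le_mul_of_nonneg_left hlogmono (by linarith : (0:ℝ) ≤ 10*α)]
      · -- log term big
        have hlog2 : Real.logb 2 ((3/2)*x) ≤ Real.logb 2 K :=
          Real.logb_le_logb_of_le one_lt_two (by linarith) h3.le
        have hsplit1 : Real.logb 2 ((3/2)*x) = Real.logb 2 (3/2) + Real.logb 2 x := by
          rw [Real.logb_mul (by norm_num) (ne_of_gt hx0)]
        have hsplit2 : Real.logb 2 ((1+α)*x) = Real.logb 2 (1+α) + Real.logb 2 x := by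
          rw [Real.logb_mul (by positivity) (ne_of_gt hx0)]
        have h32 := logb_three_halves
        have hsm := logb_one_add_le hα hαs
        have hlogdiff : (2:ℝ)/5 ≤ Real.logb 2 K - Real.logb 2 ((1+α)*x) := by
          rw [hsplit2]
          rw [hsplit1] at hlog2
          linarith
        have hmin : min (4*α) (2*α*K/x) ≤ 4*α := min_le_left _ _
        have hfr : K/(2*x) ≤ 1 := by
          rw [div_le_one (by positivity)]; linarith
        nlinarith

lemma step_real {α K x y m : ℝ} (hα : 0 < α) (hαs : α ≤ 1/6144) (hK : 9 ≤ K)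
    (h1 : 10*α*Real.logb 2 K + 12*α ≤ 1)
    (hx : 1 ≤ x) (hxy : x ≤ y) (hm0 : 0 ≤ m) (hmx : m < α*x) (hmk : m < α*K/2) :
    (x+m)*(1 + hfun α K (x+m)) + (y+m)*(1 + hfun α K (y+m))
      ≤ (x+y)*(1 + hfun α K (x+y)) := by
  have hK1 : (1:ℝ) ≤ K := by linarith
  have hx0 : (0:ℝ) < x := by linarith
  have hmlx : m < x := by nlinarith
  have hy1 : 1 ≤ y := le_trans hx hxy
  set hw := hfun α K (x+y) with hwdef
  have hhw1 : hw ≤ 1 := le_trans (hfun_le hα.le hK1 (by linarith)) h1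
  have hxm : hfun α K (x+m) ≤ hfun α K ((1+α)*x) :=
    hfun_mono hα.le hK1 (by linarith) (by nlinarith)
  have h2x : hfun α K (2*x) ≤ hw :=
    hfun_mono hα.le hK1 (by linarith) (by linarith)
  have hym : hfun α K (y+m) ≤ hw :=
    hfun_mono hα.le hK1 (by linarith) (by linarith)
  have hxmw : hfun α K (x+m) ≤ hw :=
    hfun_mono hα.le hK1 (by linarith : (1:ℝ) ≤ x+m) (by linarith : x+m ≤ x+y)
  have hcx := crux hα hαs hK hx
  have hmin : 4*m ≤ x * min (4*α) (2*α*K/x) := by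
    rcases min_cases (4*α) (2*α*K/x) with ⟨he, _⟩ | ⟨he, _⟩
    · rw [he]; nlinarith
    · rw [he, mul_div_assoc', mul_comm, le_div_iff₀ hx0]
      nlinarith
  have hkey : 4*m ≤ x * (hw - hfun α K (x+m)) := by
    calc 4*m ≤ x * min (4*α) (2*α*K/x) := hmin
      _ ≤ x * (hfun α K (2*x) - hfun α K ((1+α)*x)) :=
          mul_le_mul_of_nonneg_left hcx hx0.le
      _ ≤ x * (hw - hfun α K (x+m)) := by
          apply mul_le_mul_of_nonneg_left _ hx0.le
          linarith
  have hnn1 : 0 ≤ hw - hfun α K (x+m) := by linarith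
  have step1 : 4*m ≤ (x+m) * (hw - hfun α K (x+m)) := by
    calc 4*m ≤ x * (hw - hfun α K (x+m)) := hkey
      _ ≤ (x+m) * (hw - hfun α K (x+m)) :=
          mul_le_mul_of_nonneg_right (by linarith) hnn1
  have step2 : 0 ≤ (y+m) * (hw - hfun α K (y+m)) :=
    mul_nonneg (by linarith) (by linarith)
  nlinarith [step1, step2]

noncomputable def phiF (α K : ℝ) (n : ℕ) : ℝ := (n:ℝ) * (1 + hfun α K (n:ℝ))

lemma phiF_nonneg {α K : ℝ} (hα : 0 ≤ α) (hK : 1 ≤ K) (n : ℕ) : 0 ≤ phiF α K n := by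
  rcases Nat.eq_zero_or_pos n with rfl | hn
  · simp [phiF]
  · have h1 : (1:ℝ) ≤ n := by exact_mod_cast hn
    have := hfun_nonneg hα hK h1
    unfold phiF; nlinarith

lemma le_phiF {α K : ℝ} (hα : 0 ≤ α) (hK : 1 ≤ K) (n : ℕ) : (n:ℝ) ≤ phiF α K n := by
  rcases Nat.eq_zero_or_pos n with rfl | hn
  · simp [phiF]
  · have h1 : (1:ℝ) ≤ n := by exact_mod_cast hn
    have := hfun_nonneg hα hK h1
    unfold phiF; nlinarith

lemma phiF_superadd {α K : ℝ} (hα : 0 ≤ α) (hK : 1 ≤ K) (a b : ℕ) :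
    phiF α K a + phiF α K b ≤ phiF α K (a+b) := by
  rcases Nat.eq_zero_or_pos a with rfl | ha
  · simp [phiF]
  rcases Nat.eq_zero_or_pos b with rfl | hb
  · simp [phiF]
  have ha1 : (1:ℝ) ≤ a := by exact_mod_cast ha
  have hb1 : (1:ℝ) ≤ b := by exact_mod_cast hb
  have hma : hfun α K a ≤ hfun α K ((a:ℝ)+(b:ℝ)) := hfun_mono hα hK ha1 (by linarith)
  have hmb : hfun α K b ≤ hfun α K ((a:ℝ)+(b:ℝ)) := hfun_mono hα hK hb1 (by linarith)
  unfold phiF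
  push_cast
  nlinarith [hfun_nonneg hα hK ha1, hfun_nonneg hα hK hb1]

lemma step_nat {α : ℝ} {k : ℕ} (hα : 0 < α) (hαs : α ≤ 1/6144) (hK : 9 ≤ (k:ℝ))
    (h1 : 10*α*Real.logb 2 (k:ℝ) + 12*α ≤ 1)
    (wX wY m t1 t2 : ℕ) (ht1 : t1 ≤ wX) (ht2 : t2 ≤ wY) (htk : t1 + t2 ≤ k)
    (hm : (m:ℝ) < α * min (t1:ℝ) (t2:ℝ)) :
    phiF α k (wX+m) + phiF α k (wY+m) ≤ phiF α k (wX+wY) := by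
  have hK1 : (1:ℝ) ≤ (k:ℝ) := by linarith
  rcases Nat.eq_zero_or_pos m with rfl | hmpos
  · simpa using phiF_superadd hα.le hK1 wX wY
  have hm1 : (1:ℝ) ≤ (m:ℝ) := by exact_mod_cast hmpos
  have hαle1 : α ≤ 1 := by linarith
  have hmint : (m:ℝ) < α * (t1:ℝ) ∧ (m:ℝ) < α * (t2:ℝ) := by
    constructor <;> [exact lt_of_lt_of_le hm (by nlinarith [min_le_left (t1:ℝ) t2]);
      exact lt_of_lt_of_le hm (by nlinarith [min_le_right (t1:ℝ) t2])]
  have hmwX : (m:ℝ) < α * (wX:ℝ) := by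
    have : (t1:ℝ) ≤ wX := by exact_mod_cast ht1
    nlinarith [hmint.1]
  have hmwY : (m:ℝ) < α * (wY:ℝ) := by
    have : (t2:ℝ) ≤ wY := by exact_mod_cast ht2
    nlinarith [hmint.2]
  have hmk : (m:ℝ) < α * (k:ℝ) / 2 := by
    have hsum : (t1:ℝ) + (t2:ℝ) ≤ (k:ℝ) := by exact_mod_cast htk
    rcases le_total (t1:ℝ) (t2:ℝ) with h | h
    · have : (t1:ℝ) ≤ (k:ℝ)/2 := by linarith
      nlinarith [hmint.1]
    · have : (t2:ℝ) ≤ (k:ℝ)/2 := by linarith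
      nlinarith [hmint.2]
  have hwX0 : (0:ℝ) ≤ (wX:ℝ) := Nat.cast_nonneg _
  have hwY0 : (0:ℝ) ≤ (wY:ℝ) := Nat.cast_nonneg _
  have hwX1 : (1:ℝ) ≤ (wX:ℝ) := by
    have := mul_le_of_le_one_left hwX0 hαle1
    linarith
  have hwY1 : (1:ℝ) ≤ (wY:ℝ) := by
    have := mul_le_of_le_one_left hwY0 hαle1
    linarith
  have hm0 : (0:ℝ) ≤ m := by positivity
  unfold phiF
  push_cast
  rcases le_total (wX:ℝ) (wY:ℝ) with h | h
  · exact step_real hα hαs hK h1 hwX1 h hm0 hmwX hmk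
  · have := step_real hα hαs hK h1 hwY1 h hm0 hmwY hmk
    rw [add_comm (wY:ℝ) (wX:ℝ)] at this
    linarith [this]

lemma sum_insert_le' {β : Type*} [DecidableEq β] {s : Finset β} {f : β → ℝ}
    (hf : ∀ a, 0 ≤ f a) (a : β) :
    ∑ x ∈ insert a s, f x ≤ f a + ∑ x ∈ s, f x := by
  by_cases h : a ∈ s
  · rw [Finset.insert_eq_self.mpr h]
    exact le_add_of_nonneg_left (hf a)
  · rw [Finset.sum_insert h]

/-- In the iterative well-linked decomposition with `k > 8`, `γ ≥ 1` and
`α = 1/(2¹¹·γ·log k)`, every partition `𝒲` produced during the process satisfies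
`∑_{W∈𝒲} |out(W)| ≤ |out(S)|·(1 + 1/(64γ))`. -/
theorem stmt_8 {V : Type*} [Fintype V] [DecidableEq V] (G : SimpleGraph V)
    [DecidableRel G.Adj] (S : Finset V) (k γ : ℕ) (hk : 8 < k) (hγ : 1 ≤ γ)
    (α : ℝ) (hα : α = 1 / (2 ^ 11 * γ * Real.logb 2 k)) :
    ∀ 𝒲 : Finset (Finset V),
      Relation.ReflTransGen (DecompStep G α k) {S} 𝒲 →
      ∑ W ∈ 𝒲, ((outF G W).card : ℝ) ≤
        ((outF G S).card : ℝ) * (1 + 1 / (64 * γ)) := by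
  intro 𝒲 h
  -- numeric facts
  have hK9 : (9:ℝ) ≤ (k:ℝ) := by exact_mod_cast hk
  have hK1 : (1:ℝ) ≤ (k:ℝ) := by linarith
  have hL8 : Real.logb 2 (8:ℝ) = 3 := by
    rw [show (8:ℝ) = 2^(3:ℕ) by norm_num, Real.logb_pow,
      Real.logb_self_eq_one one_lt_two]
    norm_num
  have hL : 3 ≤ Real.logb 2 (k:ℝ) := by
    rw [← hL8]
    exact Real.logb_le_logb_of_le one_lt_two (by norm_num) (by linarith)
  have hg1 : (1:ℝ) ≤ (γ:ℝ) := by exact_mod_cast hγ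
  have hg0 : (0:ℝ) < (γ:ℝ) := by linarith
  have hL0 : (0:ℝ) < Real.logb 2 (k:ℝ) := by linarith
  have hα_pos : 0 < α := by rw [hα]; positivity
  have hαs : α ≤ 1/6144 := by
    rw [hα, div_le_div_iff₀ (by positivity) (by norm_num)]
    nlinarith
  have hαL : α * Real.logb 2 (k:ℝ) = 1/(2^11*(γ:ℝ)) := by
    rw [hα]
    field_simp
  have hb64 : 10*α*Real.logb 2 (k:ℝ) + 12*α ≤ 1/(64*(γ:ℝ)) := by
    have h3a : 3*α ≤ α * Real.logb 2 (k:ℝ) := by nlinarith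
    have h14 : 10*α*Real.logb 2 (k:ℝ) + 12*α ≤ 14*(α*Real.logb 2 (k:ℝ)) := by
      nlinarith
    have heq : 14*(α*Real.logb 2 (k:ℝ)) = 14/(2^11*(γ:ℝ)) := by
      rw [hαL]; ring
    have hfin : (14:ℝ)/(2^11*(γ:ℝ)) ≤ 1/(64*(γ:ℝ)) := by
      rw [div_le_div_iff₀ (by positivity) (by positivity)]
      nlinarith
    linarith
  have h1le : 10*α*Real.logb 2 (k:ℝ) + 12*α ≤ 1 := by
    have : (1:ℝ)/(64*(γ:ℝ)) ≤ 1 := by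
      rw [div_le_one (by positivity)]
      nlinarith
    linarith
  -- the invariant
  have inv : ∑ W ∈ 𝒲, phiF α k ((outF G W).card) ≤ phiF α k ((outF G S).card) := by
    induction h with
    | refl => simp
    | @tail 𝒱 𝒲' hrel hstep ih =>
        refine le_trans ?_ ih
        obtain ⟨W, hW, X, Y, hXne, hYne, hdXY, hXYW, hviol, rfl⟩ := hstep
        obtain ⟨T1, T2, hT1, hT2, hdT, hk12, hm⟩ := hviol
        subst hXYW
        have hX := card_outF_side G X Y hdXY
        have hY : (outF G Y).card
            = (outF G (X ∪ Y) ∩ outF G Y).card + (betweenF G X Y).card := by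
          have := card_outF_side G Y X hdXY.symm
          rwa [union_comm Y X, betweenF_comm G Y X] at this
        have hWc := card_outF_union G X Y hdXY
        have ht1 : T1.card ≤ (outF G (X ∪ Y) ∩ outF G X).card := by
          apply Finset.card_le_card
          intro e he
          exact Finset.mem_inter.mpr ⟨(Finset.mem_inter.mp (hT1 he)).2,
            (Finset.mem_inter.mp (hT1 he)).1⟩
        have ht2 : T2.card ≤ (outF G (X ∪ Y) ∩ outF G Y).card := by
          apply Finset.card_le_card
          intro e he
          exact Finset.mem_inter.mpr ⟨(Finset.mem_inter.mp (hT2 he)).2,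
            (Finset.mem_inter.mp (hT2 he)).1⟩
        have hstep2 := step_nat hα_pos hαs hK9 h1le
          (outF G (X ∪ Y) ∩ outF G X).card (outF G (X ∪ Y) ∩ outF G Y).card
          (betweenF G X Y).card T1.card T2.card ht1 ht2 hk12 hm
        rw [← hX, ← hY, ← hWc] at hstep2
        have hnn : ∀ A : Finset V, 0 ≤ phiF α k ((outF G A).card) :=
          fun A => phiF_nonneg hα_pos.le hK1 _
        calc ∑ A ∈ insert X (insert Y (𝒱.erase (X ∪ Y))), phiF α k ((outF G A).card)
            ≤ phiF α k ((outF G X).card)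
              + ∑ A ∈ insert Y (𝒱.erase (X ∪ Y)), phiF α k ((outF G A).card) :=
              sum_insert_le' (fun A => hnn A) X
          _ ≤ phiF α k ((outF G X).card) + (phiF α k ((outF G Y).card)
              + ∑ A ∈ 𝒱.erase (X ∪ Y), phiF α k ((outF G A).card)) := by
              have := sum_insert_le' (f := fun A => phiF α k ((outF G A).card))
                (fun A => hnn A) Y (s := 𝒱.erase (X ∪ Y))
              linarith
          _ ≤ phiF α k ((outF G (X ∪ Y)).card)
              + ∑ A ∈ 𝒱.erase (X ∪ Y), phiF α k ((outF G A).card) := by linarith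
          _ = ∑ A ∈ 𝒱, phiF α k ((outF G A).card) :=
              Finset.add_sum_erase 𝒱 (fun A => phiF α k ((outF G A).card)) hW
  -- conclude
  have hfinal : phiF α k ((outF G S).card)
      ≤ ((outF G S).card : ℝ) * (1 + 1/(64*(γ:ℝ))) := by
    unfold phiF
    apply mul_le_mul_of_nonneg_left _ (Nat.cast_nonneg _)
    have := hfun_le (α := α) (K := (k:ℝ)) (x := ((outF G S).card : ℝ))
      hα_pos.le hK1 (Nat.cast_nonneg _)
    linarith
  calc ∑ W ∈ 𝒲, ((outF G W).card : ℝ)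
      ≤ ∑ W ∈ 𝒲, phiF α k ((outF G W).card) :=
        Finset.sum_le_sum fun W _ => le_phiF hα_pos.le hK1 _
    _ ≤ phiF α k ((outF G S).card) := inv
    _ ≤ ((outF G S).card : ℝ) * (1 + 1/(64*(γ:ℝ))) := hfinal
end

section
/- Let Z be a multigraph on γ vertices such that every vertex v has weighted degree C(v) with (1 − 1/γ²)·ℓ ≤ C(v) ≤ ℓ, and between every pair of distinct vertices the total edge capacity is at least (1 − 1/γ)·ℓ of max-flow value (i.e., every pair of vertices can send (1−1/γ)ℓ units of flow respecting edge capacities). Then setting x_e = ((γ−1)/γ)·(c(e)/C(v) + c(e)/C(u)) for each edge e=(u,v) yields a feasible fractional solution to the degree-bounded spanning tree LP with degree bound B = 2: Σ_e x_e = γ − 1; for every S ⊂ V(Z) with |S| ≥ 2, Σ_{e∈E(S)} x_e ≤ |S| − 1; and for every vertex v, Σ_{e∈δ(v)} x_e ≤ 2. -/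
open Finset

/-- Edges of the multigraph incident on `v`. -/
def deltaV {V E : Type*} [Fintype E] [DecidableEq V] (ends : E → V × V) (v : V) :
    Finset E :=
  univ.filter fun e => (ends e).1 = v ∨ (ends e).2 = v

/-- Weighted degree `C(v) = ∑_{e ∈ δ(v)} c(e)`. -/
noncomputable def Cdeg {V E : Type*} [Fintype E] [DecidableEq V] (ends : E → V × V)
    (c : E → ℝ) (v : V) : ℝ :=
  ∑ e ∈ deltaV ends v, c e

/-- Edges with both endpoints in `S`. -/
def insideE {V E : Type*} [Fintype E] [DecidableEq V] (ends : E → V × V)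
    (S : Finset V) : Finset E :=
  univ.filter fun e => (ends e).1 ∈ S ∧ (ends e).2 ∈ S

/-- Edges with exactly one endpoint in `S`. -/
def crossE {V E : Type*} [Fintype E] [DecidableEq V] (ends : E → V × V)
    (S : Finset V) : Finset E :=
  univ.filter fun e =>
    ((ends e).1 ∈ S ∧ (ends e).2 ∉ S) ∨ ((ends e).1 ∉ S ∧ (ends e).2 ∈ S)

/-- The LP value `x_e = ((γ−1)/γ)·(c(e)/C(u) + c(e)/C(v))` for an edge `e = (u,v)`. -/
noncomputable def xLP {V E : Type*} [Fintype E] [DecidableEq V] (ends : E → V × V)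
    (c : E → ℝ) (γ : ℕ) (e : E) : ℝ :=
  ((γ : ℝ) - 1) / γ *
    (c e / Cdeg ends c (ends e).1 + c e / Cdeg ends c (ends e).2)

/-- Swapping a sum over edges of a sum over the two (distinct) endpoints into a sum over
vertices of a sum over incident edges. -/
lemma keySwap {V E : Type*} [Fintype V] [Fintype E] [DecidableEq V]
    (ends : E → V × V) (hnoloop : ∀ e, (ends e).1 ≠ (ends e).2)
    (T : Finset E) (F : V → E → ℝ) :
    ∑ e ∈ T, (F (ends e).1 e + F (ends e).2 e)
      = ∑ v, ∑ e ∈ T.filter (fun e => (ends e).1 = v ∨ (ends e).2 = v), F v e := by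
  have h1 : ∀ e ∈ T, F (ends e).1 e + F (ends e).2 e
      = ∑ v ∈ ({(ends e).1, (ends e).2} : Finset V), F v e := by
    intro e _
    rw [Finset.sum_pair (hnoloop e)]
  rw [Finset.sum_congr rfl h1]
  refine Finset.sum_comm' ?_
  intro e v
  simp only [Finset.mem_insert, Finset.mem_singleton, Finset.mem_filter, Finset.mem_univ,
    and_true, true_and]
  constructor
  · rintro ⟨he, h | h⟩
    · exact ⟨he, Or.inl h.symm⟩
    · exact ⟨he, Or.inr h.symm⟩
  · rintro ⟨he, h | h⟩
    · exact ⟨he, Or.inl h.symm⟩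
    · exact ⟨he, Or.inr h.symm⟩

lemma arith_deg (g ℓ : ℝ) (hg : 2 ≤ g) (hl : 0 < ℓ) :
    (g - 1) / g + (g - 1) / g * (ℓ / ((1 - 1 / g ^ 2) * ℓ)) ≤ 2 := by
  have hg0 : (0:ℝ) < g := by linarith
  have hg1 : (0:ℝ) < g ^ 2 - 1 := by nlinarith
  have h1 : (1 : ℝ) - 1 / g ^ 2 = (g ^ 2 - 1) / g ^ 2 := by field_simp
  have h2 : ℓ / ((1 - 1 / g ^ 2) * ℓ) = g ^ 2 / (g ^ 2 - 1) := by
    rw [h1]; field_simp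
  rw [h2]
  have h3 : (g - 1) / g * (g ^ 2 / (g ^ 2 - 1)) = g / (g + 1) := by
    rw [div_mul_div_comm, div_eq_div_iff (by positivity) (by positivity)]
    ring
  rw [h3]
  have h4 : (g - 1) / g ≤ 1 := by rw [div_le_one hg0]; linarith
  have h5 : g / (g + 1) ≤ 1 := by rw [div_le_one (by linarith)]; linarith
  linarith

lemma arith_sub (g s ℓ : ℝ) (hg : 2 ≤ g) (hs : 2 ≤ s) (hl : 0 < ℓ) :
    (g - 1) / g * s - (g - 1) / g / ℓ * ((1 - 1 / g) * ℓ) ≤ s - 1 := by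
  have hg0 : (0:ℝ) < g := by linarith
  have h2 : (g - 1) / g / ℓ * ((1 - 1 / g) * ℓ) = (g - 1) / g * (1 - 1 / g) := by
    field_simp
  rw [h2]
  have hk1 : (g - 1) / g = 1 - 1 / g := by field_simp
  rw [hk1]
  have ht0 : 0 < 1 / g := by positivity
  nlinarith [mul_nonneg (le_of_lt ht0) (by linarith : (0:ℝ) ≤ s - 2), sq_nonneg (1 / g)]

/-- Feasibility of the degree-bounded spanning tree LP with degree bound `B = 2`:
in a capacitated multigraph on `γ` vertices with `(1−1/γ²)ℓ ≤ C(v) ≤ ℓ` and every cut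
of capacity at least `(1−1/γ)ℓ`, the values `x_e` satisfy `∑ x_e = γ−1`, the subtour
constraints `∑_{e∈E(S)} x_e ≤ |S|−1` for all proper nonempty `S`, and the degree
constraints `∑_{e∈δ(v)} x_e ≤ 2`. -/
theorem stmt_11 {V E : Type*} [Fintype V] [Fintype E] [DecidableEq V]
    (ends : E → V × V) (c : E → ℝ) (ℓ : ℝ) (hℓ : 0 < ℓ)
    (hγ : 2 ≤ Fintype.card V)
    (hnoloop : ∀ e, (ends e).1 ≠ (ends e).2)
    (hc : ∀ e, 0 ≤ c e)
    (hClb : ∀ v, (1 - 1 / (Fintype.card V : ℝ) ^ 2) * ℓ ≤ Cdeg ends c v)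
    (hCub : ∀ v, Cdeg ends c v ≤ ℓ)
    (hcut : ∀ S : Finset V, S.Nonempty → S ≠ univ →
      (1 - 1 / (Fintype.card V : ℝ)) * ℓ ≤ ∑ e ∈ crossE ends S, c e) :
    (∑ e, xLP ends c (Fintype.card V) e = (Fintype.card V : ℝ) - 1) ∧
    (∀ S : Finset V, S.Nonempty → S ≠ univ →
      ∑ e ∈ insideE ends S, xLP ends c (Fintype.card V) e ≤ (S.card : ℝ) - 1) ∧
    (∀ v, ∑ e ∈ deltaV ends v, xLP ends c (Fintype.card V) e ≤ 2) := by
  classical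
  set g : ℝ := (Fintype.card V : ℝ) with hgdef
  have hg2 : (2:ℝ) ≤ g := by rw [hgdef]; exact_mod_cast hγ
  have hg0 : (0:ℝ) < g := by linarith
  set k : ℝ := (g - 1) / g with hkdef
  have hk0 : 0 ≤ k := by rw [hkdef]; apply div_nonneg <;> linarith
  have hm0 : 0 < (1 - 1 / g ^ 2) * ℓ := by
    have : 1 / g ^ 2 ≤ 1 / 4 := by
      apply one_div_le_one_div_of_le <;> nlinarith
    nlinarith
  have hCpos : ∀ v, 0 < Cdeg ends c v := fun v => lt_of_lt_of_le hm0 (hClb v)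
  have hxLP : ∀ e, xLP ends c (Fintype.card V) e
      = k * (c e / Cdeg ends c (ends e).1) + k * (c e / Cdeg ends c (ends e).2) := by
    intro e; rw [xLP, mul_add]
  have hinner : ∀ v, ∑ e ∈ deltaV ends v, k * (c e / Cdeg ends c v) = k := by
    intro v
    rw [← Finset.mul_sum, ← Finset.sum_div]
    rw [show (∑ e ∈ deltaV ends v, c e) = Cdeg ends c v from rfl]
    rw [div_self (hCpos v).ne', mul_one]
  -- Part 1
  have part1 : ∑ e, xLP ends c (Fintype.card V) e = g - 1 := by
    rw [Finset.sum_congr rfl (fun e _ => hxLP e),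
      keySwap ends hnoloop univ (fun v e => k * (c e / Cdeg ends c v))]
    have : ∀ v : V, (univ.filter (fun e => (ends e).1 = v ∨ (ends e).2 = v)) = deltaV ends v :=
      fun v => rfl
    simp only [this, hinner, Finset.sum_const, Finset.card_univ, nsmul_eq_mul]
    rw [hkdef, ← hgdef, mul_div_assoc']
    field_simp
  refine ⟨part1, ?_, ?_⟩
  · -- subtour constraints
    intro S hSne hSuniv
    by_cases hS1 : S.card = 1
    · obtain ⟨a, ha⟩ := Finset.card_eq_one.mp hS1
      have : insideE ends S = ∅ := by
        ext e
        simp only [insideE, ha, Finset.mem_filter, Finset.mem_univ, true_and,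
          Finset.mem_singleton, Finset.notMem_empty, iff_false]
        rintro ⟨h1, h2⟩
        exact hnoloop e (h1.trans h2.symm)
      simp [this, hS1]
    · have hS0 : 0 < S.card := Finset.card_pos.mpr hSne
      have hS2 : 2 ≤ S.card := by omega
      have hS2r : (2:ℝ) ≤ S.card := by exact_mod_cast hS2
      set Din : V → Finset E := fun v =>
        (insideE ends S).filter (fun e => (ends e).1 = v ∨ (ends e).2 = v) with hDin
      set Dcr : V → Finset E := fun v =>
        (crossE ends S).filter (fun e => (ends e).1 = v ∨ (ends e).2 = v) with hDcr
      have split : ∀ v ∈ S, (∑ e ∈ Din v, c e) + (∑ e ∈ Dcr v, c e) = Cdeg ends c v := by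
        intro v hv
        have h1 : Din v = (deltaV ends v).filter
            (fun e => (ends e).1 ∈ S ∧ (ends e).2 ∈ S) := by
          ext e
          simp only [hDin, insideE, deltaV, Finset.mem_filter, Finset.mem_univ, true_and]
          tauto
        have h2 : Dcr v = (deltaV ends v).filter
            (fun e => ¬((ends e).1 ∈ S ∧ (ends e).2 ∈ S)) := by
          ext e
          simp only [hDcr, crossE, deltaV, Finset.mem_filter, Finset.mem_univ, true_and]
          constructor
          · rintro ⟨h, hp⟩
            refine ⟨hp, ?_⟩
            rintro ⟨ha, hb⟩
            rcases h with ⟨-, h2⟩ | ⟨h1, -⟩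
            exacts [h2 hb, h1 ha]
          · rintro ⟨hp, h⟩
            refine ⟨?_, hp⟩
            rcases hp with h1 | h1
            · left; exact ⟨h1 ▸ hv, fun hb => h ⟨h1 ▸ hv, hb⟩⟩
            · right; exact ⟨fun ha => h ⟨ha, h1 ▸ hv⟩, h1 ▸ hv⟩
        rw [h1, h2, Finset.sum_filter_add_sum_filter_not]
        rfl
      have cutsum : ∑ v ∈ S, (∑ e ∈ Dcr v, c e) = ∑ e ∈ crossE ends S, c e := by
        have hswap := keySwap ends hnoloop (crossE ends S)
          (fun v e => if v ∈ S then c e else 0)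
        have hlhs : ∑ e ∈ crossE ends S,
            ((if (ends e).1 ∈ S then c e else 0) + (if (ends e).2 ∈ S then c e else 0))
            = ∑ e ∈ crossE ends S, c e := by
          refine Finset.sum_congr rfl ?_
          intro e he
          simp only [crossE, Finset.mem_filter, Finset.mem_univ, true_and] at he
          rcases he with ⟨h1, h2⟩ | ⟨h1, h2⟩ <;> simp [h1, h2]
        have hrhs : ∀ v : V, (∑ e ∈ Dcr v, (if v ∈ S then c e else 0))
            = if v ∈ S then ∑ e ∈ Dcr v, c e else 0 := by
          intro v; split_ifs <;> simp
        calc ∑ v ∈ S, (∑ e ∈ Dcr v, c e)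
            = ∑ v, (if v ∈ S then ∑ e ∈ Dcr v, c e else 0) := by
              rw [Finset.sum_ite_mem, Finset.univ_inter]
          _ = ∑ v, ∑ e ∈ Dcr v, (if v ∈ S then c e else 0) :=
              Finset.sum_congr rfl (fun v _ => (hrhs v).symm)
          _ = ∑ e ∈ crossE ends S, c e := by rw [← hswap, hlhs]
      have vanish : ∀ v ∉ S, Din v = ∅ := by
        intro v hv
        ext e
        simp only [hDin, insideE, Finset.mem_filter, Finset.mem_univ, true_and,
          Finset.notMem_empty, iff_false]
        rintro ⟨⟨h1, h2⟩, h | h⟩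
        exacts [hv (h ▸ h1), hv (h ▸ h2)]
      have hstep : ∑ e ∈ insideE ends S, xLP ends c (Fintype.card V) e
          = ∑ v ∈ S, k * ((∑ e ∈ Din v, c e) / Cdeg ends c v) := by
        rw [Finset.sum_congr rfl (fun e _ => hxLP e),
          keySwap ends hnoloop (insideE ends S) (fun v e => k * (c e / Cdeg ends c v))]
        rw [← Finset.sum_subset (Finset.subset_univ S)]
        · refine Finset.sum_congr rfl ?_
          intro v _
          rw [← Finset.mul_sum, ← Finset.sum_div]
        · intro v _ hv
          rw [show (insideE ends S).filter (fun e => (ends e).1 = v ∨ (ends e).2 = v)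
            = Din v from rfl, vanish v hv, Finset.sum_empty]
      have hbound : ∀ v ∈ S, k * ((∑ e ∈ Din v, c e) / Cdeg ends c v)
          ≤ k - k / ℓ * (∑ e ∈ Dcr v, c e) := by
        intro v hv
        have hB0 : 0 ≤ ∑ e ∈ Dcr v, c e := Finset.sum_nonneg (fun e _ => hc e)
        have hA : (∑ e ∈ Din v, c e) = Cdeg ends c v - ∑ e ∈ Dcr v, c e := by
          have := split v hv; linarith
        rw [hA, sub_div, div_self (hCpos v).ne', mul_sub, mul_one]
        have : k / ℓ * (∑ e ∈ Dcr v, c e) ≤ k * ((∑ e ∈ Dcr v, c e) / Cdeg ends c v) := by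
          rw [div_mul_eq_mul_div, mul_div_assoc]
          have hdd : (∑ e ∈ Dcr v, c e) / ℓ ≤ (∑ e ∈ Dcr v, c e) / Cdeg ends c v :=
            div_le_div_of_nonneg_left hB0 (hCpos v) (hCub v)
          exact mul_le_mul_of_nonneg_left hdd hk0
        linarith
      have hcS : (1 - 1 / g) * ℓ ≤ ∑ e ∈ crossE ends S, c e := hcut S hSne hSuniv
      have chain : ∑ e ∈ insideE ends S, xLP ends c (Fintype.card V) e
          ≤ k * S.card - k / ℓ * ((1 - 1 / g) * ℓ) := by
        rw [hstep]
        calc ∑ v ∈ S, k * ((∑ e ∈ Din v, c e) / Cdeg ends c v)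
            ≤ ∑ v ∈ S, (k - k / ℓ * (∑ e ∈ Dcr v, c e)) := Finset.sum_le_sum hbound
          _ = k * S.card - k / ℓ * ∑ v ∈ S, (∑ e ∈ Dcr v, c e) := by
              rw [Finset.sum_sub_distrib, Finset.sum_const, nsmul_eq_mul, ← Finset.mul_sum,
                mul_comm ((S.card : ℕ) : ℝ) k]
          _ ≤ k * S.card - k / ℓ * ((1 - 1 / g) * ℓ) := by
              rw [cutsum]
              have hkl : 0 ≤ k / ℓ := div_nonneg hk0 (le_of_lt hℓ)
              nlinarith
      have hfin : k * S.card - k / ℓ * ((1 - 1 / g) * ℓ) ≤ (S.card : ℝ) - 1 :=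
        arith_sub g (S.card : ℝ) ℓ hg2 hS2r hℓ
      linarith
  · -- degree constraints
    intro v
    have hb : ∀ e ∈ deltaV ends v, xLP ends c (Fintype.card V) e
        ≤ k * (c e / Cdeg ends c v) + k * (c e / ((1 - 1 / g ^ 2) * ℓ)) := by
      intro e he
      simp only [deltaV, Finset.mem_filter, Finset.mem_univ, true_and] at he
      rw [hxLP]
      rcases he with h | h
      · rw [h]
        have h2 : c e / Cdeg ends c (ends e).2 ≤ c e / ((1 - 1 / g ^ 2) * ℓ) :=
          div_le_div_of_nonneg_left (hc e) hm0 (hClb _)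
        exact add_le_add le_rfl (mul_le_mul_of_nonneg_left h2 hk0)
      · rw [h]
        have h2 : c e / Cdeg ends c (ends e).1 ≤ c e / ((1 - 1 / g ^ 2) * ℓ) :=
          div_le_div_of_nonneg_left (hc e) hm0 (hClb _)
        calc k * (c e / Cdeg ends c (ends e).1) + k * (c e / Cdeg ends c v)
            ≤ k * (c e / ((1 - 1 / g ^ 2) * ℓ)) + k * (c e / Cdeg ends c v) :=
              add_le_add (mul_le_mul_of_nonneg_left h2 hk0) le_rfl
          _ = k * (c e / Cdeg ends c v) + k * (c e / ((1 - 1 / g ^ 2) * ℓ)) := by ring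
    have hsum2 : ∑ e ∈ deltaV ends v, (k * (c e / Cdeg ends c v)
        + k * (c e / ((1 - 1 / g ^ 2) * ℓ)))
        = k + k * (Cdeg ends c v / ((1 - 1 / g ^ 2) * ℓ)) := by
      rw [Finset.sum_add_distrib, hinner v, ← Finset.mul_sum, ← Finset.sum_div]
      rfl
    have hstep2 : k * (Cdeg ends c v / ((1 - 1 / g ^ 2) * ℓ))
        ≤ k * (ℓ / ((1 - 1 / g ^ 2) * ℓ)) :=
      mul_le_mul_of_nonneg_left ((div_le_div_iff_of_pos_right hm0).mpr (hCub v)) hk0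
    calc ∑ e ∈ deltaV ends v, xLP ends c (Fintype.card V) e
        ≤ ∑ e ∈ deltaV ends v, (k * (c e / Cdeg ends c v)
            + k * (c e / ((1 - 1 / g ^ 2) * ℓ))) := Finset.sum_le_sum hb
      _ = k + k * (Cdeg ends c v / ((1 - 1 / g ^ 2) * ℓ)) := hsum2
      _ ≤ k + k * (ℓ / ((1 - 1 / g ^ 2) * ℓ)) := by linarith [hstep2]
      _ ≤ 2 := by rw [hkdef]; exact arith_deg g ℓ hg2 hℓ
end

section
/- Let Z be as above (vertex set of size γ, every cut of capacity at least (1−1/γ)ℓ, C(v) ≤ ℓ for all v), and define x_e = ((γ−1)/γ)·(c(e)/C(v) + c(e)/C(u)). Then for every subset S ⊂ V(Z) with 2 ≤ |S| ≤ γ−1: Σ_{e∈E(S)} x_e ≤ ((γ−1)/γ)·|S| − (1 − 1/γ)² ≤ |S| − 1. -/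
open Finset

/-- Subtour constraint of the degree-bounded spanning tree LP: if every cut of `Z` has
capacity at least `(1−1/γ)ℓ` and `C(v) ≤ ℓ` for all `v`, then for every `S` with
`2 ≤ |S| ≤ γ−1`:
`∑_{e∈E(S)} x_e ≤ ((γ−1)/γ)|S| − (1−1/γ)² ≤ |S| − 1`. -/
theorem stmt_12 {V E : Type*} [Fintype V] [Fintype E] [DecidableEq V]
    (ends : E → V × V) (c : E → ℝ) (ℓ : ℝ) (hℓ : 0 < ℓ)
    (hγ : 2 ≤ Fintype.card V)
    (hnoloop : ∀ e, (ends e).1 ≠ (ends e).2)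
    (hc : ∀ e, 0 ≤ c e)
    (hCub : ∀ v, Cdeg ends c v ≤ ℓ)
    (hcut : ∀ S : Finset V, S.Nonempty → S ≠ univ →
      (1 - 1 / (Fintype.card V : ℝ)) * ℓ ≤ ∑ e ∈ crossE ends S, c e) :
    ∀ S : Finset V, 2 ≤ S.card → S.card ≤ Fintype.card V - 1 →
      ∑ e ∈ insideE ends S, xLP ends c (Fintype.card V) e ≤
          ((Fintype.card V : ℝ) - 1) / (Fintype.card V : ℝ) * S.card -
            (1 - 1 / (Fintype.card V : ℝ)) ^ 2 ∧
        ((Fintype.card V : ℝ) - 1) / (Fintype.card V : ℝ) * S.card -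
            (1 - 1 / (Fintype.card V : ℝ)) ^ 2 ≤ (S.card : ℝ) - 1 := by
  classical
  intro S hS2 hSle
  have hn2 : (2:ℝ) ≤ (Fintype.card V : ℝ) := by exact_mod_cast hγ
  have hn0 : (0:ℝ) < (Fintype.card V : ℝ) := by linarith
  have hnne : (Fintype.card V : ℝ) ≠ 0 := ne_of_gt hn0
  have hs2 : (2:ℝ) ≤ (S.card : ℝ) := by exact_mod_cast hS2
  have e1 : ((Fintype.card V : ℝ) - 1) / (Fintype.card V : ℝ)
      = 1 - 1 / (Fintype.card V : ℝ) := by field_simp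
  set ind : E → V → ℝ := fun e v =>
    (if (ends e).1 = v then c e else 0) + (if (ends e).2 = v then c e else 0) with hind
  have hind0 : ∀ e v, 0 ≤ ind e v := by
    intro e v
    simp only [hind]
    apply add_nonneg <;> split_ifs <;> simp [hc e]
  have hC0 : ∀ v, 0 ≤ Cdeg ends c v := fun v => Finset.sum_nonneg fun e _ => hc e
  -- total incidence sum equals weighted degree
  have huniv : ∀ v, (∑ e, ind e v) = Cdeg ends c v := by
    intro v
    simp only [Cdeg, deltaV, Finset.sum_filter]
    refine Finset.sum_congr rfl fun e _ => ?_
    by_cases h1 : (ends e).1 = v <;> by_cases h2 : (ends e).2 = v <;>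
      simp [hind, h1, h2]
    exact absurd (h1.trans h2.symm) (hnoloop e)
  -- split into inside and crossing parts (for v ∈ S)
  have hsplit : ∀ v ∈ S,
      (∑ e ∈ insideE ends S, ind e v) + (∑ e ∈ crossE ends S, ind e v)
        = Cdeg ends c v := by
    intro v hv
    have h1 := Finset.sum_filter_add_sum_filter_not Finset.univ
      (fun e => (ends e).1 ∈ S ∧ (ends e).2 ∈ S) (fun e => ind e v)
    have h2 : ∑ e ∈ Finset.univ.filter (fun e => ¬((ends e).1 ∈ S ∧ (ends e).2 ∈ S)),
        ind e v = ∑ e ∈ crossE ends S, ind e v := by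
      refine (Finset.sum_subset ?_ ?_).symm
      · intro e he
        simp only [crossE, Finset.mem_filter, Finset.mem_univ, true_and] at he ⊢
        tauto
      · intro e he hne
        simp only [crossE, Finset.mem_filter, Finset.mem_univ, true_and] at he hne
        have hx1 : (ends e).1 ∉ S := by tauto
        have hx2 : (ends e).2 ∉ S := by tauto
        have hv1 : (ends e).1 ≠ v := fun h => hx1 (h ▸ hv)
        have hv2 : (ends e).2 ≠ v := fun h => hx2 (h ▸ hv)
        simp [hind, hv1, hv2]
    rw [h2] at h1
    rw [← huniv v, ← h1]
    rfl
  -- per-edge expansion over vertices of S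
  have hedge : ∀ e ∈ insideE ends S,
      c e / Cdeg ends c (ends e).1 + c e / Cdeg ends c (ends e).2
        = ∑ v ∈ S, ind e v / Cdeg ends c v := by
    intro e he
    simp only [insideE, Finset.mem_filter] at he
    have h1 : (ends e).1 ∈ S := he.2.1
    have h2 : (ends e).2 ∈ S := he.2.2
    have key : ∀ v, ind e v / Cdeg ends c v =
        (if (ends e).1 = v then c e / Cdeg ends c v else 0) +
          (if (ends e).2 = v then c e / Cdeg ends c v else 0) := by
      intro v
      simp only [hind]
      rw [add_div]
      congr 1 <;> split <;> simp
    simp only [key, Finset.sum_add_distrib, Finset.sum_ite_eq, h1, h2, if_true]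
  have hmain : ∑ e ∈ insideE ends S,
      (c e / Cdeg ends c (ends e).1 + c e / Cdeg ends c (ends e).2)
      = ∑ v ∈ S, (∑ e ∈ insideE ends S, ind e v) / Cdeg ends c v := by
    rw [Finset.sum_congr rfl hedge, Finset.sum_comm]
    simp [Finset.sum_div]
  -- the crossing contributions sum to the cut capacity
  have hcross : ∑ v ∈ S, ∑ e ∈ crossE ends S, ind e v
      = ∑ e ∈ crossE ends S, c e := by
    rw [Finset.sum_comm]
    refine Finset.sum_congr rfl fun e he => ?_
    simp only [crossE, Finset.mem_filter, Finset.mem_univ, true_and] at he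
    simp only [hind, Finset.sum_add_distrib, Finset.sum_ite_eq]
    rcases he with ⟨h1, h2⟩ | ⟨h1, h2⟩ <;> simp [h1, h2]
  -- per-vertex bound
  have hvert : ∀ v ∈ S, (∑ e ∈ insideE ends S, ind e v) / Cdeg ends c v
      ≤ 1 - (∑ e ∈ crossE ends S, ind e v) / ℓ := by
    intro v hv
    have hs := hsplit v hv
    have hi0 : 0 ≤ ∑ e ∈ insideE ends S, ind e v :=
      Finset.sum_nonneg fun e _ => hind0 e v
    have hg0 : 0 ≤ ∑ e ∈ crossE ends S, ind e v :=
      Finset.sum_nonneg fun e _ => hind0 e v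
    rcases eq_or_lt_of_le (hC0 v) with hC | hC
    · have hcz : ∑ e ∈ crossE ends S, ind e v = 0 := by
        rw [← hC] at hs; linarith
      have hiz : ∑ e ∈ insideE ends S, ind e v = 0 := by
        rw [← hC] at hs; linarith
      rw [hcz, hiz]
      simp
    · have hCl := hCub v
      have hrw : (∑ e ∈ insideE ends S, ind e v) / Cdeg ends c v
          = 1 - (∑ e ∈ crossE ends S, ind e v) / Cdeg ends c v := by
        field_simp
        linarith
      rw [hrw]
      have hdiv : (∑ e ∈ crossE ends S, ind e v) / ℓ
          ≤ (∑ e ∈ crossE ends S, ind e v) / Cdeg ends c v := by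
        gcongr
      linarith
  have hSne : S.Nonempty := Finset.card_pos.mp (by omega)
  have hSneq : S ≠ Finset.univ := by
    intro h
    rw [h, Finset.card_univ] at hSle
    omega
  have hcut' := hcut S hSne hSneq
  have htot : ∑ v ∈ S, ((∑ e ∈ insideE ends S, ind e v) / Cdeg ends c v)
      ≤ (S.card : ℝ) - (1 - 1 / (Fintype.card V : ℝ)) := by
    have step1 : ∑ v ∈ S, ((∑ e ∈ insideE ends S, ind e v) / Cdeg ends c v)
        ≤ ∑ v ∈ S, (1 - (∑ e ∈ crossE ends S, ind e v) / ℓ) :=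
      Finset.sum_le_sum hvert
    have step2 : ∑ v ∈ S, (1 - (∑ e ∈ crossE ends S, ind e v) / ℓ)
        = (S.card : ℝ) - (∑ e ∈ crossE ends S, c e) / ℓ := by
      rw [Finset.sum_sub_distrib, ← Finset.sum_div, hcross]
      simp
    have step3 : (1 - 1 / (Fintype.card V : ℝ)) ≤ (∑ e ∈ crossE ends S, c e) / ℓ := by
      rw [le_div_iff₀ hℓ]
      exact hcut'
    linarith [step1, step2 ▸ step1]
  constructor
  · have hx : ∑ e ∈ insideE ends S, xLP ends c (Fintype.card V) e
        = ((Fintype.card V : ℝ) - 1) / (Fintype.card V : ℝ) *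
          ∑ e ∈ insideE ends S,
            (c e / Cdeg ends c (ends e).1 + c e / Cdeg ends c (ends e).2) := by
      rw [Finset.mul_sum]
      exact Finset.sum_congr rfl fun e _ => rfl
    rw [hx, hmain, e1]
    have hfac : (0:ℝ) ≤ 1 - 1 / (Fintype.card V : ℝ) := by
      have : 1 / (Fintype.card V : ℝ) ≤ 1 / 2 := by
        apply div_le_div_of_nonneg_left <;> linarith
      linarith
    have := mul_le_mul_of_nonneg_left htot hfac
    calc (1 - 1 / (Fintype.card V : ℝ)) *
          ∑ v ∈ S, (∑ e ∈ insideE ends S, ind e v) / Cdeg ends c v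
        ≤ (1 - 1 / (Fintype.card V : ℝ)) *
          ((S.card : ℝ) - (1 - 1 / (Fintype.card V : ℝ))) := this
      _ = (1 - 1 / (Fintype.card V : ℝ)) * (S.card : ℝ)
            - (1 - 1 / (Fintype.card V : ℝ)) ^ 2 := by ring
  · rw [e1]
    have hu : (0:ℝ) < 1 / (Fintype.card V : ℝ) := by positivity
    nlinarith [mul_nonneg (by linarith : (0:ℝ) ≤ (S.card:ℝ) - 2) hu.le,
      sq_nonneg (1 / (Fintype.card V : ℝ))]
end

section
/- Let H̃' be a multigraph on γ vertices in which every vertex has degree exactly ℓ and every pair of vertices is connected by ℓ pairwise edge-disjoint paths. Call a pair (u,v) of vertices 'bad' if fewer than ℓ/γ³ parallel edges connect them. Then: (a) every vertex participates in at most γ bad pairs, hence in the graph Z obtained by keeping only non-bad pairs (with capacity equal to edge multiplicity), every vertex v satisfies C(v) ≥ ℓ·(1 − 1/γ²); and (b) every pair of vertices of Z can route at least (1 − 1/γ)·ℓ flow units in Z respecting capacities. -/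
open Finset

attribute [local instance] Classical.propDecidable

/-- Multiplicity of the pair `{u,v}` in the multigraph. -/
noncomputable def multE {V E : Type*} [Fintype E] [DecidableEq V]
    (ends : E → Sym2 V) (u v : V) : ℕ :=
  (univ.filter fun e => ends e = s(u, v)).card

/-- Degree of `v` in the multigraph. -/
noncomputable def degE {V E : Type*} [Fintype E] [DecidableEq V]
    (ends : E → Sym2 V) (v : V) : ℕ :=
  (univ.filter fun e => v ∈ ends e).card

/-- The pair `(u,v)` is bad: fewer than `ℓ/γ³` parallel edges connect `u` and `v`. -/
def BadPair {V E : Type*} [Fintype E] [DecidableEq V] (ends : E → Sym2 V)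
    (ℓ γ : ℕ) (u v : V) : Prop :=
  (multE ends u v : ℝ) < (ℓ : ℝ) / (γ : ℝ) ^ 3

/-- Capacity of `v` in the graph `Z` keeping only non-bad pairs. -/
noncomputable def CZ {V E : Type*} [Fintype V] [Fintype E] [DecidableEq V]
    (ends : E → Sym2 V) (ℓ γ : ℕ) (v : V) : ℝ :=
  ∑ u ∈ univ.erase v, if ¬ BadPair ends ℓ γ v u then (multE ends v u : ℝ) else 0

/-- Capacity of the cut `(S, Sᶜ)` in `Z`. -/
noncomputable def cutZ {V E : Type*} [Fintype V] [Fintype E] [DecidableEq V]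
    (ends : E → Sym2 V) (ℓ γ : ℕ) (S : Finset V) : ℝ :=
  ∑ q ∈ S ×ˢ Sᶜ, if ¬ BadPair ends ℓ γ q.1 q.2 then (multE ends q.1 q.2 : ℝ) else 0

/-- Number of multigraph edges with exactly one endpoint in `S`. -/
noncomputable def cutH {V E : Type*} [Fintype V] [Fintype E] [DecidableEq V]
    (ends : E → Sym2 V) (S : Finset V) : ℕ :=
  (univ.filter fun e => ∃ u v, ends e = s(u, v) ∧ u ∈ S ∧ v ∉ S).card


lemma sum_multE_erase {V E : Type*} [Fintype V] [Fintype E] [DecidableEq V]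
    (ends : E → Sym2 V) (hnoloop : ∀ e, ¬ (ends e).IsDiag) (v : V) :
    ∑ u ∈ univ.erase v, multE ends v u = degE ends v := by
  classical
  unfold multE degE
  rw [← Finset.card_biUnion]
  · congr 1
    ext e
    simp only [Finset.mem_biUnion, Finset.mem_filter, Finset.mem_univ, true_and,
      Finset.mem_erase]
    constructor
    · rintro ⟨u, ⟨hu, -⟩, he⟩
      rw [he]; exact Sym2.mem_mk_left v u
    · intro hv
      obtain ⟨u, hu⟩ := Sym2.mem_iff_exists.mp hv
      refine ⟨u, ⟨?_, trivial⟩, hu⟩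
      intro h; subst h
      exact hnoloop e (by rw [hu]; exact Sym2.mk_isDiag_iff.mpr rfl)
  · intro a ha b hb hab
    simp only [Finset.mem_coe, Finset.mem_erase] at ha hb
    rw [Function.onFun, Finset.disjoint_left]
    intro e hea heb
    simp only [Finset.mem_filter] at hea heb
    rw [hea.2] at heb
    rcases Sym2.eq_iff.mp heb.2 with ⟨-, h⟩ | ⟨h1, -⟩
    · exact hab h
    · exact hb.1 h1.symm

lemma sum_multE_cut {V E : Type*} [Fintype V] [Fintype E] [DecidableEq V]
    (ends : E → Sym2 V) (S : Finset V) :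
    ∑ q ∈ S ×ˢ Sᶜ, multE ends q.1 q.2 = cutH ends S := by
  classical
  unfold multE cutH
  rw [← Finset.card_biUnion]
  · congr 1
    ext e
    simp only [Finset.mem_biUnion, Finset.mem_filter, Finset.mem_univ, true_and,
      Finset.mem_product, Finset.mem_compl]
    constructor
    · rintro ⟨q, ⟨hq1, hq2⟩, he⟩
      exact ⟨q.1, q.2, he, hq1, hq2⟩
    · rintro ⟨u, w, he, hu, hw⟩
      exact ⟨(u, w), ⟨hu, by simpa using hw⟩, he⟩
  · intro a ha b hb hab
    simp only [Finset.mem_coe, Finset.mem_product, Finset.mem_compl] at ha hb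
    rw [Function.onFun, Finset.disjoint_left]
    intro e hea heb
    simp only [Finset.mem_filter] at hea heb
    rw [hea.2] at heb
    rcases Sym2.eq_iff.mp heb.2 with ⟨h1, h2⟩ | ⟨h1, h2⟩
    · exact hab (Prod.ext h1 h2)
    · exact hb.2 (h1 ▸ ha.1)

/-- Let `H̃'` be a loopless multigraph on `γ ≥ 2` vertices, each of degree exactly `ℓ ≥ γ³`,
in which every cut has at least `ℓ` crossing edges (equivalently, every pair of vertices
is joined by `ℓ` edge-disjoint paths).  Keeping only the non-bad pairs (those joined by at
least `ℓ/γ³` parallel edges), with capacities equal to the multiplicities: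
(a) every vertex `v` satisfies `C(v) ≥ ℓ(1 − 1/γ²)`; and
(b) every cut of `Z` has capacity at least `(1 − 1/γ)ℓ` (so every pair of vertices can
route `(1−1/γ)ℓ` flow units in `Z`). -/
theorem stmt_13 {V E : Type*} [Fintype V] [Fintype E] [DecidableEq V]
    (ends : E → Sym2 V) (ℓ : ℕ)
    (hγ2 : 2 ≤ Fintype.card V) (hℓ : (Fintype.card V) ^ 3 ≤ ℓ)
    (hnoloop : ∀ e, ¬ (ends e).IsDiag)
    (hdeg : ∀ v, degE ends v = ℓ)
    (hconn : ∀ S : Finset V, S.Nonempty → S ≠ univ → ℓ ≤ cutH ends S) :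
    (∀ v, (ℓ : ℝ) * (1 - 1 / (Fintype.card V : ℝ) ^ 2) ≤
      CZ ends ℓ (Fintype.card V) v) ∧
    (∀ S : Finset V, S.Nonempty → S ≠ univ →
      (1 - 1 / (Fintype.card V : ℝ)) * ℓ ≤ cutZ ends ℓ (Fintype.card V) S) := by
    classical
  set n := Fintype.card V with hn
  have hn0 : (0:ℝ) < (n:ℝ) := by
    have : (2:ℝ) ≤ (n:ℝ) := by exact_mod_cast hγ2
    linarith
  have hn2 : (2:ℝ) ≤ (n:ℝ) := by exact_mod_cast hγ2
  set B : ℝ := (ℓ : ℝ) / (n : ℝ) ^ 3 with hB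
  have hB0 : 0 ≤ B := by positivity
  have key : ∀ u v : V, (multE ends u v : ℝ) - B ≤
      (if ¬ BadPair ends ℓ n u v then (multE ends u v : ℝ) else 0) := by
    intro u v
    by_cases h : BadPair ends ℓ n u v
    · rw [if_neg (not_not_intro h)]
      unfold BadPair at h
      linarith
    · rw [if_pos h]
      linarith
  constructor
  · intro v
    have hsum : ∑ u ∈ univ.erase v, (multE ends v u : ℝ) = (ℓ : ℝ) := by
      rw [← Nat.cast_sum, sum_multE_erase ends hnoloop v, hdeg v]
    have hcard : (((univ : Finset V).erase v).card : ℝ) ≤ (n : ℝ) := by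
      have : ((univ : Finset V).erase v).card ≤ n := by
        rw [hn, ← Finset.card_univ]
        exact Finset.card_le_card (Finset.erase_subset _ _)
      exact_mod_cast this
    have h1 : ∑ u ∈ univ.erase v, ((multE ends v u : ℝ) - B) ≤
        CZ ends ℓ n v := by
      unfold CZ
      exact Finset.sum_le_sum fun u _ => key v u
    rw [Finset.sum_sub_distrib, hsum, Finset.sum_const, nsmul_eq_mul] at h1
    have h2 : (((univ : Finset V).erase v).card : ℝ) * B ≤ (n : ℝ) * B :=
      mul_le_mul_of_nonneg_right hcard hB0
    have h3 : (n : ℝ) * B = (ℓ : ℝ) / (n : ℝ) ^ 2 := by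
      rw [hB]; field_simp
    have h4 : (ℓ : ℝ) * (1 - 1 / (n : ℝ) ^ 2) = (ℓ : ℝ) - (ℓ : ℝ) / (n : ℝ) ^ 2 := by
      field_simp
    linarith
  · intro S hSne hSuniv
    have hsum : ∑ q ∈ S ×ˢ Sᶜ, (multE ends q.1 q.2 : ℝ) ≥ (ℓ : ℝ) := by
      rw [← Nat.cast_sum, sum_multE_cut ends S]
      exact_mod_cast hconn S hSne hSuniv
    have hcard : (((S ×ˢ Sᶜ) : Finset (V × V)).card : ℝ) ≤ (n : ℝ) * (n : ℝ) := by
      rw [Finset.card_product]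
      have h1 : S.card ≤ n := by rw [hn, ← Finset.card_univ]; exact Finset.card_le_card (Finset.subset_univ S)
      have h2 : Sᶜ.card ≤ n := by rw [hn, ← Finset.card_univ]; exact Finset.card_le_card (Finset.subset_univ Sᶜ)
      push_cast
      exact mul_le_mul (by exact_mod_cast h1) (by exact_mod_cast h2) (by positivity) (by positivity)
    have h1 : ∑ q ∈ S ×ˢ Sᶜ, ((multE ends q.1 q.2 : ℝ) - B) ≤ cutZ ends ℓ n S := by
      unfold cutZ
      exact Finset.sum_le_sum fun q _ => key q.1 q.2
    rw [Finset.sum_sub_distrib, Finset.sum_const, nsmul_eq_mul] at h1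
    have h2 : (((S ×ˢ Sᶜ) : Finset (V × V)).card : ℝ) * B ≤ (n : ℝ) * (n : ℝ) * B :=
      mul_le_mul_of_nonneg_right hcard hB0
    have h3 : (n : ℝ) * (n : ℝ) * B = (ℓ : ℝ) / (n : ℝ) := by
      rw [hB]; field_simp
    have h4 : (1 - 1 / (n : ℝ)) * (ℓ : ℝ) = (ℓ : ℝ) - (ℓ : ℝ) / (n : ℝ) := by
      field_simp
    linarith
end

section
/- Let X be a graph produced by the cut-matching game of Khandekar–Rao–Vazirani on N vertices after γ_KRV(N) = O(log²N) rounds, so that X is a 1/2-expander with maximum degree at most γ_KRV(N). Suppose the vertices of X are partitioned into N/2 demand pairs. Then there is a routing of Ω(N/(log N · γ_KRV(N)²)) = Ω(N/log⁵N) of the demand pairs along pairwise vertex-disjoint paths in X. -/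
open Finset

namespace KRV
set_option linter.unusedSectionVars false
variable {V : Type} [Fintype V] [DecidableEq V] (X : SimpleGraph V) [DecidableRel X.Adj]

/-- Number of ordered adjacent pairs from `A` to `B`. -/
def eAB (A B : Finset V) : ℕ := ((A ×ˢ B).filter fun p => X.Adj p.1 p.2).card

/-- `A` induces a decent expander. -/
def good (A : Finset V) : Prop :=
  ∀ S ⊆ A, 2 * S.card ≤ A.card → S.card ≤ 8 * eAB X S (A \ S)

def ball (A : Finset V) (v : V) : ℕ → Finset V
  | 0 => {v}
  | r + 1 => ball A v r ∪ A.filter (fun w => ∃ u ∈ ball A v r, X.Adj u w)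

variable {X}

lemma eAB_comm (A B : Finset V) : eAB X A B = eAB X B A := by
  unfold eAB
  apply Finset.card_bij' (fun p _ => Prod.swap p) (fun p _ => Prod.swap p)
  · intro p hp
    simp only [mem_filter, mem_product] at hp ⊢
    exact ⟨⟨hp.1.2, hp.1.1⟩, hp.2.symm⟩
  · intro p hp
    simp only [mem_filter, mem_product] at hp ⊢
    exact ⟨⟨hp.1.2, hp.1.1⟩, hp.2.symm⟩
  · intro p _; simp
  · intro p _; simp
lemma eAB_le {D : ℕ} (hD : ∀ v, X.degree v ≤ D) (A B : Finset V) :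
    eAB X A B ≤ D * A.card := by
  unfold eAB
  rw [Finset.card_eq_sum_card_fiberwise (f := Prod.fst) (t := A)
    (by intro p hp; simp only [mem_coe, mem_filter, mem_product] at hp; exact hp.1.1)]
  calc ∑ a ∈ A, (((A ×ˢ B).filter fun p => X.Adj p.1 p.2).filter fun p => p.1 = a).card
      ≤ ∑ a ∈ A, D := by
        apply Finset.sum_le_sum
        intro a _
        have h1 : (((A ×ˢ B).filter fun p => X.Adj p.1 p.2).filter fun p => p.1 = a).card
            ≤ (X.neighborFinset a).card := by
          apply Finset.card_le_card_of_injOn Prod.snd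
          · intro p hp
            simp only [mem_coe, mem_filter, mem_product] at hp ⊢
            rw [SimpleGraph.mem_neighborFinset]
            exact hp.2 ▸ hp.1.2
          · intro p hp q hq h
            simp only [coe_filter, Set.mem_setOf_eq] at hp hq
            exact Prod.ext (hp.2.trans hq.2.symm) h
        exact h1.trans_eq (X.card_neighborFinset_eq_degree a) |>.trans (hD a)
    _ = D * A.card := by rw [Finset.sum_const, smul_eq_mul, mul_comm]
lemma eAB_union_right {B C : Finset V} (h : Disjoint B C) (A : Finset V) :
    eAB X A (B ∪ C) = eAB X A B + eAB X A C := by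
  unfold eAB
  rw [Finset.product_union, Finset.filter_union]
  apply Finset.card_union_of_disjoint
  apply Finset.disjoint_filter_filter
  rw [Finset.disjoint_left]
  intro p hp hq
  simp only [mem_product] at hp hq
  exact Finset.disjoint_left.1 h hp.2 hq.2
lemma eAB_union_left {A C : Finset V} (h : Disjoint A C) (B : Finset V) :
    eAB X (A ∪ C) B = eAB X A B + eAB X C B := by
  unfold eAB
  rw [Finset.union_product, Finset.filter_union]
  apply Finset.card_union_of_disjoint
  apply Finset.disjoint_filter_filter
  rw [Finset.disjoint_left]
  intro p hp hq
  simp only [mem_product] at hp hq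
  exact Finset.disjoint_left.1 h hp.1 hq.1
lemma outF_card (S : Finset V) : (outF X S).card = eAB X S (univ \ S) := by
  unfold eAB
  symm
  apply Finset.card_bij (fun p _ => s(p.1, p.2))
  · intro p hp
    simp only [mem_filter, mem_product, mem_sdiff, mem_univ, true_and] at hp
    simp only [outF, mem_filter, SimpleGraph.mem_edgeFinset]
    exact ⟨hp.2, p.1, p.2, rfl, hp.1.1, hp.1.2⟩
  · intro p hp q hq hpq
    simp only [mem_filter, mem_product, mem_sdiff, mem_univ, true_and] at hp hq
    rw [Sym2.eq_iff] at hpq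
    rcases hpq with ⟨h1, h2⟩ | ⟨h1, h2⟩
    · exact Prod.ext h1 h2
    · exact absurd (h2.symm ▸ hq.1.1) hp.1.2
  · intro e he
    simp only [outF, mem_filter, SimpleGraph.mem_edgeFinset] at he
    obtain ⟨hmem, u, v, rfl, hu, hv⟩ := he
    refine ⟨(u, v), ?_, rfl⟩
    simp only [mem_filter, mem_product, mem_sdiff, mem_univ, true_and]
    exact ⟨⟨hu, hv⟩, hmem⟩
lemma prune {D : ℕ} (hD : ∀ v, X.degree v ≤ D)
    (hexp : ∀ S : Finset V, 2 * S.card ≤ Fintype.card V → S.card ≤ 2 * eAB X S (univ \ S))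
    (Z : Finset V) :
    ∃ A : Finset V, A ⊆ univ \ Z ∧ (univ \ Z).card ≤ A.card + 4 * D * Z.card ∧ good X A := by
  classical
  -- invariant
  set czc := (univ \ Z).card with hczc
  have aux : ∀ (m : ℕ) (A : Finset V), A.card ≤ m → A ⊆ univ \ Z →
      8 * eAB X A (univ \ A) + 2 * czc ≤ 8 * D * Z.card + 2 * A.card →
      ∃ A', A' ⊆ A ∧ good X A' ∧
        8 * eAB X A' (univ \ A') + 2 * czc ≤ 8 * D * Z.card + 2 * A'.card := by
    intro m
    induction m with
    | zero =>
      intro A hcard hsub hinv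
      have : A = ∅ := Finset.card_eq_zero.1 (Nat.le_zero.1 hcard)
      refine ⟨A, Finset.Subset.refl A, ?_, hinv⟩
      intro S hS _
      have : S = ∅ := Finset.subset_empty.1 (this ▸ hS)
      simp [this]
    | succ m ih =>
      intro A hcard hsub hinv
      by_cases hg : good X A
      · exact ⟨A, Finset.Subset.refl A, hg, hinv⟩
      · simp only [good, not_forall] at hg
        obtain ⟨S, hSA, hShalf, hSbad⟩ := hg
        have hSbad' : 8 * eAB X S (A \ S) + 1 ≤ S.card := Nat.not_le.1 hSbad
        have hSpos : 1 ≤ S.card := le_trans (Nat.le_add_left 1 _) hSbad'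
        -- expansion on S
        have hAn : A.card ≤ Fintype.card V := by
          rw [← Finset.card_univ]; exact Finset.card_le_univ A
        have hexpS : S.card ≤ 2 * eAB X S (univ \ S) :=
          hexp S (le_trans hShalf hAn)
        -- decompositions
        have hdisj1 : Disjoint (A \ S) (univ \ A) := by
          rw [Finset.disjoint_left]; intro v hv hv2
          exact (Finset.mem_sdiff.1 hv2).2 (Finset.mem_sdiff.1 hv).1
        have hdisjSA : Disjoint S (A \ S) := Finset.disjoint_sdiff
        have hsplit1 : univ \ S = (A \ S) ∪ (univ \ A) := by
          ext v
          simp only [mem_sdiff, mem_union, mem_univ, true_and]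
          by_cases hvA : v ∈ A <;> by_cases hvS : v ∈ S <;> simp [hvA, hvS] <;> tauto
        have hsplit2 : univ \ (A \ S) = (univ \ A) ∪ S := by
          ext v
          simp only [mem_sdiff, mem_union, mem_univ, true_and]
          by_cases hvA : v ∈ A <;> by_cases hvS : v ∈ S <;> simp [hvA, hvS] <;> tauto
        have hA_union : S ∪ (A \ S) = A := Finset.union_sdiff_of_subset hSA
        set a := eAB X S (univ \ A) with ha
        set b := eAB X (A \ S) (univ \ A) with hb
        set x := eAB X S (A \ S) with hx
        have e1 : eAB X A (univ \ A) = a + b := by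
          have := eAB_union_left (X := X) hdisjSA (univ \ A)
          rw [hA_union] at this
          exact this
        have e2 : eAB X S (univ \ S) = x + a := by
          rw [hsplit1, eAB_union_right ?_ S]
          · rw [Finset.disjoint_left]; intro v hv hv2
            exact (Finset.mem_sdiff.1 hv2).2 (Finset.mem_sdiff.1 hv).1
        have e3 : eAB X (A \ S) (univ \ (A \ S)) = b + x := by
          rw [hsplit2, eAB_union_right ?_ (A \ S), eAB_comm (A \ S) S]
          · rw [Finset.disjoint_left]; intro v hv hv2
            exact (Finset.mem_sdiff.1 hv).2 (hSA hv2)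
        have hcards : (A \ S).card + S.card = A.card :=
          Finset.card_sdiff_add_card_eq_card hSA
        have hinv' : 8 * eAB X (A \ S) (univ \ (A \ S)) + 2 * czc
            ≤ 8 * D * Z.card + 2 * (A \ S).card := by
          rw [e3]; rw [e1] at hinv; rw [e2] at hexpS
          have eq8 : 8 * D * Z.card = 8 * (D * Z.card) := by ring
          rw [eq8] at hinv ⊢
          omega
        have hless : (A \ S).card ≤ m := by omega
        obtain ⟨A', hA'1, hA'2, hA'3⟩ := ih (A \ S) hless
          (le_trans (Finset.sdiff_subset) hsub) hinv'
        exact ⟨A', le_trans hA'1 Finset.sdiff_subset, hA'2, hA'3⟩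
  -- initial
  have hinit : 8 * eAB X (univ \ Z) (univ \ (univ \ Z)) + 2 * czc
      ≤ 8 * D * Z.card + 2 * (univ \ Z).card := by
    have h1 : univ \ (univ \ Z) = Z := by
      rw [Finset.sdiff_sdiff_self_left, Finset.univ_inter]
    rw [h1]
    have h2 : eAB X (univ \ Z) Z ≤ D * Z.card := by
      rw [eAB_comm]; exact eAB_le hD Z (univ \ Z)
    have eq8 : 8 * D * Z.card = 8 * (D * Z.card) := by ring
    rw [eq8]
    omega
  obtain ⟨A, hA1, hA2, hA3⟩ := aux (univ \ Z).card (univ \ Z) le_rfl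
    (Finset.Subset.refl _) hinit
  refine ⟨A, hA1, ?_, hA2⟩
  have eq8 : 8 * D * Z.card = 8 * (D * Z.card) := by ring
  have eq4 : 4 * D * Z.card = 4 * (D * Z.card) := by ring
  rw [eq8] at hA3
  rw [eq4]
  omega
lemma ball_subset {A : Finset V} {v : V} (hv : v ∈ A) : ∀ r, ball X A v r ⊆ A
  | 0 => by simp [ball, hv, Finset.singleton_subset_iff]
  | r + 1 => by
      simp only [ball]
      exact Finset.union_subset (ball_subset hv r) (Finset.filter_subset _ _)
lemma ball_mono {A : Finset V} {v : V} (r : ℕ) : ball X A v r ⊆ ball X A v (r + 1) := by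
  simp only [ball]; exact Finset.subset_union_left
lemma ball_walk {A : Finset V} {v : V} (hv : v ∈ A) :
    ∀ r, ∀ w ∈ ball X A v r, ∃ p : X.Walk v w, p.length ≤ r ∧ ∀ x ∈ p.support, x ∈ A
  | 0, w, hw => by
      simp only [ball, Finset.mem_singleton] at hw
      subst hw
      exact ⟨SimpleGraph.Walk.nil, by simp, by simp [hv]⟩
  | r + 1, w, hw => by
      simp only [ball, Finset.mem_union, Finset.mem_filter] at hw
      rcases hw with hw | ⟨hwA, u, hu, hadj⟩
      · obtain ⟨p, hp1, hp2⟩ := ball_walk hv r w hw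
        exact ⟨p, le_trans hp1 (Nat.le_succ r), hp2⟩
      · obtain ⟨p, hp1, hp2⟩ := ball_walk hv r u hu
        refine ⟨p.concat hadj, ?_, ?_⟩
        · rw [SimpleGraph.Walk.length_concat]; omega
        · intro x hx
          rw [SimpleGraph.Walk.support_concat, List.mem_append] at hx
          rcases hx with hx | hx
          · exact hp2 x hx
          · simp only [List.mem_singleton] at hx; subst hx; exact hwA
lemma ball_growth {A : Finset V} {v : V} {D : ℕ} (hD : ∀ v, X.degree v ≤ D)
    (hg : good X A) (hv : v ∈ A) (r : ℕ)
    (hhalf : 2 * (ball X A v r).card ≤ A.card) :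
    (8 * D + 1) * (ball X A v r).card ≤ 8 * D * (ball X A v (r + 1)).card := by
  have hBA : ball X A v r ⊆ A := ball_subset hv r
  have h1 : (ball X A v r).card ≤ 8 * eAB X (ball X A v r) (A \ ball X A v r) :=
    hg _ hBA hhalf
  have h2 : eAB X (ball X A v r) (A \ ball X A v r)
      ≤ eAB X (ball X A v r) (ball X A v (r + 1) \ ball X A v r) := by
    unfold eAB
    apply Finset.card_le_card
    intro p hp
    simp only [Finset.mem_filter, Finset.mem_product, Finset.mem_sdiff] at hp ⊢
    refine ⟨⟨hp.1.1, ⟨?_, hp.1.2.2⟩⟩, hp.2⟩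
    show p.2 ∈ ball X A v (r + 1)
    simp only [ball, Finset.mem_union, Finset.mem_filter]
    exact Or.inr ⟨hp.1.2.1, p.1, hp.1.1, hp.2⟩
  have h3 : eAB X (ball X A v r) (ball X A v (r + 1) \ ball X A v r)
      ≤ D * (ball X A v (r + 1) \ ball X A v r).card := by
    rw [eAB_comm]; exact eAB_le hD _ _
  have h4 : (ball X A v (r + 1)).card
      = (ball X A v r).card + (ball X A v (r + 1) \ ball X A v r).card := by
    have := Finset.card_sdiff_add_card_eq_card (ball_mono (X := X) (A := A) (v := v) r)
    omega
  have h5 : (ball X A v r).card ≤ 8 * (D * (ball X A v (r + 1) \ ball X A v r).card) :=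
    le_trans h1 (by omega)
  calc (8 * D + 1) * (ball X A v r).card
      = 8 * D * (ball X A v r).card + (ball X A v r).card := by ring
    _ ≤ 8 * D * (ball X A v r).card
        + 8 * (D * (ball X A v (r + 1) \ ball X A v r).card) := by omega
    _ = 8 * D * ((ball X A v r).card + (ball X A v (r + 1) \ ball X A v r).card) := by ring
    _ = 8 * D * (ball X A v (r + 1)).card := by rw [← h4]
lemma pow_two_le {m : ℕ} (hm : 1 ≤ m) : 2 * m ^ m ≤ (m + 1) ^ m := by
  have hm0 : (0 : ℝ) < m := by exact_mod_cast hm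
  have hber : (2 : ℝ) ≤ (1 + 1 / m) ^ m := by
    have h0 : (0 : ℝ) ≤ 1 / m := by positivity
    have hge : (-2 : ℝ) ≤ 1 / m := by linarith
    have h := one_add_mul_le_pow hge m
    have : (m : ℝ) * (1 / m) = 1 := by field_simp
    rw [this] at h
    linarith
  have key : (2 : ℝ) * m ^ m ≤ (m + 1) ^ m := by
    have h1 : ((m : ℝ) + 1) ^ m = (m : ℝ) ^ m * (1 + 1 / m) ^ m := by
      rw [← mul_pow]
      congr 1
      field_simp
    rw [h1]
    have h2 : (0 : ℝ) ≤ (m : ℝ) ^ m := by positivity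
    nlinarith [pow_pos hm0 m]
  exact_mod_cast key
lemma ball_half {A : Finset V} {v : V} {D k : ℕ} (hD : ∀ v, X.degree v ≤ D)
    (hD1 : 1 ≤ D) (hg : good X A) (hv : v ∈ A)
    (hk : Fintype.card V ≤ 2 ^ k) :
    A.card < 2 * (ball X A v (8 * D * k)).card := by
  have dich : ∀ r, A.card < 2 * (ball X A v r).card ∨
      (8 * D + 1) ^ r ≤ (8 * D) ^ r * (ball X A v r).card := by
    intro r
    induction r with
    | zero =>
      right
      simp [ball]
    | succ r ih =>
      rcases ih with h | h
      · left
        have := Finset.card_le_card (ball_mono (X := X) (A := A) (v := v) r)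
        omega
      · by_cases hhalf : 2 * (ball X A v r).card ≤ A.card
        · right
          have hgrow := ball_growth hD hg hv r hhalf
          calc (8 * D + 1) ^ (r + 1) = (8 * D + 1) ^ r * (8 * D + 1) := by ring
            _ ≤ (8 * D) ^ r * (ball X A v r).card * (8 * D + 1) :=
                Nat.mul_le_mul_right _ h
            _ = (8 * D) ^ r * ((8 * D + 1) * (ball X A v r).card) := by ring
            _ ≤ (8 * D) ^ r * (8 * D * (ball X A v (r + 1)).card) :=
                Nat.mul_le_mul_left _ hgrow
            _ = (8 * D) ^ (r + 1) * (ball X A v (r + 1)).card := by ring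
        · left
          have := Finset.card_le_card (ball_mono (X := X) (A := A) (v := v) r)
          omega
  rcases dich (8 * D * k) with h | h
  · exact h
  ·
    have hpow : 2 ^ k * (8 * D) ^ (8 * D * k) ≤ (8 * D + 1) ^ (8 * D * k) := by
      have h1 : (2 * (8 * D) ^ (8 * D)) ^ k ≤ ((8 * D + 1) ^ (8 * D)) ^ k := by
        apply Nat.pow_le_pow_left
        exact pow_two_le (by omega)
      calc 2 ^ k * (8 * D) ^ (8 * D * k) = (2 * (8 * D) ^ (8 * D)) ^ k := by
            rw [pow_mul]
            exact (mul_pow 2 ((8 * D) ^ (8 * D)) k).symm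
        _ ≤ ((8 * D + 1) ^ (8 * D)) ^ k := h1
        _ = (8 * D + 1) ^ (8 * D * k) := by rw [← pow_mul]
    have hposp : 0 < (8 * D) ^ (8 * D * k) := Nat.pow_pos (by omega)
    have hcard : 2 ^ k ≤ (ball X A v (8 * D * k)).card := by
      have h6 := le_trans hpow h
      rw [mul_comm ((2:ℕ) ^ k) _] at h6
      exact Nat.le_of_mul_le_mul_left h6 hposp
    have hAn : A.card ≤ Fintype.card V := by
      rw [← Finset.card_univ]; exact Finset.card_le_univ A
    have hA1 : 1 ≤ A.card := Finset.card_pos.2 ⟨v, hv⟩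
    omega
lemma connect {A : Finset V} {u w : V} {D k : ℕ} (hD : ∀ v, X.degree v ≤ D)
    (hD1 : 1 ≤ D) (hg : good X A) (hu : u ∈ A) (hw : w ∈ A)
    (hk : Fintype.card V ≤ 2 ^ k) :
    ∃ q : X.Walk u w, q.IsPath ∧ q.support.length ≤ 16 * D * k + 1 ∧
      ∀ x ∈ q.support, x ∈ A := by
  have hBu := ball_half (v := u) hD hD1 hg hu hk
  have hBw := ball_half (v := w) hD hD1 hg hw hk
  have hsubU : ball X A u (8 * D * k) ∪ ball X A w (8 * D * k) ⊆ A := by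
    apply Finset.union_subset
    · exact fun x hx => by
        obtain ⟨p, _, hp⟩ := ball_walk hu (8 * D * k) x hx
        exact hp x (SimpleGraph.Walk.end_mem_support p)
    · exact fun x hx => by
        obtain ⟨p, _, hp⟩ := ball_walk hw (8 * D * k) x hx
        exact hp x (SimpleGraph.Walk.end_mem_support p)
  have hcap : 0 < (ball X A u (8 * D * k) ∩ ball X A w (8 * D * k)).card := by
    have h1 := Finset.card_inter_add_card_union (ball X A u (8 * D * k)) (ball X A w (8 * D * k))
    have h2 : (ball X A u (8 * D * k) ∪ ball X A w (8 * D * k)).card ≤ A.card := Finset.card_le_card hsubU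
    omega
  obtain ⟨z, hz⟩ := Finset.card_pos.1 hcap
  rw [Finset.mem_inter] at hz
  obtain ⟨p1, hp1len, hp1sup⟩ := ball_walk hu (8 * D * k) z hz.1
  obtain ⟨p2, hp2len, hp2sup⟩ := ball_walk hw (8 * D * k) z hz.2
  set full := p1.append p2.reverse with hfull
  have hfullsup : ∀ x ∈ full.support, x ∈ A := by
    intro x hx
    rw [hfull, SimpleGraph.Walk.mem_support_append_iff] at hx
    rcases hx with hx | hx
    · exact hp1sup x hx
    · rw [SimpleGraph.Walk.support_reverse, List.mem_reverse] at hx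
      exact hp2sup x hx
  have hfulllen : full.length ≤ 2 * (8 * D * k) := by
    rw [hfull, SimpleGraph.Walk.length_append, SimpleGraph.Walk.length_reverse]
    omega
  refine ⟨full.bypass, SimpleGraph.Walk.bypass_isPath full, ?_, ?_⟩
  · rw [SimpleGraph.Walk.length_support]
    have := SimpleGraph.Walk.length_bypass_le full
    have e16 : 16 * D * k = 2 * (8 * D * k) := by ring
    omega
  · intro x hx
    exact hfullsup x (SimpleGraph.Walk.support_bypass_subset full hx)
lemma exists_good_pair {A : Finset V} {σ : V → V} (hinv : ∀ v, σ (σ v) = v)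
    (hA : 2 * (Fintype.card V - A.card) < Fintype.card V) :
    ∃ v, v ∈ A ∧ σ v ∈ A := by
  by_contra hcon
  push_neg at hcon
  have hsub : (univ : Finset V) ⊆ (univ \ A) ∪ (univ \ A).image σ := by
    intro v _
    rcases Classical.em (v ∈ A) with hv | hv
    · have h2 := hcon v hv
      refine Finset.mem_union_right _ ?_
      refine Finset.mem_image.2 ⟨σ v, ?_, hinv v⟩
      exact Finset.mem_sdiff.2 ⟨Finset.mem_univ _, h2⟩
    · exact Finset.mem_union_left _ (Finset.mem_sdiff.2 ⟨Finset.mem_univ _, hv⟩)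
  have hcard : Fintype.card V ≤ 2 * (univ \ A).card := by
    have h1 := Finset.card_le_card hsub
    have h2 := Finset.card_union_le (univ \ A) ((univ \ A).image σ)
    have h3 := Finset.card_image_le (s := univ \ A) (f := σ)
    rw [Finset.card_univ] at h1
    omega
  have h4 : (univ \ A).card = Fintype.card V - A.card := by
    rw [Finset.card_sdiff_of_subset (Finset.subset_univ A), Finset.card_univ]
  omega
lemma greedy {D k : ℕ} {σ : V → V} (hD : ∀ v, X.degree v ≤ D) (hD1 : 1 ≤ D)
    (hinv : ∀ v, σ (σ v) = v)
    (hexp : ∀ S : Finset V, 2 * S.card ≤ Fintype.card V → S.card ≤ 2 * eAB X S (univ \ S))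
    (hk : Fintype.card V ≤ 2 ^ k) :
    ∀ t, t * (2 * (4 * D + 1) * (16 * D * k + 1)) ≤ Fintype.card V →
    ∃ (s : Fin t → V) (p : ∀ i, X.Walk (s i) (σ (s i))),
      (∀ i, (p i).IsPath) ∧
      (∀ i j, i ≠ j → ∀ x, x ∈ (p i).support → x ∉ (p j).support) ∧
      (∀ i, (p i).support.length ≤ 16 * D * k + 1) := by
  intro t
  induction t with
  | zero =>
    intro _
    exact ⟨Fin.elim0, fun i => i.elim0, fun i => i.elim0, fun i => i.elim0, fun i => i.elim0⟩
  | succ t ih =>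
    intro ht
    set P := 16 * D * k + 1 with hP
    set Q := 2 * (4 * D + 1) * P with hQ
    obtain ⟨s, p, h1, h2, h3⟩ := ih (le_trans (Nat.mul_le_mul_right _ (Nat.le_succ t)) ht)
    set Z := Finset.biUnion univ (fun i => (p i).support.toFinset) with hZ
    have hZcard : Z.card ≤ t * P := by
      calc Z.card ≤ ∑ i : Fin t, (p i).support.toFinset.card := Finset.card_biUnion_le
        _ ≤ ∑ i : Fin t, P := Finset.sum_le_sum fun i _ =>
            le_trans (List.toFinset_card_le _) (h3 i)
        _ = t * P := by rw [Finset.sum_const, Finset.card_univ, Fintype.card_fin, smul_eq_mul]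
    obtain ⟨A, hA1, hA2, hg⟩ := prune (D := D) hD hexp Z
    have hZuniv : (univ \ Z).card + Z.card = Fintype.card V := by
      rw [Finset.card_sdiff_add_card_eq_card (Finset.subset_univ Z), Finset.card_univ]
    -- n ≤ A.card + (4D+1) Z.card
    have hbound : Fintype.card V ≤ A.card + 4 * D * Z.card + Z.card := by omega
    -- 2 (4D+1) Z.card < n
    have hQpos : 1 ≤ Q := by
      have : 0 < Q := by rw [hQ, hP]; positivity
      omega
    have hsmall : 2 * (4 * D + 1) * Z.card + Q ≤ Fintype.card V := by
      have e1 : (t + 1) * Q = 2 * (4 * D + 1) * (t * P) + Q := by rw [hQ]; ring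
      have e2 : 2 * (4 * D + 1) * Z.card ≤ 2 * (4 * D + 1) * (t * P) :=
        Nat.mul_le_mul_left _ hZcard
      omega
    have hApair : ∃ v, v ∈ A ∧ σ v ∈ A := by
      apply exists_good_pair hinv
      have hAcard : A.card ≤ Fintype.card V := by
        rw [← Finset.card_univ]; exact Finset.card_le_univ A
      have e3 : 2 * (4 * D + 1) * Z.card = 2 * (4 * D * Z.card) + 2 * Z.card := by ring
      omega
    obtain ⟨v, hvA, hσvA⟩ := hApair
    obtain ⟨q, hq1, hq2, hq3⟩ := connect (w := σ v) hD hD1 hg hvA hσvA hk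
    -- supports of old paths are in Z; support of q avoids Z
    have hqZ : ∀ x ∈ q.support, x ∉ Z := fun x hx =>
      (Finset.mem_sdiff.1 (hA1 (hq3 x hx))).2
    have hpZ : ∀ (i : Fin t), ∀ x ∈ (p i).support, x ∈ Z := by
      intro i x hx
      rw [hZ]
      exact Finset.mem_biUnion.2 ⟨i, Finset.mem_univ _, List.mem_toFinset.2 hx⟩
    refine ⟨Fin.cons v s, Fin.cases
        (q.copy (Fin.cons_zero (α := fun _ => V) v s).symm
          (congrArg σ (Fin.cons_zero (α := fun _ => V) v s)).symm)
        (fun j => (p j).copy (Fin.cons_succ (α := fun _ => V) v s j).symm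
          (congrArg σ (Fin.cons_succ (α := fun _ => V) v s j)).symm), ?_, ?_, ?_⟩
    · intro i
      induction i using Fin.cases with
      | zero => simpa only [Fin.cases_zero, SimpleGraph.Walk.isPath_copy] using hq1
      | succ j => simpa only [Fin.cases_succ, SimpleGraph.Walk.isPath_copy] using h1 j
    · intro i j hij x
      induction i using Fin.cases with
      | zero =>
        induction j using Fin.cases with
        | zero => exact absurd rfl hij
        | succ j' =>
          simp only [Fin.cases_zero, Fin.cases_succ, SimpleGraph.Walk.support_copy]
          intro hx hx2
          exact hqZ x hx (hpZ j' x hx2)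
      | succ i' =>
        induction j using Fin.cases with
        | zero =>
          simp only [Fin.cases_zero, Fin.cases_succ, SimpleGraph.Walk.support_copy]
          intro hx hx2
          exact hqZ x hx2 (hpZ i' x hx)
        | succ j' =>
          simp only [Fin.cases_succ, SimpleGraph.Walk.support_copy]
          apply h2
          intro hcon
          exact hij (by rw [hcon])
    · intro i
      induction i using Fin.cases with
      | zero => simpa only [Fin.cases_zero, SimpleGraph.Walk.support_copy] using hq2
      | succ j => simpa only [Fin.cases_succ, SimpleGraph.Walk.support_copy] using h3 j

end KRV

set_option maxHeartbeats 1000000 in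
open KRV in
/-- Routing on the KRV expander: there is a universal constant `c > 0` such that in any
`1/2`-expander `X` on `N` vertices of maximum degree at most `D ≥ 1` whose vertices are
partitioned into `N/2` demand pairs (given by a fixed-point-free involution `σ`), at least
`c·N/(log N · D²)` of the demand pairs can be routed along pairwise vertex-disjoint
paths. -/
theorem stmt_14 :
    ∃ c : ℝ, 0 < c ∧
      ∀ (V : Type) [Fintype V] [DecidableEq V] (X : SimpleGraph V)
        [DecidableRel X.Adj] (D : ℕ) (σ : V → V),
        (∀ v, σ (σ v) = v) → (∀ v, σ v ≠ v) →
        (∀ v, X.degree v ≤ D) → 1 ≤ D →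
        (∀ S : Finset V, 2 * S.card ≤ Fintype.card V →
          S.card ≤ 2 * (outF X S).card) →
        ∃ (r : ℕ) (s : Fin r → V) (p : ∀ i, X.Walk (s i) (σ (s i))),
          (∀ i, (p i).IsPath) ∧
          (∀ i j, i ≠ j → ∀ v, v ∈ (p i).support → v ∉ (p j).support) ∧
          c * (Fintype.card V : ℝ) / (Real.log (Fintype.card V) * (D : ℝ) ^ 2) ≤ r := by
  refine ⟨1 / 2048, by norm_num, ?_⟩
  intro V _ _ X _ D σ hinv hfpf hD hD1 hexpF
  have hexp : ∀ S : Finset V, 2 * S.card ≤ Fintype.card V →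
      S.card ≤ 2 * eAB X S (univ \ S) := by
    intro S hS
    rw [← outF_card]
    exact hexpF S hS
  set n := Fintype.card V with hn
  rcases Nat.eq_zero_or_pos n with h0 | hpos
  · refine ⟨0, Fin.elim0, fun i => i.elim0, fun i => i.elim0, fun i => i.elim0, ?_⟩
    rw [h0]
    norm_num
  rcases Nat.lt_or_ge n 2 with hlt1 | hn2
  · -- n = 1 : contradiction with fixed-point-free involution
    exfalso
    have hone : Fintype.card V = 1 := by rw [← hn]; omega
    obtain ⟨a, ha⟩ := Fintype.card_eq_one_iff.1 hone
    exact hfpf a (ha (σ a))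
  -- main case : n ≥ 2
  set k := Nat.clog 2 n with hkdef
  have hk : n ≤ 2 ^ k := Nat.le_pow_clog (by norm_num) n
  have hk1 : 1 ≤ k := by
    rw [hkdef]
    exact Nat.clog_pos (by norm_num) hn2
  set Q := 2 * (4 * D + 1) * (16 * D * k + 1) with hQdef
  have hQpos : 0 < Q := by rw [hQdef]; positivity
  set r := max (n / Q) 1 with hrdef
  -- construct the routing
  have hconstruct : ∃ (s : Fin r → V) (p : ∀ i, X.Walk (s i) (σ (s i))),
      (∀ i, (p i).IsPath) ∧
      (∀ i j, i ≠ j → ∀ x, x ∈ (p i).support → x ∉ (p j).support) := by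
    rcases Nat.eq_zero_or_pos (n / Q) with hdiv | hdiv
    · -- r = 1 : single path
      have hr1 : r = 1 := by rw [hrdef, hdiv]; simp
      obtain ⟨A, hA1, hA2, hg⟩ := prune (X := X) (D := D) hD hexp ∅
      have hAuniv : A = univ := by
        apply Finset.eq_univ_of_card
        rw [Finset.sdiff_empty, Finset.card_empty, mul_zero, add_zero] at hA2
        have h4 : A.card ≤ (univ : Finset V).card := Finset.card_le_univ A
        have h5 : (univ : Finset V).card = Fintype.card V := Finset.card_univ
        omega
      have hne : Nonempty V := by
        rw [← Fintype.card_pos_iff]; omega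
      obtain ⟨v⟩ := hne
      obtain ⟨q, hq1, _, _⟩ := connect (u := v) (w := σ v) hD hD1 hg
        (hAuniv ▸ Finset.mem_univ v) (hAuniv ▸ Finset.mem_univ (σ v)) hk
      rw [hr1]
      exact ⟨fun _ => v, fun _ => q, fun _ => hq1,
        fun i j hij => absurd (Subsingleton.elim i j) hij⟩
    · have hr1 : r = n / Q := by rw [hrdef]; omega
      have ht : (n / Q) * Q ≤ n := Nat.div_mul_le_self n Q
      obtain ⟨s, p, h1, h2, _⟩ := greedy hD hD1 hinv hexp hk (n / Q) (by rw [← hQdef]; exact ht)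
      rw [hr1]
      exact ⟨s, p, h1, h2⟩
  obtain ⟨s, p, h1, h2⟩ := hconstruct
  refine ⟨r, s, p, h1, h2, ?_⟩
  -- arithmetic
  have hln : Real.log 2 ≤ Real.log n := by
    apply Real.log_le_log (by norm_num)
    exact_mod_cast hn2
  have hln2 : (0.6931471803 : ℝ) < Real.log 2 := Real.log_two_gt_d9
  have hlnpos : (0 : ℝ) < Real.log n := by linarith
  have hD2pos : (0 : ℝ) < (D : ℝ) ^ 2 := by
    have : (1 : ℝ) ≤ D := by exact_mod_cast hD1
    positivity
  -- k ≤ 4 log n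
  have hkbound : (k : ℝ) ≤ 4 * Real.log n := by
    have hpow : (2 : ℕ) ^ (k - 1) < n := by
      rw [hkdef]
      exact Nat.pow_pred_clog_lt_self (by norm_num) hn2
    have hcast : ((2 : ℝ)) ^ ((k - 1 : ℕ)) ≤ (n : ℝ) := by exact_mod_cast hpow.le
    have h6 : ((k - 1 : ℕ) : ℝ) * Real.log 2 ≤ Real.log n := by
      rw [← Real.log_pow]
      exact Real.log_le_log (by positivity) hcast
    have h7 : ((k - 1 : ℕ) : ℝ) = (k : ℝ) - 1 := by
      rw [Nat.cast_sub hk1]; norm_num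
    rw [h7] at h6
    nlinarith [hln2, hlnpos, hln]
  -- Q ≤ 680 D^2 log n
  have hQbound : (Q : ℝ) ≤ 680 * (D : ℝ) ^ 2 * Real.log n := by
    have hDr : (1 : ℝ) ≤ D := by exact_mod_cast hD1
    have hkr : (1 : ℝ) ≤ k := by exact_mod_cast hk1
    have hQr : (Q : ℝ) = 2 * (4 * D + 1) * (16 * D * k + 1) := by
      rw [hQdef]; push_cast; ring
    have h7 : (Q : ℝ) ≤ 170 * (D : ℝ) ^ 2 * k := by
      rw [hQr]
      nlinarith [hDr, hkr]
    nlinarith [hkbound, hD2pos, hDr, hkr]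
  have hrge1 : (1 : ℝ) ≤ r := by
    have : 1 ≤ r := le_max_right _ 1
    exact_mod_cast this
  rw [div_le_iff₀ (by positivity)]
  by_cases hcase : (n : ℝ) ≤ 2 * Q
  · calc (1 / 2048 : ℝ) * n ≤ (1 / 2048) * (2 * Q) := by nlinarith
      _ ≤ (1 / 2048) * (2 * (680 * (D : ℝ) ^ 2 * Real.log n)) := by nlinarith
      _ ≤ 1 * (Real.log n * (D : ℝ) ^ 2) := by nlinarith [hlnpos, hD2pos]
      _ ≤ r * (Real.log n * (D : ℝ) ^ 2) := by nlinarith [hlnpos, hD2pos, hrge1]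
  · push_neg at hcase
    have hfloor : (n : ℝ) < Q * (n / Q : ℕ) + Q := by
      have := Nat.div_add_mod n Q
      have hmod : n % Q < Q := Nat.mod_lt n hQpos
      have : (n : ℝ) = Q * (n / Q : ℕ) + (n % Q : ℕ) := by exact_mod_cast this.symm
      rw [this]
      have : ((n % Q : ℕ) : ℝ) < Q := by exact_mod_cast hmod
      linarith
    have hrge : ((n / Q : ℕ) : ℝ) ≤ r := by
      have : n / Q ≤ r := le_max_left _ 1
      exact_mod_cast this
    have hQr0 : (0 : ℝ) < Q := by exact_mod_cast hQpos
    -- Q * (n/Q) > n - Q > n/2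
    have hkey : (n : ℝ) / 2 < Q * (n / Q : ℕ) := by linarith
    -- c n ≤ (n/Q) * M where M = log n * D^2 ≥ Q/680
    have hM : (Q : ℝ) / 680 ≤ Real.log n * (D : ℝ) ^ 2 := by nlinarith [hQbound]
    have hnQnonneg : (0 : ℝ) ≤ ((n / Q : ℕ) : ℝ) := by positivity
    calc (1 / 2048 : ℝ) * n ≤ (1 / 1360) * n := by nlinarith
      _ ≤ ((n / Q : ℕ) : ℝ) * ((Q : ℝ) / 680) := by nlinarith
      _ ≤ ((n / Q : ℕ) : ℝ) * (Real.log n * (D : ℝ) ^ 2) := by nlinarith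
      _ ≤ r * (Real.log n * (D : ℝ) ^ 2) := by nlinarith [hlnpos, hD2pos]
end

section
/- Let G=(V,E) be an n-vertex graph of maximum degree d that is a 1/2-expander. Then every feasible multicut for any set of demand pairs forming a perfect matching on V has size at least n/4; equivalently, the minimum multicut value is at least n/4, while the fractional multicut obtained by assigning length 1/ℓ to every edge after the greedy removal process has value (|E'| + |E''|/ℓ)·β(n) ≥ n/4 where E' are deleted edges, E'' remaining edges, and β(n) = O(log n) is the multicut flow-cut gap. Consequently |E'| ≥ n/4 − d·n·β(n)/(2ℓ), and with ℓ = 4dβ(n), |E'| ≥ n/8. -/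
open Finset

lemma multicut_lower {V : Type*} [Fintype V] [DecidableEq V] (G : SimpleGraph V)
    [DecidableRel G.Adj]
    (hexp : ∀ S : Finset V, 2 * S.card ≤ Fintype.card V → S.card ≤ 2 * (outF G S).card)
    (σ : V → V) (hinv : ∀ v, σ (σ v) = v)
    (Estar : Finset (Sym2 V))
    (hcut : ∀ v, ¬ (G.deleteEdges ↑Estar).Reachable v (σ v)) :
    Fintype.card V ≤ 4 * Estar.card := by
  set G' := G.deleteEdges ↑Estar with hG'
  haveI : DecidableRel G'.Adj := fun a b =>
    decidable_of_iff (G.Adj a b ∧ s(a,b) ∉ Estar) (by simp [hG'])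
  haveI : DecidableEq G'.ConnectedComponent :=
    @Quotient.decidableEq _ G'.reachableSetoid
      (fun a b => inferInstanceAs (Decidable (G'.Reachable a b)))
  set S : G'.ConnectedComponent → Finset V :=
    fun c => univ.filter (fun v => G'.connectedComponentMk v = c) with hS
  -- partition
  have hsum : ∑ c : G'.ConnectedComponent, (S c).card = Fintype.card V := by
    rw [← Finset.card_univ (α := V)]
    exact (Finset.card_eq_sum_card_fiberwise (fun v _ => Finset.mem_univ _)).symm
  -- each component is small
  have hsmall : ∀ c, 2 * (S c).card ≤ Fintype.card V := by
    intro c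
    by_contra h
    push_neg at h
    have hcardim : ((S c).image σ).card = (S c).card := by
      apply Finset.card_image_of_injective
      exact Function.LeftInverse.injective hinv
    have hlt : Fintype.card V < (S c).card + ((S c).image σ).card := by omega
    have hinter : ((S c) ∩ ((S c).image σ)).Nonempty := by
      rw [← Finset.card_pos]
      have h1 : ((S c) ∪ ((S c).image σ)).card ≤ Fintype.card V := by
        rw [← Finset.card_univ (α := V)]; exact Finset.card_le_card (Finset.subset_univ _)
      have h2 := Finset.card_union_add_card_inter (S c) ((S c).image σ)
      omega
    obtain ⟨u, hu⟩ := hinter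
    rw [Finset.mem_inter, Finset.mem_image] at hu
    obtain ⟨hu1, w, hw, hwu⟩ := hu
    rw [hS] at hu1 hw
    simp only [Finset.mem_filter] at hu1 hw
    have : G'.Reachable w u := by
      rw [← SimpleGraph.ConnectedComponent.eq]
      rw [hu1.2, hw.2]
    exact hcut w (hwu ▸ this)
  -- boundary edges are in Estar
  have hbd : ∀ c, outF G (S c) ⊆ Estar := by
    intro c e he
    rw [outF, Finset.mem_filter] at he
    obtain ⟨hee, u, v, rfl, hu, hv⟩ := he
    by_contra hne
    have hadj : G'.Adj u v := by
      rw [hG', SimpleGraph.deleteEdges_adj]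
      exact ⟨SimpleGraph.mem_edgeFinset.mp hee, by simpa using hne⟩
    apply hv
    rw [hS] at hu ⊢
    simp only [Finset.mem_filter, Finset.mem_univ, true_and] at hu ⊢
    rw [← hu, SimpleGraph.ConnectedComponent.eq]
    exact hadj.reachable.symm
  -- each edge is in at most 2 boundaries
  have hcount : ∀ e ∈ Estar,
      (univ.filter fun c : G'.ConnectedComponent => e ∈ outF G (S c)).card ≤ 2 := by
    intro e _
    induction e with
    | h a b =>
      have hsub : (univ.filter fun c : G'.ConnectedComponent => s(a,b) ∈ outF G (S c)) ⊆
          {G'.connectedComponentMk a, G'.connectedComponentMk b} := by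
        intro c hc
        rw [Finset.mem_filter] at hc
        obtain ⟨-, hc⟩ := hc
        rw [outF, Finset.mem_filter] at hc
        obtain ⟨-, u, v, heq, hu, -⟩ := hc
        rw [Sym2.eq_iff] at heq
        rw [hS, Finset.mem_filter] at hu
        rw [Finset.mem_insert, Finset.mem_singleton]
        rcases heq with ⟨ha, hb⟩ | ⟨ha, hb⟩
        · left; rw [← hu.2, ha]
        · right; rw [← hu.2, hb]
      calc _ ≤ ({G'.connectedComponentMk a, G'.connectedComponentMk b} : Finset _).card :=
            Finset.card_le_card hsub
        _ ≤ 2 := Finset.card_insert_le _ _ |>.trans (by simp)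
  -- total boundary count
  have htot : ∑ c : G'.ConnectedComponent, (outF G (S c)).card ≤ 2 * Estar.card := by
    have : ∀ c : G'.ConnectedComponent, (outF G (S c)).card =
        (Estar.filter fun e => e ∈ outF G (S c)).card := by
      intro c
      congr 1
      ext e
      simp only [Finset.mem_filter]
      exact ⟨fun h => ⟨hbd c h, h⟩, fun h => h.2⟩
    simp_rw [this, Finset.card_filter]
    rw [Finset.sum_comm]
    calc ∑ e ∈ Estar, ∑ c : G'.ConnectedComponent, (if e ∈ outF G (S c) then 1 else 0)
        = ∑ e ∈ Estar,
            (univ.filter fun c : G'.ConnectedComponent => e ∈ outF G (S c)).card :=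
          Finset.sum_congr rfl fun e _ => (Finset.card_filter _ _).symm
      _ ≤ ∑ _e ∈ Estar, 2 := Finset.sum_le_sum hcount
      _ = 2 * Estar.card := by rw [Finset.sum_const, smul_eq_mul, mul_comm]
  calc Fintype.card V = ∑ c : G'.ConnectedComponent, (S c).card := hsum.symm
    _ ≤ ∑ c : G'.ConnectedComponent, 2 * (outF G (S c)).card :=
        Finset.sum_le_sum (fun c _ => hexp (S c) (hsmall c))
    _ = 2 * ∑ c : G'.ConnectedComponent, (outF G (S c)).card := by rw [Finset.mul_sum]
    _ ≤ 2 * (2 * Estar.card) := by omega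
    _ = 4 * Estar.card := by ring

/-- Let `G` be an `n`-vertex `1/2`-expander of maximum degree `d`, with demand pairs
forming a perfect matching (a fixed-point-free involution `σ`).  Then every multicut
for these demands has size at least `n/4`; moreover, if the greedy process partitions
the edges into deleted edges `E'` and remaining edges `E''`, and a `β(n)`-rounding of
the fractional multicut `1/ℓ` on `E''` together with `E'` forms a multicut, then
`|E'| ≥ n/4 − d·n·β/(2ℓ)`, and with `ℓ = 4dβ`, `|E'| ≥ n/8`. -/
theorem stmt_15 {V : Type*} [Fintype V] [DecidableEq V] (G : SimpleGraph V)
    [DecidableRel G.Adj] (d : ℕ) (hd : 1 ≤ d) (hdeg : ∀ v, G.degree v ≤ d)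
    (hexp : ∀ S : Finset V, 2 * S.card ≤ Fintype.card V →
      S.card ≤ 2 * (outF G S).card)
    (σ : V → V) (hinv : ∀ v, σ (σ v) = v) (hff : ∀ v, σ v ≠ v)
    (β ℓ : ℝ) (hβ : 1 ≤ β) (hℓ : ℓ = 4 * d * β)
    (E' E'' : Finset (Sym2 V)) (hpart : Disjoint E' E'')
    (hcover : E' ∪ E'' = G.edgeFinset)
    (hround : ∃ Eint ⊆ E'', ((Eint.card : ℝ) ≤ β * ((E''.card : ℝ) / ℓ)) ∧
      ∀ v, ¬ (G.deleteEdges ↑(E' ∪ Eint)).Reachable v (σ v)) :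
    (∀ Estar : Finset (Sym2 V), Estar ⊆ G.edgeFinset →
      (∀ v, ¬ (G.deleteEdges ↑Estar).Reachable v (σ v)) →
      (Fintype.card V : ℝ) ≤ 4 * Estar.card) ∧
    (Fintype.card V : ℝ) / 4 - d * Fintype.card V * β / (2 * ℓ) ≤ E'.card ∧
    (Fintype.card V : ℝ) / 8 ≤ E'.card := by
  obtain ⟨Eint, hsub, hcard, hcutI⟩ := hround
  set n : ℝ := (Fintype.card V : ℝ) with hn
  have hnn : (0:ℝ) ≤ n := by positivity
  have hβpos : (0:ℝ) < β := lt_of_lt_of_le one_pos hβ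
  have hdpos : (1:ℝ) ≤ (d:ℝ) := by exact_mod_cast hd
  have hℓpos : (0:ℝ) < ℓ := by rw [hℓ]; nlinarith
  -- part 1
  have part1 : ∀ Estar : Finset (Sym2 V), Estar ⊆ G.edgeFinset →
      (∀ v, ¬ (G.deleteEdges ↑Estar).Reachable v (σ v)) →
      (Fintype.card V : ℝ) ≤ 4 * Estar.card := by
    intro Estar _ hcut
    exact_mod_cast multicut_lower G hexp σ hinv Estar hcut
  -- edge count bound
  have hE : 2 * G.edgeFinset.card ≤ d * Fintype.card V := by
    have h1 : ∑ v, G.degree v = 2 * G.edgeFinset.card :=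
      G.sum_degrees_eq_twice_card_edges
    have h2 : ∑ v, G.degree v ≤ ∑ _v : V, d := Finset.sum_le_sum fun v _ => hdeg v
    simp only [Finset.sum_const, Finset.card_univ, smul_eq_mul] at h2
    calc 2 * G.edgeFinset.card = ∑ v, G.degree v := h1.symm
      _ ≤ Fintype.card V * d := h2
      _ = d * Fintype.card V := Nat.mul_comm _ _
  have hE'' : (E''.card : ℝ) ≤ d * n / 2 := by
    have hsubE : E'' ⊆ G.edgeFinset := hcover ▸ Finset.subset_union_right
    have h1 : 2 * E''.card ≤ d * Fintype.card V :=
      le_trans (by have := Finset.card_le_card hsubE; omega) hE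
    have h2 : (2 * E''.card : ℝ) ≤ (d : ℝ) * n := by rw [hn]; exact_mod_cast h1
    linarith
  -- key computation
  have hq : β * ((d:ℝ) * n / 2) / ℓ = n / 8 := by
    rw [hℓ]
    have hd0 : (d:ℝ) ≠ 0 := by linarith
    field_simp
    ring
  have h5 : (Eint.card : ℝ) ≤ n / 8 := by
    refine hcard.trans ?_
    rw [← hq, mul_div_assoc]
    gcongr
  -- apply part 1 to E' ∪ Eint
  have h1 : n ≤ 4 * ((E' ∪ Eint).card : ℝ) := by
    refine part1 (E' ∪ Eint) ?_ hcutI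
    rw [← hcover]
    exact Finset.union_subset Finset.subset_union_left
      (hsub.trans Finset.subset_union_right)
  have h2 : ((E' ∪ Eint).card : ℝ) ≤ (E'.card : ℝ) + (Eint.card : ℝ) := by
    exact_mod_cast Finset.card_union_le E' Eint
  have hmain : n / 8 ≤ (E'.card : ℝ) := by linarith
  have h8 : (d:ℝ) * n * β / (2 * ℓ) = n / 8 := by
    rw [hℓ]
    have hd0 : (d:ℝ) ≠ 0 := by linarith
    field_simp
    ring
  exact ⟨part1, by rw [h8]; linarith, hmain⟩
end

section
/- Suppose G=(V,E) is π-flow-well-linked for a weight function π: V → ℝ≥0 (i.e., every pair (x,y) of vertices can simultaneously send π(x)·π(y)/π(V) flow units to each other with no congestion). Let 𝒢 be a partition of the terminal set into groups U with 2 ≤ π(U) ≤ 6, each equipped with a tree T_U, the trees pairwise edge-disjoint, and suppose each group contains at most one selected terminal. Then any matching ℳ* on the selected terminals can be fractionally routed in G with congestion at most 2. -/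
open Finset

/-- A fractional routing of the demands `D` in `G` with congestion at most `c`. -/
def FracRoutable {V : Type*} [Fintype V] [DecidableEq V] (G : SimpleGraph V)
    (D : V → V → ℝ) (c : ℝ) : Prop :=
  ∃ (n : ℕ) (p : Fin n → Σ (u : V) (v : V), G.Walk u v) (w : Fin n → ℝ),
    (∀ i, 0 ≤ w i) ∧
    (∀ u v : V, ∑ i ∈ univ.filter (fun i => (p i).1 = u ∧ (p i).2.1 = v), w i = D u v) ∧
    (∀ e ∈ G.edgeSet, ∑ i ∈ univ.filter (fun i => e ∈ (p i).2.2.edges), w i ≤ c)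


lemma exists_walk_in_subgraph {V : Type*} {G : SimpleGraph V} (H : G.Subgraph)
    (hc : H.Connected) {a x : V} (ha : a ∈ H.verts) (hx : x ∈ H.verts) :
    ∃ q : G.Walk a x, ∀ e ∈ q.edges, e ∈ H.edgeSet := by
  obtain ⟨q0⟩ := hc.preconnected ⟨a, ha⟩ ⟨x, hx⟩
  refine ⟨q0.map H.hom, ?_⟩
  intro e he
  have he2 : e ∈ q0.edges.map (Sym2.map H.hom) := by
    rw [← SimpleGraph.Walk.edges_map]; exact he
  obtain ⟨e', he', rfl⟩ := List.mem_map.mp he2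
  induction e' using Sym2.ind with
  | _ u v =>
    have h2 : H.coe.Adj u v := q0.adj_of_mem_edges he'
    rw [SimpleGraph.Subgraph.coe_adj] at h2
    exact SimpleGraph.Subgraph.mem_edgeSet.mpr h2

lemma fracRoutable_of_index {V : Type*} [Fintype V] [DecidableEq V] (G : SimpleGraph V)
    (D : V → V → ℝ) (c : ℝ) {I : Type*} [Fintype I]
    (q : I → Σ (u : V) (v : V), G.Walk u v) (wt : I → ℝ)
    (h0 : ∀ i, 0 ≤ wt i)
    (h1 : ∀ u v : V, ∑ i ∈ univ.filter (fun i => (q i).1 = u ∧ (q i).2.1 = v), wt i = D u v)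
    (h2 : ∀ e ∈ G.edgeSet, ∑ i ∈ univ.filter (fun i => e ∈ (q i).2.2.edges), wt i ≤ c) :
    FracRoutable G D c := by
  classical
  refine ⟨Fintype.card I, q ∘ (Fintype.equivFin I).symm, wt ∘ (Fintype.equivFin I).symm,
    fun i => h0 _, fun u v => ?_, fun e he => ?_⟩
  · rw [← h1 u v, Finset.sum_filter, Finset.sum_filter]
    exact Fintype.sum_equiv (Fintype.equivFin I).symm _ _ (fun i => rfl)
  · refine le_trans (le_of_eq ?_) (h2 e he)
    rw [Finset.sum_filter, Finset.sum_filter]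
    exact Fintype.sum_equiv (Fintype.equivFin I).symm _ _ (fun i => rfl)

lemma sum_ite_le_of_card {α : Type*} [Fintype α] (P : α → Prop) [DecidablePred P] {c : ℝ}
    (hc : 0 ≤ c) (h : (univ.filter P).card ≤ 1) :
    (∑ a : α, if P a then c else 0) ≤ c := by
  rw [← Finset.sum_filter, Finset.sum_const, nsmul_eq_mul]
  calc ((univ.filter P).card : ℝ) * c ≤ 1 * c := by
        apply mul_le_mul_of_nonneg_right _ hc
        exact_mod_cast h
    _ = c := one_mul c

/-- If `G` is `π`-flow-well-linked (every pair `(x,y)` can simultaneously send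
`π(x)π(y)/π(V)` flow units with no congestion), the terminals `𝒯` are partitioned into
groups `U` of weight `2 ≤ π(U) ≤ 6` spanned by pairwise edge-disjoint trees, and at most
one selected terminal lies in each group, then any matching on the selected terminals
can be fractionally routed in `G` with congestion at most `2`. -/
theorem stmt_16 {V : Type*} [Fintype V] [DecidableEq V] (G : SimpleGraph V)
    (π : V → ℝ) (hπ : ∀ v, 0 ≤ π v) (hπpos : 0 < ∑ v, π v)
    (hwl : FracRoutable G (fun x y => π x * π y / ∑ v, π v) 1)
    (𝒯 : Finset V) (𝒢 : Finset (Finset V))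
    (hcover : 𝒢.sup id = 𝒯)
    (hdisj : ∀ U ∈ 𝒢, ∀ U' ∈ 𝒢, U ≠ U' → Disjoint U U')
    (hπU : ∀ U ∈ 𝒢, 2 ≤ ∑ v ∈ U, π v ∧ ∑ v ∈ U, π v ≤ 6)
    (t : Finset V → G.Subgraph)
    (htree : ∀ U ∈ 𝒢, (t U).Connected ∧ ↑U ⊆ (t U).verts)
    (htdisj : ∀ U ∈ 𝒢, ∀ U' ∈ 𝒢, U ≠ U' → Disjoint (t U).edgeSet (t U').edgeSet)
    (sel : Finset V) (hsel : sel ⊆ 𝒯)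
    (hone : ∀ U ∈ 𝒢, (sel ∩ U).card ≤ 1)
    (M : Finset (V × V))
    (hM : ∀ pr ∈ M, pr.1 ∈ sel ∧ pr.2 ∈ sel ∧ pr.1 ≠ pr.2)
    (hM' : ∀ pr ∈ M, ∀ pr' ∈ M, pr ≠ pr' →
      pr.1 ≠ pr'.1 ∧ pr.1 ≠ pr'.2 ∧ pr.2 ≠ pr'.1 ∧ pr.2 ≠ pr'.2) :
    FracRoutable G (fun u v => if (u, v) ∈ M then 1 else 0) 2 := by
  classical
  obtain ⟨n, p, w, hw0, hdem, hcong⟩ := hwl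
  set S : ℝ := ∑ v, π v with hSdef
  have hS0 : S ≠ 0 := ne_of_gt hπpos
  have hSnn : 0 ≤ S := le_of_lt hπpos
  have hdem' : ∀ u v : V,
      (∑ i : Fin n, if (p i).1 = u ∧ (p i).2.1 = v then w i else 0) = π u * π v / S := by
    intro u v; rw [← Finset.sum_filter]; exact hdem u v
  have hcong' : ∀ e ∈ G.edgeSet,
      (∑ i : Fin n, if e ∈ (p i).2.2.edges then w i else 0) ≤ 1 := by
    intro e he; rw [← Finset.sum_filter]; exact hcong e he
  have hwle : ∀ i : Fin n, w i ≤ π (p i).1 * π (p i).2.1 / S := by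
    intro i
    rw [← hdem' (p i).1 (p i).2.1]
    have h2 := Finset.single_le_sum
      (f := fun j : Fin n => if (p j).1 = (p i).1 ∧ (p j).2.1 = (p i).2.1 then w j else 0)
      (fun j _ => by split
                     · exact hw0 j
                     · exact le_refl 0) (Finset.mem_univ i)
    simpa using h2
  have hwz : ∀ i : Fin n, π (p i).2.1 = 0 → w i = 0 := by
    intro i h
    have h1 := hwle i
    rw [h, mul_zero, zero_div] at h1
    exact le_antisymm h1 (hw0 i)
  -- fiber sums of the concurrent flow
  have SUMJ : ∀ (v : V) (Ub : Finset V),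
      (∑ j : Fin n, if (p j).1 = v ∧ (p j).2.1 ∈ Ub then w j else 0)
        = π v * (∑ y ∈ Ub, π y) / S := by
    intro v Ub
    have hpt : ∀ j : Fin n, (if (p j).1 = v ∧ (p j).2.1 ∈ Ub then w j else 0)
        = ∑ y ∈ Ub, (if (p j).1 = v ∧ (p j).2.1 = y then w j else 0) := by
      intro j
      have h1 : ∀ y, (if (p j).1 = v ∧ (p j).2.1 = y then w j else 0)
          = (if (p j).2.1 = y then (if (p j).1 = v then w j else 0) else 0) := by
        intro y
        by_cases hy : (p j).2.1 = y
        · by_cases hv : (p j).1 = v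
          · rw [if_pos ⟨hv, hy⟩, if_pos hy, if_pos hv]
          · rw [if_neg (fun c => hv c.1), if_pos hy, if_neg hv]
        · rw [if_neg (fun c => hy c.2), if_neg hy]
      rw [Finset.sum_congr rfl (fun y _ => h1 y),
        Finset.sum_ite_eq Ub ((p j).2.1) (fun _ => if (p j).1 = v then w j else 0)]
      by_cases hU : (p j).2.1 ∈ Ub
      · by_cases hv : (p j).1 = v
        · rw [if_pos ⟨hv, hU⟩, if_pos hU, if_pos hv]
        · rw [if_neg (fun c => hv c.1), if_pos hU, if_neg hv]
      · rw [if_neg (fun c => hU c.2), if_neg hU]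
    rw [Finset.sum_congr rfl (fun j _ => hpt j), Finset.sum_comm,
      Finset.sum_congr rfl (fun y _ => hdem' v y), ← Finset.sum_div, ← Finset.mul_sum]
  have SUMI : ∀ (Ua : Finset V) (v : V),
      (∑ i : Fin n, if (p i).1 ∈ Ua ∧ (p i).2.1 = v then w i else 0)
        = (∑ x ∈ Ua, π x) * π v / S := by
    intro Ua v
    have hpt : ∀ i : Fin n, (if (p i).1 ∈ Ua ∧ (p i).2.1 = v then w i else 0)
        = ∑ x ∈ Ua, (if (p i).1 = x ∧ (p i).2.1 = v then w i else 0) := by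
      intro i
      have h1 : ∀ x, (if (p i).1 = x ∧ (p i).2.1 = v then w i else 0)
          = (if (p i).1 = x then (if (p i).2.1 = v then w i else 0) else 0) := by
        intro x
        by_cases hx : (p i).1 = x
        · by_cases hv : (p i).2.1 = v
          · rw [if_pos ⟨hx, hv⟩, if_pos hx, if_pos hv]
          · rw [if_neg (fun c => hv c.2), if_pos hx, if_neg hv]
        · rw [if_neg (fun c => hx c.1), if_neg hx]
      rw [Finset.sum_congr rfl (fun x _ => h1 x),
        Finset.sum_ite_eq Ua ((p i).1) (fun _ => if (p i).2.1 = v then w i else 0)]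
      by_cases hU : (p i).1 ∈ Ua
      · by_cases hv : (p i).2.1 = v
        · rw [if_pos ⟨hU, hv⟩, if_pos hU, if_pos hv]
        · rw [if_neg (fun c => hv c.2), if_pos hU, if_neg hv]
      · rw [if_neg (fun c => hU c.1), if_neg hU]
    rw [Finset.sum_congr rfl (fun i _ => hpt i), Finset.sum_comm,
      Finset.sum_congr rfl (fun x _ => hdem' x v), ← Finset.sum_div, ← Finset.sum_mul]
  have SUMIALL : ∀ (Ua : Finset V),
      (∑ i : Fin n, if (p i).1 ∈ Ua then w i else 0) = ∑ x ∈ Ua, π x := by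
    intro Ua
    have hpt : ∀ i : Fin n, (if (p i).1 ∈ Ua then w i else 0)
        = ∑ v : V, (if (p i).1 ∈ Ua ∧ (p i).2.1 = v then w i else 0) := by
      intro i
      have h1 : ∀ v, (if (p i).1 ∈ Ua ∧ (p i).2.1 = v then w i else 0)
          = (if (p i).2.1 = v then (if (p i).1 ∈ Ua then w i else 0) else 0) := by
        intro v
        by_cases hv : (p i).2.1 = v
        · by_cases hU : (p i).1 ∈ Ua
          · rw [if_pos ⟨hU, hv⟩, if_pos hv, if_pos hU]
          · rw [if_neg (fun c => hU c.1), if_pos hv, if_neg hU]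
        · rw [if_neg (fun c => hv c.2), if_neg hv]
      rw [Finset.sum_congr rfl (fun v _ => h1 v),
        Finset.sum_ite_eq univ ((p i).2.1) (fun _ => if (p i).1 ∈ Ua then w i else 0),
        if_pos (Finset.mem_univ _)]
    rw [Finset.sum_congr rfl (fun i _ => hpt i), Finset.sum_comm,
      Finset.sum_congr rfl (fun v _ => SUMI Ua v), ← Finset.sum_div, ← Finset.mul_sum,
      ← hSdef, mul_div_assoc, div_self hS0, mul_one]
  -- groups
  have hgrp0 : ∀ s ∈ sel, ∃ U, U ∈ 𝒢 ∧ s ∈ U := by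
    intro s hs
    have hmem : s ∈ 𝒢.sup id := by rw [hcover]; exact hsel hs
    simpa using Finset.mem_sup.mp hmem
  choose! grp hgrpG hgrpmem using hgrp0
  have hgrpne : ∀ s ∈ sel, ∀ s' ∈ sel, s ≠ s' → grp s ≠ grp s' := by
    intro s hs s' hs' hne heq
    refine hne (Finset.card_le_one.mp (hone (grp s) (hgrpG s hs)) s ?_ s' ?_)
    · exact Finset.mem_inter.mpr ⟨hs, hgrpmem s hs⟩
    · exact Finset.mem_inter.mpr ⟨hs', heq ▸ hgrpmem s' hs'⟩
  have hgrpeq : ∀ s ∈ sel, ∀ s' ∈ sel, ∀ x, x ∈ grp s → x ∈ grp s' → grp s = grp s' := by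
    intro s hs s' hs' x h1 h2
    by_contra hne
    exact (Finset.disjoint_left.mp (hdisj _ (hgrpG s hs) _ (hgrpG s' hs') hne)) h1 h2
  have hgA2 : ∀ s ∈ sel, (2:ℝ) ≤ ∑ z ∈ grp s, π z := fun s hs => (hπU _ (hgrpG s hs)).1
  have hgA0 : ∀ s ∈ sel, (∑ z ∈ grp s, π z) ≠ 0 :=
    fun s hs => ne_of_gt (lt_of_lt_of_le two_pos (hgA2 s hs))
  -- tree walks
  have htwE : ∀ (U : Finset V) (a x : V), U ∈ 𝒢 → a ∈ U → x ∈ U →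
      ∃ q : G.Walk a x, ∀ e ∈ q.edges, e ∈ (t U).edgeSet := by
    intro U a x hU ha hx
    exact exists_walk_in_subgraph (t U) (htree U hU).1 ((htree U hU).2 ha) ((htree U hU).2 hx)
  choose tw htw using htwE
  -- matched pairs
  have hMa : ∀ m : {pr // pr ∈ M}, m.val.1 ∈ sel := fun m => (hM m.val m.prop).1
  have hMb : ∀ m : {pr // pr ∈ M}, m.val.2 ∈ sel := fun m => (hM m.val m.prop).2.1
  have hMab : ∀ m : {pr // pr ∈ M}, m.val.1 ≠ m.val.2 := fun m => (hM m.val m.prop).2.2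
  -- walks and weights
  set wt : {pr // pr ∈ M} × Fin n × Fin n → ℝ := fun z =>
    if (p z.2.1).1 ∈ grp z.1.val.1 ∧ (p z.2.1).2.1 = (p z.2.2).1 ∧ (p z.2.2).2.1 ∈ grp z.1.val.2
    then (w z.2.1 / ∑ x ∈ grp z.1.val.1, π x) *
      (w z.2.2 * S / ((∑ x ∈ grp z.1.val.2, π x) * π ((p z.2.2).1))) else 0 with hwtdef
  set q : {pr // pr ∈ M} × Fin n × Fin n → (Σ (u : V) (v : V), G.Walk u v) := fun z =>
    if h : (p z.2.1).1 ∈ grp z.1.val.1 ∧ (p z.2.1).2.1 = (p z.2.2).1 ∧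
        (p z.2.2).2.1 ∈ grp z.1.val.2 then
      ⟨z.1.val.1, z.1.val.2,
        SimpleGraph.Walk.append
          (tw (grp z.1.val.1) z.1.val.1 (p z.2.1).1 (hgrpG _ (hMa z.1)) (hgrpmem _ (hMa z.1)) h.1)
          (SimpleGraph.Walk.append (p z.2.1).2.2
            (SimpleGraph.Walk.append ((p z.2.2).2.2.copy h.2.1.symm rfl)
              (tw (grp z.1.val.2) (p z.2.2).2.1 z.1.val.2
                (hgrpG _ (hMb z.1)) h.2.2 (hgrpmem _ (hMb z.1)))))⟩
    else ⟨z.1.val.1, z.1.val.1, SimpleGraph.Walk.nil⟩ with hqdef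
  have hwt0 : ∀ z, 0 ≤ wt z := by
    intro z; rw [hwtdef]; dsimp only; split
    · refine mul_nonneg (div_nonneg (hw0 _) (Finset.sum_nonneg fun x _ => hπ x)) ?_
      exact div_nonneg (mul_nonneg (hw0 _) hSnn)
        (mul_nonneg (Finset.sum_nonneg fun x _ => hπ x) (hπ _))
    · exact le_refl 0
  -- inner sum over the second flow index
  have INNERJ : ∀ (m : {pr // pr ∈ M}) (i : Fin n),
      (∑ j : Fin n, wt (m, i, j)) =
        if (p i).1 ∈ grp m.val.1 then
          (w i / ∑ x ∈ grp m.val.1, π x) *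
            (π ((p i).2.1) * (∑ y ∈ grp m.val.2, π y) / S *
              (S / ((∑ y ∈ grp m.val.2, π y) * π ((p i).2.1))))
        else 0 := by
    intro m i
    by_cases h1 : (p i).1 ∈ grp m.val.1
    · rw [if_pos h1]
      have hpt : ∀ j : Fin n, wt (m, i, j) = (w i / ∑ x ∈ grp m.val.1, π x) *
          ((if (p j).1 = (p i).2.1 ∧ (p j).2.1 ∈ grp m.val.2 then w j else 0) *
            (S / ((∑ y ∈ grp m.val.2, π y) * π ((p i).2.1)))) := by
        intro j
        rw [hwtdef]; dsimp only
        by_cases h2 : (p j).1 = (p i).2.1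
        · by_cases h3 : (p j).2.1 ∈ grp m.val.2
          · rw [if_pos ⟨h1, h2.symm, h3⟩, if_pos ⟨h2, h3⟩, h2, mul_div_assoc]
          · rw [if_neg (fun c => h3 c.2.2), if_neg (fun c => h3 c.2), zero_mul, mul_zero]
        · rw [if_neg (fun c => h2 c.2.1.symm), if_neg (fun c => h2 c.1), zero_mul, mul_zero]
      rw [Finset.sum_congr rfl (fun j _ => hpt j), ← Finset.mul_sum, ← Finset.sum_mul,
        SUMJ ((p i).2.1) (grp m.val.2)]
    · rw [if_neg h1]
      apply Finset.sum_eq_zero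
      intro j _
      rw [hwtdef]; dsimp only
      rw [if_neg (fun c => h1 c.1)]
  have JSval : ∀ (B : ℝ) (v : V), B ≠ 0 →
      (π v * B / S * (S / (B * π v))) = if π v = 0 then 0 else 1 := by
    intro B v hB
    by_cases hv : π v = 0
    · rw [if_pos hv, hv, zero_mul, zero_div, zero_mul]
    · rw [if_neg hv]
      field_simp
  have KEY : ∀ m : {pr // pr ∈ M}, (∑ i : Fin n, ∑ j : Fin n, wt (m, i, j)) = 1 := by
    intro m
    have h1 : ∀ i : Fin n, (∑ j : Fin n, wt (m, i, j))
        = (if (p i).1 ∈ grp m.val.1 then w i else 0) / (∑ x ∈ grp m.val.1, π x) := by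
      intro i
      rw [INNERJ m i, JSval _ ((p i).2.1) (hgA0 m.val.2 (hMb m))]
      by_cases h1 : (p i).1 ∈ grp m.val.1
      · rw [if_pos h1, if_pos h1]
        by_cases hv : π ((p i).2.1) = 0
        · rw [if_pos hv, mul_zero, hwz i hv, zero_div]
        · rw [if_neg hv, mul_one]
      · rw [if_neg h1, if_neg h1, zero_div]
    rw [Finset.sum_congr rfl (fun i _ => h1 i), ← Finset.sum_div, SUMIALL,
      div_self (hgA0 m.val.1 (hMa m))]
  -- endpoints of the constructed walks
  have hqend : ∀ z, ((p z.2.1).1 ∈ grp z.1.val.1 ∧ (p z.2.1).2.1 = (p z.2.2).1 ∧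
      (p z.2.2).2.1 ∈ grp z.1.val.2) → (q z).1 = z.1.val.1 ∧ (q z).2.1 = z.1.val.2 := by
    intro z hP
    rw [hqdef]; dsimp only; rw [dif_pos hP]; exact ⟨rfl, rfl⟩
  have DEM : ∀ u v : V,
      (∑ z ∈ univ.filter (fun z => (q z).1 = u ∧ (q z).2.1 = v), wt z)
        = (if (u, v) ∈ M then 1 else 0) := by
    intro u v
    rw [Finset.sum_filter]
    have hpt : ∀ z, (if (q z).1 = u ∧ (q z).2.1 = v then wt z else 0)
        = (if z.1.val = (u, v) then wt z else 0) := by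
      intro z
      by_cases hP : (p z.2.1).1 ∈ grp z.1.val.1 ∧ (p z.2.1).2.1 = (p z.2.2).1 ∧
          (p z.2.2).2.1 ∈ grp z.1.val.2
      · obtain ⟨he1, he2⟩ := hqend z hP
        refine if_congr ?_ rfl rfl
        constructor
        · rintro ⟨ha, hb⟩; exact Prod.ext (he1.symm.trans ha) (he2.symm.trans hb)
        · rintro h; exact ⟨he1.trans (congrArg Prod.fst h), he2.trans (congrArg Prod.snd h)⟩
      · have h0 : wt z = 0 := by rw [hwtdef]; dsimp only; rw [if_neg hP]
        rw [h0, ite_self, ite_self]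
    rw [Finset.sum_congr rfl (fun z _ => hpt z), Fintype.sum_prod_type]
    have hpull : ∀ m : {pr // pr ∈ M},
        (∑ y : Fin n × Fin n, if m.val = (u, v) then wt (m, y) else 0)
          = (if m.val = (u, v) then 1 else 0) := by
      intro m
      by_cases hm : m.val = (u, v)
      · rw [if_pos hm, Finset.sum_congr rfl (fun y _ => if_pos hm)]
        rw [show (∑ y : Fin n × Fin n, wt (m, y)) = 1 from by
          rw [Fintype.sum_prod_type]; exact KEY m]
      · rw [if_neg hm, Finset.sum_congr rfl (fun y _ => if_neg hm), Finset.sum_const_zero]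
    rw [Finset.sum_congr rfl (fun m _ => hpull m)]
    by_cases hm : (u, v) ∈ M
    · rw [if_pos hm, Finset.sum_eq_single (⟨(u, v), hm⟩ : {pr // pr ∈ M})]
      · exact if_pos rfl
      · intro m _ hne; exact if_neg (fun hc => hne (Subtype.ext hc))
      · intro habs; exact absurd (Finset.mem_univ _) habs
    · rw [if_neg hm]
      apply Finset.sum_eq_zero
      intro m _
      exact if_neg (fun hc => hm (by rw [← hc]; exact m.prop))
  -- bounds for congestion
  have hIJ : ∀ (m : {pr // pr ∈ M}) (i : Fin n),
      (∑ j : Fin n, wt (m, i, j)) ≤ (if (p i).1 ∈ grp m.val.1 then w i / 2 else 0) := by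
    intro m i
    rw [INNERJ m i]
    by_cases h1 : (p i).1 ∈ grp m.val.1
    · rw [if_pos h1, if_pos h1, JSval _ ((p i).2.1) (hgA0 m.val.2 (hMb m))]
      by_cases hv : π ((p i).2.1) = 0
      · rw [if_pos hv, mul_zero]
        exact div_nonneg (hw0 i) (by norm_num)
      · rw [if_neg hv, mul_one]
        exact div_le_div_of_nonneg_left (hw0 i) two_pos (hgA2 _ (hMa m))
    · rw [if_neg h1, if_neg h1]
  have INNERI : ∀ (m : {pr // pr ∈ M}) (j : Fin n),
      (∑ i : Fin n, wt (m, i, j)) ≤ (if (p j).2.1 ∈ grp m.val.2 then w j / 2 else 0) := by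
    intro m j
    by_cases h3 : (p j).2.1 ∈ grp m.val.2
    · rw [if_pos h3]
      have hpt : ∀ i : Fin n, wt (m, i, j)
          = ((if (p i).1 ∈ grp m.val.1 ∧ (p i).2.1 = (p j).1 then w i else 0)
              / (∑ x ∈ grp m.val.1, π x)) *
            (w j * S / ((∑ x ∈ grp m.val.2, π x) * π ((p j).1))) := by
        intro i
        rw [hwtdef]; dsimp only
        by_cases h1 : (p i).1 ∈ grp m.val.1
        · by_cases h2 : (p i).2.1 = (p j).1
          · rw [if_pos ⟨h1, h2, h3⟩, if_pos ⟨h1, h2⟩]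
          · rw [if_neg (fun c => h2 c.2.1), if_neg (fun c => h2 c.2), zero_div, zero_mul]
        · rw [if_neg (fun c => h1 c.1), if_neg (fun c => h1 c.1), zero_div, zero_mul]
      rw [Finset.sum_congr rfl (fun i _ => hpt i), ← Finset.sum_mul, ← Finset.sum_div,
        SUMI (grp m.val.1) ((p j).1)]
      by_cases hv : π ((p j).1) = 0
      · rw [hv, mul_zero, zero_div, zero_div, zero_mul]
        exact div_nonneg (hw0 j) (by norm_num)
      · have heq : ((∑ x ∈ grp m.val.1, π x) * π ((p j).1) / S) / (∑ x ∈ grp m.val.1, π x) *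
            (w j * S / ((∑ x ∈ grp m.val.2, π x) * π ((p j).1)))
            = w j / (∑ x ∈ grp m.val.2, π x) := by
          have hA := hgA0 m.val.1 (hMa m)
          have hB := hgA0 m.val.2 (hMb m)
          field_simp
        rw [heq]
        exact div_le_div_of_nonneg_left (hw0 j) two_pos (hgA2 _ (hMb m))
    · rw [if_neg h3]
      refine le_of_eq (Finset.sum_eq_zero fun i _ => ?_)
      rw [hwtdef]; dsimp only
      rw [if_neg (fun c => h3 c.2.2)]
  -- uniqueness of roles
  have uniqA : ∀ x : V,
      (univ.filter (fun m : {pr // pr ∈ M} => x ∈ grp m.val.1)).card ≤ 1 := by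
    intro x
    rw [Finset.card_le_one]
    intro m hm m' hm'
    simp only [Finset.mem_filter] at hm hm'
    by_contra hne
    have hvv : m.val ≠ m'.val := fun h => hne (Subtype.ext h)
    exact hgrpne _ (hMa m) _ (hMa m') (hM' m.val m.prop m'.val m'.prop hvv).1
      (hgrpeq _ (hMa m) _ (hMa m') x hm.2 hm'.2)
  have uniqB : ∀ x : V,
      (univ.filter (fun m : {pr // pr ∈ M} => x ∈ grp m.val.2)).card ≤ 1 := by
    intro x
    rw [Finset.card_le_one]
    intro m hm m' hm'
    simp only [Finset.mem_filter] at hm hm'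
    by_contra hne
    have hvv : m.val ≠ m'.val := fun h => hne (Subtype.ext h)
    exact hgrpne _ (hMb m) _ (hMb m') (hM' m.val m.prop m'.val m'.prop hvv).2.2.2
      (hgrpeq _ (hMb m) _ (hMb m') x hm.2 hm'.2)
  have hsrole : ∀ r : {pr // pr ∈ M} × Bool, (cond r.2 r.1.val.2 r.1.val.1) ∈ sel := by
    rintro ⟨m, c⟩
    cases c
    · exact hMa m
    · exact hMb m
  have hrole : ∀ r r' : {pr // pr ∈ M} × Bool, r ≠ r' →
      (cond r.2 r.1.val.2 r.1.val.1) ≠ (cond r'.2 r'.1.val.2 r'.1.val.1) := by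
    rintro ⟨m, c⟩ ⟨m', c'⟩ hne
    by_cases hmm : m = m'
    · subst hmm
      cases c <;> cases c'
      · exact absurd rfl hne
      · exact hMab m
      · exact (hMab m).symm
      · exact absurd rfl hne
    · have hvv : m.val ≠ m'.val := fun h => hmm (Subtype.ext h)
      have h4 := hM' m.val m.prop m'.val m'.prop hvv
      cases c <;> cases c'
      · exact h4.1
      · exact h4.2.1
      · exact h4.2.2.1
      · exact h4.2.2.2
  have CONG : ∀ e ∈ G.edgeSet,
      (∑ z ∈ univ.filter (fun z => e ∈ (q z).2.2.edges), wt z) ≤ 2 := by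
    intro e he
    rw [Finset.sum_filter]
    have uniqT : (univ.filter (fun r : {pr // pr ∈ M} × Bool =>
        e ∈ (t (grp (cond r.2 r.1.val.2 r.1.val.1))).edgeSet)).card ≤ 1 := by
      rw [Finset.card_le_one]
      intro r hr r' hr'
      simp only [Finset.mem_filter] at hr hr'
      by_contra hne
      have h1 := hrole r r' hne
      have hg := hgrpne _ (hsrole r) _ (hsrole r') h1
      have hd := htdisj _ (hgrpG _ (hsrole r)) _ (hgrpG _ (hsrole r')) hg
      exact (Set.disjoint_left.mp hd hr.2) hr'.2
    -- pointwise decomposition of a walk's edge set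
    have hpt : ∀ z, (if e ∈ (q z).2.2.edges then wt z else 0) ≤
        (if e ∈ (t (grp z.1.val.1)).edgeSet then wt z else 0)
        + (if e ∈ (p z.2.1).2.2.edges then wt z else 0)
        + (if e ∈ (p z.2.2).2.2.edges then wt z else 0)
        + (if e ∈ (t (grp z.1.val.2)).edgeSet then wt z else 0) := by
      intro z
      have h1 : 0 ≤ (if e ∈ (t (grp z.1.val.1)).edgeSet then wt z else 0) := by
        split <;> [exact hwt0 z; exact le_rfl]
      have h2 : 0 ≤ (if e ∈ (p z.2.1).2.2.edges then wt z else 0) := by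
        split <;> [exact hwt0 z; exact le_rfl]
      have h3 : 0 ≤ (if e ∈ (p z.2.2).2.2.edges then wt z else 0) := by
        split <;> [exact hwt0 z; exact le_rfl]
      have h4 : 0 ≤ (if e ∈ (t (grp z.1.val.2)).edgeSet then wt z else 0) := by
        split <;> [exact hwt0 z; exact le_rfl]
      by_cases hP : (p z.2.1).1 ∈ grp z.1.val.1 ∧ (p z.2.1).2.1 = (p z.2.2).1 ∧
          (p z.2.2).2.1 ∈ grp z.1.val.2
      · by_cases he' : e ∈ (q z).2.2.edges
        · rw [if_pos he']
          have hdec : e ∈ (t (grp z.1.val.1)).edgeSet ∨ e ∈ (p z.2.1).2.2.edges ∨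
              e ∈ (p z.2.2).2.2.edges ∨ e ∈ (t (grp z.1.val.2)).edgeSet := by
            have he2 := he'
            rw [hqdef] at he2
            dsimp only at he2
            rw [dif_pos hP] at he2
            dsimp only at he2
            rw [SimpleGraph.Walk.edges_append, SimpleGraph.Walk.edges_append,
              SimpleGraph.Walk.edges_append, SimpleGraph.Walk.edges_copy] at he2
            simp only [List.mem_append] at he2
            rcases he2 with hh | hh | hh | hh
            · exact Or.inl (htw _ _ _ _ _ _ e hh)
            · exact Or.inr (Or.inl hh)
            · exact Or.inr (Or.inr (Or.inl hh))
            · exact Or.inr (Or.inr (Or.inr (htw _ _ _ _ _ _ e hh)))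
          rcases hdec with hh | hh | hh | hh
          · have hx : (if e ∈ (t (grp z.1.val.1)).edgeSet then wt z else 0) = wt z := if_pos hh
            linarith
          · have hx : (if e ∈ (p z.2.1).2.2.edges then wt z else 0) = wt z := if_pos hh
            linarith
          · have hx : (if e ∈ (p z.2.2).2.2.edges then wt z else 0) = wt z := if_pos hh
            linarith
          · have hx : (if e ∈ (t (grp z.1.val.2)).edgeSet then wt z else 0) = wt z := if_pos hh
            linarith
        · rw [if_neg he']
          linarith
      · have h0 : wt z = 0 := by rw [hwtdef]; dsimp only; rw [if_neg hP]
        rw [h0]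
        simp only [ite_self]
        norm_num
    refine le_trans (Finset.sum_le_sum fun z _ => hpt z) ?_
    rw [Finset.sum_add_distrib, Finset.sum_add_distrib, Finset.sum_add_distrib]
    -- tree sums
    have hT1v : (∑ z : {pr // pr ∈ M} × Fin n × Fin n,
        if e ∈ (t (grp z.1.val.1)).edgeSet then wt z else 0)
        = ∑ m : {pr // pr ∈ M}, (if e ∈ (t (grp m.val.1)).edgeSet then (1:ℝ) else 0) := by
      rw [Fintype.sum_prod_type]
      refine Finset.sum_congr rfl (fun m _ => ?_)
      by_cases hm : e ∈ (t (grp m.val.1)).edgeSet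
      · rw [if_pos hm, Finset.sum_congr rfl (fun y _ => if_pos hm),
          show (∑ y : Fin n × Fin n, wt (m, y)) = 1 from by
            rw [Fintype.sum_prod_type]; exact KEY m]
      · rw [if_neg hm, Finset.sum_congr rfl (fun y _ => if_neg hm), Finset.sum_const_zero]
    have hT4v : (∑ z : {pr // pr ∈ M} × Fin n × Fin n,
        if e ∈ (t (grp z.1.val.2)).edgeSet then wt z else 0)
        = ∑ m : {pr // pr ∈ M}, (if e ∈ (t (grp m.val.2)).edgeSet then (1:ℝ) else 0) := by
      rw [Fintype.sum_prod_type]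
      refine Finset.sum_congr rfl (fun m _ => ?_)
      by_cases hm : e ∈ (t (grp m.val.2)).edgeSet
      · rw [if_pos hm, Finset.sum_congr rfl (fun y _ => if_pos hm),
          show (∑ y : Fin n × Fin n, wt (m, y)) = 1 from by
            rw [Fintype.sum_prod_type]; exact KEY m]
      · rw [if_neg hm, Finset.sum_congr rfl (fun y _ => if_neg hm), Finset.sum_const_zero]
    have hT14 : (∑ m : {pr // pr ∈ M}, (if e ∈ (t (grp m.val.1)).edgeSet then (1:ℝ) else 0))
        + (∑ m : {pr // pr ∈ M}, (if e ∈ (t (grp m.val.2)).edgeSet then (1:ℝ) else 0)) ≤ 1 := by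
      rw [← Finset.sum_add_distrib]
      have pairsum : (∑ m : {pr // pr ∈ M},
          ((if e ∈ (t (grp m.val.1)).edgeSet then (1:ℝ) else 0)
            + (if e ∈ (t (grp m.val.2)).edgeSet then (1:ℝ) else 0)))
          = ∑ r : {pr // pr ∈ M} × Bool,
              (if e ∈ (t (grp (cond r.2 r.1.val.2 r.1.val.1))).edgeSet then (1:ℝ) else 0) := by
        rw [Fintype.sum_prod_type]
        exact Finset.sum_congr rfl (fun m _ => by rw [Fintype.sum_bool]; exact add_comm _ _)
      rw [pairsum]
      exact sum_ite_le_of_card _ zero_le_one uniqT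
    -- flow sums
    have hF2 : (∑ z : {pr // pr ∈ M} × Fin n × Fin n,
        if e ∈ (p z.2.1).2.2.edges then wt z else 0) ≤ 1 / 2 := by
      have e1 : (∑ z : {pr // pr ∈ M} × Fin n × Fin n,
          if e ∈ (p z.2.1).2.2.edges then wt z else 0)
          = ∑ m : {pr // pr ∈ M}, ∑ i : Fin n,
              (if e ∈ (p i).2.2.edges then (∑ j : Fin n, wt (m, i, j)) else 0) := by
        rw [Fintype.sum_prod_type]
        refine Finset.sum_congr rfl (fun m _ => ?_)
        rw [Fintype.sum_prod_type]
        refine Finset.sum_congr rfl (fun i _ => ?_)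
        by_cases hc : e ∈ (p i).2.2.edges
        · rw [if_pos hc, Finset.sum_congr rfl (fun j _ => if_pos hc)]
        · rw [if_neg hc, Finset.sum_congr rfl (fun j _ => if_neg hc), Finset.sum_const_zero]
      rw [e1]
      have e2 : ∀ (m : {pr // pr ∈ M}) (i : Fin n),
          (if e ∈ (p i).2.2.edges then (∑ j : Fin n, wt (m, i, j)) else 0)
          ≤ (if e ∈ (p i).2.2.edges then (if (p i).1 ∈ grp m.val.1 then w i / 2 else 0) else 0) := by
        intro m i
        split
        · exact hIJ m i
        · exact le_rfl
      refine le_trans (Finset.sum_le_sum fun m _ => Finset.sum_le_sum fun i _ => e2 m i) ?_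
      rw [Finset.sum_comm]
      have e3 : ∀ i : Fin n, (∑ m : {pr // pr ∈ M},
          if e ∈ (p i).2.2.edges then (if (p i).1 ∈ grp m.val.1 then w i / 2 else 0) else 0)
          ≤ (if e ∈ (p i).2.2.edges then w i else 0) / 2 := by
        intro i
        by_cases hc : e ∈ (p i).2.2.edges
        · rw [Finset.sum_congr rfl (fun m _ => if_pos hc), if_pos hc]
          exact sum_ite_le_of_card _ (div_nonneg (hw0 i) (by norm_num)) (uniqA (p i).1)
        · rw [Finset.sum_congr rfl (fun m _ => if_neg hc), if_neg hc,
            Finset.sum_const_zero, zero_div]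
      refine le_trans (Finset.sum_le_sum fun i _ => e3 i) ?_
      rw [← Finset.sum_div]
      linarith [hcong' e he]
    have hF3 : (∑ z : {pr // pr ∈ M} × Fin n × Fin n,
        if e ∈ (p z.2.2).2.2.edges then wt z else 0) ≤ 1 / 2 := by
      have e1 : (∑ z : {pr // pr ∈ M} × Fin n × Fin n,
          if e ∈ (p z.2.2).2.2.edges then wt z else 0)
          = ∑ m : {pr // pr ∈ M}, ∑ j : Fin n,
              (if e ∈ (p j).2.2.edges then (∑ i : Fin n, wt (m, i, j)) else 0) := by
        rw [Fintype.sum_prod_type]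
        refine Finset.sum_congr rfl (fun m _ => ?_)
        rw [Fintype.sum_prod_type, Finset.sum_comm]
        refine Finset.sum_congr rfl (fun j _ => ?_)
        by_cases hc : e ∈ (p j).2.2.edges
        · rw [if_pos hc, Finset.sum_congr rfl (fun i _ => if_pos hc)]
        · rw [if_neg hc, Finset.sum_congr rfl (fun i _ => if_neg hc), Finset.sum_const_zero]
      rw [e1]
      have e2 : ∀ (m : {pr // pr ∈ M}) (j : Fin n),
          (if e ∈ (p j).2.2.edges then (∑ i : Fin n, wt (m, i, j)) else 0)
          ≤ (if e ∈ (p j).2.2.edges then (if (p j).2.1 ∈ grp m.val.2 then w j / 2 else 0) else 0) := by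
        intro m j
        split
        · exact INNERI m j
        · exact le_rfl
      refine le_trans (Finset.sum_le_sum fun m _ => Finset.sum_le_sum fun j _ => e2 m j) ?_
      rw [Finset.sum_comm]
      have e3 : ∀ j : Fin n, (∑ m : {pr // pr ∈ M},
          if e ∈ (p j).2.2.edges then (if (p j).2.1 ∈ grp m.val.2 then w j / 2 else 0) else 0)
          ≤ (if e ∈ (p j).2.2.edges then w j else 0) / 2 := by
        intro j
        by_cases hc : e ∈ (p j).2.2.edges
        · rw [Finset.sum_congr rfl (fun m _ => if_pos hc), if_pos hc]
          exact sum_ite_le_of_card _ (div_nonneg (hw0 j) (by norm_num)) (uniqB (p j).2.1)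
        · rw [Finset.sum_congr rfl (fun m _ => if_neg hc), if_neg hc,
            Finset.sum_const_zero, zero_div]
      refine le_trans (Finset.sum_le_sum fun j _ => e3 j) ?_
      rw [← Finset.sum_div]
      linarith [hcong' e he]
    rw [hT1v, hT4v]
    linarith
  exact fracRoutable_of_index G (fun u v => if (u, v) ∈ M then (1:ℝ) else 0) 2 (I := {pr // pr ∈ M} × Fin n × Fin n) q wt hwt0 DEM CONG
end

section
/- Let D=(V,A) be a directed Eulerian multigraph (every vertex has in-degree equal to out-degree), T ⊆ V a set of special vertices, and suppose every ordered pair (s,s') of special vertices has λ(s,s';D) ≥ κ edge-disjoint directed paths. Then by repeatedly applying directed splitting-off (Frank/Jackson: for any vertex v ∉ T and edge a=(v,u), there is an edge b=(w,v) such that replacing a,b by (w,u) preserves λ(y,y') for all y,y' ≠ v) at all non-special vertices, one obtains a directed multigraph H̃ on vertex set T in which λ(s,s';H̃) ≥ κ for all ordered pairs of special vertices, and every edge (s,s') of H̃ corresponds to a directed s–s' path in D, with all these paths pairwise edge-disjoint. -/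
open Finset

/-- `IsDiwalk ends l u v`: the list of directed edges `l` forms a directed walk from
`u` to `v` in the directed multigraph with edge-endpoint map `ends`. -/
def IsDiwalk {E V : Type*} (ends : E → V × V) : List E → V → V → Prop
  | [], u, v => u = v
  | e :: es, u, v => (ends e).1 = u ∧ IsDiwalk ends es (ends e).2 v

set_option linter.unusedSectionVars false

section Aux
variable {V : Type*} [Fintype V] [DecidableEq V] {E : Type*} [Fintype E] [DecidableEq E]

lemma isDiwalk_append (ends : E → V × V) :
    ∀ (l1 l2 : List E) (x y z : V), IsDiwalk ends l1 x y → IsDiwalk ends l2 y z →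
      IsDiwalk ends (l1 ++ l2) x z
  | [], l2, x, y, z, h1, h2 => by
      have hxy : x = y := h1
      simpa [hxy] using h2
  | e :: es, l2, x, y, z, h1, h2 =>
      ⟨h1.1, isDiwalk_append ends es l2 _ y z h1.2 h2⟩

/-- number of edges from `S` to its complement -/
def dcut (ends : E → V × V) (S : Finset V) : ℕ :=
  (univ.filter fun e => (ends e).1 ∈ S ∧ (ends e).2 ∉ S).card

def TSep (T S : Finset V) : Prop := (S ∩ T).Nonempty ∧ (T \ S).Nonempty

def Euler (ends : E → V × V) : Prop :=
  ∀ v, (univ.filter fun e => (ends e).1 = v).card =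
    (univ.filter fun e => (ends e).2 = v).card

lemma sep_compl {T S : Finset V} (h : TSep T S) : TSep T Sᶜ := by
  obtain ⟨⟨s, hs⟩, ⟨s', hs'⟩⟩ := h
  simp only [mem_inter, mem_sdiff] at hs hs'
  exact ⟨⟨s', by simp [mem_inter, mem_compl, hs'.1, hs'.2]⟩,
    ⟨s, by simp [mem_sdiff, mem_compl, hs.1, hs.2]⟩⟩

lemma card_filter_split (p : E → Prop) [DecidablePred p] (a b : E) (hab : a ≠ b) :
    (univ.filter p).card = (∑ e ∈ univ \ {a, b}, if p e then 1 else 0)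
      + ((if p a then 1 else 0) + if p b then 1 else 0) := by
  rw [card_filter, ← Finset.sum_sdiff (Finset.subset_univ {a, b}), Finset.sum_pair hab]

lemma card_filter_two (p q : E → Prop) [DecidablePred p] [DecidablePred q] (a b : E)
    (hab : a ≠ b) (hsame : ∀ e, e ≠ a → e ≠ b → (p e ↔ q e)) :
    (univ.filter p).card + ((if q a then 1 else 0) + if q b then 1 else 0)
      = (univ.filter q).card + ((if p a then 1 else 0) + if p b then 1 else 0) := by
  rw [card_filter_split p a b hab, card_filter_split q a b hab]
  have h : (∑ e ∈ univ \ {a, b}, if p e then 1 else 0)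
      = ∑ e ∈ univ \ {a, b}, if q e then 1 else 0 := by
    refine Finset.sum_congr rfl fun e he => ?_
    simp only [mem_sdiff, mem_insert, mem_singleton] at he
    have := hsame e (fun h => he.2 (Or.inl h)) (fun h => he.2 (Or.inr h))
    simp [this]
  omega

lemma card_filter_one (p q : E → Prop) [DecidablePred p] [DecidablePred q] (a : E)
    (hsame : ∀ e, e ≠ a → (p e ↔ q e)) :
    (univ.filter p).card + (if q a then 1 else 0)
      = (univ.filter q).card + (if p a then 1 else 0) := by
  have hp : (univ.filter p).card = (∑ e ∈ univ \ {a}, if p e then 1 else 0)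
      + (if p a then 1 else 0) := by
    rw [card_filter, ← Finset.sum_sdiff (Finset.subset_univ {a}), Finset.sum_singleton]
  have hq : (univ.filter q).card = (∑ e ∈ univ \ {a}, if q e then 1 else 0)
      + (if q a then 1 else 0) := by
    rw [card_filter, ← Finset.sum_sdiff (Finset.subset_univ {a}), Finset.sum_singleton]
  have h : (∑ e ∈ univ \ {a}, if p e then 1 else 0)
      = ∑ e ∈ univ \ {a}, if q e then 1 else 0 := by
    refine Finset.sum_congr rfl fun e he => ?_
    simp only [mem_sdiff, mem_singleton] at he
    simp [hsame e he.2]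
  omega

lemma card_fst_mem (ends : E → V × V) (S : Finset V) :
    (univ.filter fun e => (ends e).1 ∈ S).card
      = ∑ v ∈ S, (univ.filter fun e => (ends e).1 = v).card := by
  rw [Finset.card_eq_sum_card_fiberwise (f := fun e => (ends e).1) (s := univ.filter fun e => (ends e).1 ∈ S) (t := S)
    (fun e he => (mem_filter.mp he).2)]
  refine Finset.sum_congr rfl fun v hv => ?_
  congr 1
  ext e
  simp only [mem_filter, mem_univ, true_and]
  exact ⟨fun h => h.2, fun h => ⟨h ▸ hv, h⟩⟩

lemma card_snd_mem (ends : E → V × V) (S : Finset V) :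
    (univ.filter fun e => (ends e).2 ∈ S).card
      = ∑ v ∈ S, (univ.filter fun e => (ends e).2 = v).card := by
  rw [Finset.card_eq_sum_card_fiberwise (f := fun e => (ends e).2) (s := univ.filter fun e => (ends e).2 ∈ S) (t := S)
    (fun e he => (mem_filter.mp he).2)]
  refine Finset.sum_congr rfl fun v hv => ?_
  congr 1
  ext e
  simp only [mem_filter, mem_univ, true_and]
  exact ⟨fun h => h.2, fun h => ⟨h ▸ hv, h⟩⟩

lemma dcut_compl (ends : E → V × V) (he : Euler ends) (S : Finset V) :
    dcut ends Sᶜ = dcut ends S := by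
  have h1 : (univ.filter fun e => (ends e).1 ∈ S).card
      = (univ.filter fun e => (ends e).2 ∈ S).card := by
    rw [card_fst_mem, card_snd_mem]
    exact Finset.sum_congr rfl fun v _ => he v
  -- split both sides
  have h2 : (univ.filter fun e => (ends e).1 ∈ S).card
      = dcut ends S + (univ.filter fun e => (ends e).1 ∈ S ∧ (ends e).2 ∈ S).card := by
    unfold dcut
    rw [card_filter, card_filter, card_filter, ← Finset.sum_add_distrib]
    refine Finset.sum_congr rfl fun e _ => ?_
    by_cases hh1 : (ends e).1 ∈ S <;> by_cases hh2 : (ends e).2 ∈ S <;> simp [hh1, hh2]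
  have h3 : (univ.filter fun e => (ends e).2 ∈ S).card
      = dcut ends Sᶜ + (univ.filter fun e => (ends e).1 ∈ S ∧ (ends e).2 ∈ S).card := by
    unfold dcut
    rw [card_filter, card_filter, card_filter, ← Finset.sum_add_distrib]
    refine Finset.sum_congr rfl fun e _ => ?_
    by_cases hh1 : (ends e).1 ∈ S <;> by_cases hh2 : (ends e).2 ∈ S <;>
      simp [hh1, hh2, mem_compl]
  omega

lemma dcut_submod (ends : E → V × V) (A B : Finset V) :
    dcut ends A + dcut ends B = dcut ends (A ∪ B) + dcut ends (A ∩ B)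
      + (univ.filter fun e => (ends e).1 ∈ A \ B ∧ (ends e).2 ∈ B \ A).card
      + (univ.filter fun e => (ends e).1 ∈ B \ A ∧ (ends e).2 ∈ A \ B).card := by
  unfold dcut
  rw [card_filter, card_filter, card_filter, card_filter, card_filter, card_filter,
    ← Finset.sum_add_distrib, ← Finset.sum_add_distrib, ← Finset.sum_add_distrib,
    ← Finset.sum_add_distrib]
  refine Finset.sum_congr rfl fun e _ => ?_
  by_cases h1 : (ends e).1 ∈ A <;> by_cases h2 : (ends e).1 ∈ B <;>
    by_cases h3 : (ends e).2 ∈ A <;> by_cases h4 : (ends e).2 ∈ B <;>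
    simp [h1, h2, h3, h4, mem_union, mem_inter, mem_sdiff]

end Aux

section Split
variable {V : Type*} [Fintype V] [DecidableEq V] {E : Type*} [Fintype E] [DecidableEq E]

/-- Key splitting-off lemma: there is an in-edge `b` of `v` such that no tight
separating set avoiding `v` contains both `u` and the tail of `b`. -/
lemma splitting (ends : E → V × V) (T : Finset V) (κ : ℕ)
    (he : Euler ends) (hconn : ∀ S, TSep T S → κ ≤ dcut ends S)
    (a : E) (v u : V) (hav : ends a = (v, u)) (hvT : v ∉ T) :
    ∃ b, (ends b).2 = v ∧
      ∀ S : Finset V, TSep T S → v ∉ S → (ends b).1 ∈ S → u ∈ S → κ + 1 ≤ dcut ends S := by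
  classical
  by_contra hcon
  push_neg at hcon
  -- every in-edge b yields a "dangerous" set
  have hbad : ∀ b, (ends b).2 = v → ∃ S : Finset V,
      TSep T S ∧ v ∉ S ∧ (ends b).1 ∈ S ∧ u ∈ S ∧ dcut ends S ≤ κ := by
    intro b hb
    obtain ⟨S, h1, h2, h3, h4, h5⟩ := hcon b hb
    exact ⟨S, h1, h2, h3, h4, by omega⟩
  -- there exists an in-edge of v
  have hin : ∃ b, (ends b).2 = v := by
    have h0 : 0 < (univ.filter fun e => (ends e).1 = v).card :=
      card_pos.mpr ⟨a, by simp [hav]⟩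
    rw [he v] at h0
    obtain ⟨b, hb⟩ := card_pos.mp h0
    exact ⟨b, (mem_filter.mp hb).2⟩
  -- the family of dangerous sets containing u avoiding v
  set P : Finset V → Prop := fun X => TSep T X ∧ v ∉ X ∧ u ∈ X ∧ dcut ends X ≤ κ with hP
  have hPne : ∃ X, P X := by
    obtain ⟨b0, hb0⟩ := hin
    obtain ⟨S, h1, h2, h3, h4, h5⟩ := hbad b0 hb0
    exact ⟨S, h1, h2, h4, h5⟩
  haveI : DecidablePred P := Classical.decPred P
  obtain ⟨X, hXmem, hXmax⟩ := Finset.exists_max_image (univ.filter P) Finset.card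
    (by obtain ⟨X, hX⟩ := hPne; exact ⟨X, mem_filter.mpr ⟨mem_univ _, hX⟩⟩)
  have hX : P X := (mem_filter.mp hXmem).2
  obtain ⟨hXsep, hXv, hXu, hXd⟩ := hX
  have hXtight : dcut ends X = κ := le_antisymm hXd (hconn X hXsep)
  -- claim: every in-edge of v has its tail in X
  have hclaim : ∀ e, (ends e).2 = v → (ends e).1 ∈ X := by
    intro e hev
    by_contra hw
    obtain ⟨Y, hYsep, hYv, hYw, hYu, hYd⟩ := hbad e hev
    have hYtight : dcut ends Y = κ := le_antisymm hYd (hconn Y hYsep)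
    set w := (ends e).1 with hwdef
    -- key inequality via submodularity on (X, Yᶜ)
    have hsub := dcut_submod ends X Yᶜ
    have e1 : X ∪ Yᶜ = (Y \ X)ᶜ := by ext x; simp [mem_compl, mem_sdiff, mem_union]; tauto
    have e2 : X ∩ Yᶜ = X \ Y := by ext x; simp [mem_compl, mem_sdiff, mem_inter]
    have e3 : X \ Yᶜ = X ∩ Y := by ext x; simp [mem_compl, mem_sdiff, mem_inter]
    have e4 : Yᶜ \ X = (X ∪ Y)ᶜ := by ext x; simp [mem_compl, mem_sdiff, mem_union]; tauto
    rw [e1, e2, e3, e4, dcut_compl ends he Y, dcut_compl ends he (Y \ X)] at hsub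
    -- the edge a witnesses a crossing from (X∪Y)ᶜ to X∩Y
    have hcross : 0 < (univ.filter fun e' =>
        (ends e').1 ∈ (X ∪ Y)ᶜ ∧ (ends e').2 ∈ X ∩ Y).card := by
      refine card_pos.mpr ⟨a, ?_⟩
      simp only [mem_filter, mem_univ, true_and, hav, mem_compl, mem_union, mem_inter]
      exact ⟨by tauto, hXu, hYu⟩
    -- not both X\Y and Y\X are separating
    have hnotboth : ¬(TSep T (X \ Y) ∧ TSep T (Y \ X)) := by
      rintro ⟨hs1, hs2⟩
      have := hconn _ hs1
      have := hconn _ hs2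
      omega
    -- in either failing case, X ∪ Y is dangerous, contradicting maximality of X
    have hunion : TSep T (X ∪ Y) ∧ dcut ends (X ∪ Y) ≤ κ := by
      have hsub2 := dcut_submod ends X Y
      have hcases : (X ∩ T ⊆ Y) ∨ (Y ∩ T ⊆ X) := by
        by_contra hc
        push_neg at hc
        obtain ⟨hc1, hc2⟩ := hc
        apply hnotboth
        obtain ⟨x0, hx0⟩ := not_subset.mp hc1
        obtain ⟨y0, hy0⟩ := not_subset.mp hc2
        simp only [mem_inter] at hx0 hy0
        obtain ⟨sX, hsX⟩ := hXsep.2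
        obtain ⟨sY, hsY⟩ := hYsep.2
        simp only [mem_sdiff] at hsX hsY
        constructor
        · exact ⟨⟨x0, by simp [mem_inter, mem_sdiff, hx0.1.1, hx0.1.2, hx0.2]⟩,
            ⟨sX, by simp [mem_sdiff, hsX.1, hsX.2]⟩⟩
        · exact ⟨⟨y0, by simp [mem_inter, mem_sdiff, hy0.1.1, hy0.1.2, hy0.2]⟩,
            ⟨sY, by simp [mem_sdiff, hsY.1, hsY.2]⟩⟩
      have hinter : TSep T (X ∩ Y) := by
        obtain ⟨sX, hsX⟩ := hXsep.2
        simp only [mem_sdiff] at hsX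
        have hright : (T \ (X ∩ Y)).Nonempty := by
          refine ⟨sX, ?_⟩
          simp only [mem_sdiff, mem_inter]
          exact ⟨hsX.1, fun hc => hsX.2 hc.1⟩
        rcases hcases with hc | hc
        · obtain ⟨x0, hx0⟩ := hXsep.1
          simp only [mem_inter] at hx0
          have hx0' : x0 ∈ (X ∩ Y) ∩ T := by
            have hy := hc (mem_inter.mpr ⟨hx0.1, hx0.2⟩)
            simp only [mem_inter]
            exact ⟨⟨hx0.1, hy⟩, hx0.2⟩
          exact ⟨⟨x0, hx0'⟩, hright⟩
        · obtain ⟨y0, hy0⟩ := hYsep.1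
          simp only [mem_inter] at hy0
          have hy0' : y0 ∈ (X ∩ Y) ∩ T := by
            have hx := hc (mem_inter.mpr ⟨hy0.1, hy0.2⟩)
            simp only [mem_inter]
            exact ⟨⟨hx, hy0.1⟩, hy0.2⟩
          exact ⟨⟨y0, hy0'⟩, hright⟩
      have hdI := hconn _ hinter
      refine ⟨?_, by omega⟩
      -- X ∪ Y separates T
      obtain ⟨x0, hx0⟩ := hXsep.1
      simp only [mem_inter] at hx0
      refine ⟨⟨x0, by simp [mem_inter, mem_union, hx0.1, hx0.2]⟩, ?_⟩
      -- T ⊄ X ∪ Y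
      by_contra hTU
      rw [Finset.not_nonempty_iff_eq_empty, Finset.sdiff_eq_empty_iff_subset] at hTU
      rcases hcases with hc | hc
      · -- then T ⊆ Y, contradicting TSep T Y
        obtain ⟨sY, hsY⟩ := hYsep.2
        simp only [mem_sdiff] at hsY
        rcases mem_union.mp (hTU hsY.1) with h | h
        · exact hsY.2 (hc (mem_inter.mpr ⟨h, hsY.1⟩))
        · exact hsY.2 h
      · obtain ⟨sX, hsX⟩ := hXsep.2
        simp only [mem_sdiff] at hsX
        rcases mem_union.mp (hTU hsX.1) with h | h
        · exact hsX.2 h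
        · exact hsX.2 (hc (mem_inter.mpr ⟨h, hsX.1⟩))
    -- maximality contradiction
    have hmem : X ∪ Y ∈ univ.filter P := by
      refine mem_filter.mpr ⟨mem_univ _, hunion.1, ?_, ?_, hunion.2⟩
      · simp only [mem_union]; tauto
      · simp only [mem_union]; exact Or.inl hXu
    have hle := hXmax _ hmem
    have hlt : X.card < (X ∪ Y).card := by
      apply Finset.card_lt_card
      refine ⟨Finset.subset_union_left, ?_⟩
      intro hcontra
      exact hw (hcontra (mem_union.mpr (Or.inr hYw)))
    omega
  -- final counting: dcut (insert v X) + 1 ≤ κ, contradicting hconn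
  set Z := insert v X with hZ
  have hZsep : TSep T Z := by
    obtain ⟨x0, hx0⟩ := hXsep.1
    simp only [mem_inter] at hx0
    obtain ⟨sX, hsX⟩ := hXsep.2
    simp only [mem_sdiff] at hsX
    refine ⟨⟨x0, by simp [mem_inter, hZ, mem_insert, hx0.1, hx0.2]⟩,
      ⟨sX, ?_⟩⟩
    simp only [mem_sdiff, hZ, mem_insert]
    refine ⟨hsX.1, ?_⟩
    rintro (h | h)
    · exact hvT (h ▸ hsX.1)
    · exact hsX.2 h
  have hZconn := hconn Z hZsep
  -- counting
  have hA1 : (univ.filter fun e => (ends e).1 ∈ X ∧ (ends e).2 ∉ Z).card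
      + (univ.filter fun e => (ends e).2 = v).card ≤ κ := by
    have hsub : (univ.filter fun e => (ends e).1 ∈ X ∧ (ends e).2 ∉ Z)
        ∪ (univ.filter fun e => (ends e).2 = v) ⊆
        univ.filter fun e => (ends e).1 ∈ X ∧ (ends e).2 ∉ X := by
      intro e heu
      rcases mem_union.mp heu with h | h
      · simp only [mem_filter, mem_univ, true_and] at h ⊢
        exact ⟨h.1, fun hc => h.2 (by simp [hZ, mem_insert, hc])⟩
      · simp only [mem_filter, mem_univ, true_and] at h ⊢
        exact ⟨hclaim e h, fun hc => hXv (h ▸ hc)⟩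
    have hdisj : Disjoint (univ.filter fun e => (ends e).1 ∈ X ∧ (ends e).2 ∉ Z)
        (univ.filter fun e => (ends e).2 = v) := by
      rw [Finset.disjoint_left]
      intro e h1 h2
      simp only [mem_filter, mem_univ, true_and] at h1 h2
      exact h1.2 (by simp [hZ, mem_insert, h2])
    calc (univ.filter fun e => (ends e).1 ∈ X ∧ (ends e).2 ∉ Z).card
          + (univ.filter fun e => (ends e).2 = v).card
        = ((univ.filter fun e => (ends e).1 ∈ X ∧ (ends e).2 ∉ Z)
          ∪ (univ.filter fun e => (ends e).2 = v)).card :=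
          (Finset.card_union_of_disjoint hdisj).symm
      _ ≤ (univ.filter fun e => (ends e).1 ∈ X ∧ (ends e).2 ∉ X).card :=
          Finset.card_le_card hsub
      _ ≤ κ := hXd
  have hA2 : (univ.filter fun e => (ends e).1 = v ∧ (ends e).2 ∉ Z).card + 1
      ≤ (univ.filter fun e => (ends e).1 = v).card := by
    have hsub : insert a (univ.filter fun e => (ends e).1 = v ∧ (ends e).2 ∉ Z)
        ⊆ univ.filter fun e => (ends e).1 = v := by
      intro e heu
      rcases mem_insert.mp heu with h | h
      · simp [h, hav]
      · simp only [mem_filter, mem_univ, true_and] at h ⊢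
        exact h.1
    have hnot : a ∉ univ.filter fun e => (ends e).1 = v ∧ (ends e).2 ∉ Z := by
      simp only [mem_filter, mem_univ, true_and, hav, not_and, not_not]
      exact mem_insert.mpr (Or.inr hXu)
    have := Finset.card_le_card hsub
    rwa [Finset.card_insert_of_notMem hnot] at this
  have hZle : dcut ends Z ≤ (univ.filter fun e => (ends e).1 ∈ X ∧ (ends e).2 ∉ Z).card
      + (univ.filter fun e => (ends e).1 = v ∧ (ends e).2 ∉ Z).card := by
    have hsub : (univ.filter fun e => (ends e).1 ∈ Z ∧ (ends e).2 ∉ Z)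
        ⊆ (univ.filter fun e => (ends e).1 ∈ X ∧ (ends e).2 ∉ Z)
          ∪ (univ.filter fun e => (ends e).1 = v ∧ (ends e).2 ∉ Z) := by
      intro e heu
      simp only [mem_filter, mem_univ, true_and, mem_union] at heu ⊢
      rcases mem_insert.mp (hZ ▸ heu.1) with h | h
      · exact Or.inr ⟨h, heu.2⟩
      · exact Or.inl ⟨h, heu.2⟩
    calc dcut ends Z ≤ _ := Finset.card_le_card hsub
      _ ≤ _ := Finset.card_union_le _ _
  have heq := he v
  omega

end Split

section Master
universe u1 u2
variable {V : Type u1} [Fintype V] [DecidableEq V]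

lemma card_filter_subtype {E' : Type u2} [Fintype E'] [DecidableEq E'] (b : E')
    (p : E' → Prop) [DecidablePred p] :
    (univ.filter fun e : {e : E' // e ≠ b} => p e.val).card
      = (univ.filter fun e : E' => p e ∧ e ≠ b).card := by
  refine Finset.card_bij (fun e _ => e.val) ?_ ?_ ?_
  · intro e he
    simp only [mem_filter, mem_univ, true_and] at he ⊢
    exact ⟨he, e.2⟩
  · intro e1 _ e2 _ h
    exact Subtype.ext h
  · intro e he
    simp only [mem_filter, mem_univ, true_and] at he
    exact ⟨⟨e, he.2⟩, by simp [he.1], rfl⟩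

lemma key_del {E' : Type u2} [Fintype E'] [DecidableEq E'] (a : E')
    (p : E' → Prop) [DecidablePred p] :
    (univ.filter fun e : {e : E' // e ≠ a} => p e.val).card + (if p a then 1 else 0)
      = (univ.filter p).card := by
  rw [card_filter_subtype]
  have h2 := card_filter_one (fun e : E' => p e ∧ e ≠ a) p a (fun e he => by simp [he])
  beta_reduce at h2
  by_cases h3 : p a <;> simp only [h3, ne_eq, not_true_eq_false, and_false, and_true,
    if_false, if_true, true_and, false_and] at h2 ⊢ <;> omega

lemma key_split {E' : Type u2} [Fintype E'] [DecidableEq E'] (a b : E') (hba : b ≠ a)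
    (p q : E' → Prop) [DecidablePred p] [DecidablePred q]
    (hsame : ∀ e, e ≠ a → e ≠ b → (p e ↔ q e)) :
    (univ.filter fun e : {e : E' // e ≠ b} => p e.val).card
      + ((if q a then 1 else 0) + if q b then 1 else 0)
    = (univ.filter q).card + (if p a then 1 else 0) := by
  rw [card_filter_subtype]
  have h2 := card_filter_two (fun e : E' => p e ∧ e ≠ b) q a b hba.symm
    (fun e hea heb => by simp [heb, hsame e hea heb])
  beta_reduce at h2
  have e1 : (p a ∧ a ≠ b) ↔ p a := and_iff_left hba.symm
  have e2 : (p b ∧ b ≠ b) ↔ False := by simp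
  simp only [e1, e2, if_false] at h2
  split_ifs at h2 ⊢ <;> omega

lemma masterBase {E : Type u2} [Fintype E] [DecidableEq E] (ends : E → V × V)
    (T : Finset V) (κ : ℕ)
    {E' : Type u2} [Fintype E'] [DecidableEq E'] (ends' : E' → V × V) (ρ : E' → List E)
    (hμ : (univ.filter fun e => (ends' e).1 ∉ T ∨ (ends' e).2 ∉ T).card = 0)
    (hconn : ∀ S, TSep T S → κ ≤ dcut ends' S)
    (hwalk : ∀ e, IsDiwalk ends (ρ e) (ends' e).1 (ends' e).2)
    (hnd : ∀ e, (ρ e).Nodup)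
    (hdisj : ∀ e f, e ≠ f → ∀ x ∈ ρ e, x ∉ ρ f) :
    ∃ (n : ℕ) (h : Fin n → V × V) (p : Fin n → List E),
      (∀ f, (h f).1 ∈ T ∧ (h f).2 ∈ T) ∧
      (∀ f, IsDiwalk ends (p f) (h f).1 (h f).2) ∧
      (∀ f, (p f).Nodup) ∧
      (∀ f g, f ≠ g → ∀ e, e ∈ p f → e ∉ p g) ∧
      (∀ s ∈ T, ∀ s' ∈ T, s ≠ s' → ∀ S : Finset V, s ∈ S → s' ∉ S →
        κ ≤ (univ.filter fun f => (h f).1 ∈ S ∧ (h f).2 ∉ S).card) := by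
  have hT : ∀ e, (ends' e).1 ∈ T ∧ (ends' e).2 ∈ T := by
    intro e
    have h0 := card_eq_zero.mp hμ
    rw [filter_eq_empty_iff] at h0
    have h2 := h0 (mem_univ e)
    rw [not_or, not_not, not_not] at h2
    exact h2
  set eqv : Fin (Fintype.card E') ≃ E' := (Fintype.equivFin E').symm with heqv
  refine ⟨Fintype.card E', fun f => ends' (eqv f), fun f => ρ (eqv f),
    fun f => hT _, fun f => hwalk _, fun f => hnd _, ?_, ?_⟩
  · intro f g hfg e hef
    exact hdisj _ _ (fun hc => hfg (eqv.injective hc)) e hef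
  · intro s hs s' hs' _ S hS hS'
    have hsep : TSep T S := ⟨⟨s, mem_inter.mpr ⟨hS, hs⟩⟩, ⟨s', mem_sdiff.mpr ⟨hs', hS'⟩⟩⟩
    have hc := hconn S hsep
    have hcard : (univ.filter fun f : Fin (Fintype.card E') =>
        (ends' (eqv f)).1 ∈ S ∧ (ends' (eqv f)).2 ∉ S).card = dcut ends' S := by
      unfold dcut
      refine Finset.card_bij (fun f _ => eqv f) ?_ ?_ ?_
      · intro f hf
        simp only [mem_filter, mem_univ, true_and] at hf ⊢
        exact hf
      · intro f1 _ f2 _ h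
        exact eqv.injective h
      · intro e he
        simp only [mem_filter, mem_univ, true_and] at he
        exact ⟨eqv.symm e, by simp [he], by simp⟩
    beta_reduce
    omega

lemma master {E : Type u2} [Fintype E] [DecidableEq E] (ends : E → V × V)
    (T : Finset V) (κ : ℕ) :
    ∀ (m : ℕ) (E' : Type u2) [Fintype E'] [DecidableEq E'] (ends' : E' → V × V)
      (ρ : E' → List E),
      (univ.filter fun e => (ends' e).1 ∉ T ∨ (ends' e).2 ∉ T).card ≤ m →
      Euler ends' →
      (∀ S, TSep T S → κ ≤ dcut ends' S) →
      (∀ e, IsDiwalk ends (ρ e) (ends' e).1 (ends' e).2) →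
      (∀ e, (ρ e).Nodup) →
      (∀ e f, e ≠ f → ∀ x ∈ ρ e, x ∉ ρ f) →
      ∃ (n : ℕ) (h : Fin n → V × V) (p : Fin n → List E),
        (∀ f, (h f).1 ∈ T ∧ (h f).2 ∈ T) ∧
        (∀ f, IsDiwalk ends (p f) (h f).1 (h f).2) ∧
        (∀ f, (p f).Nodup) ∧
        (∀ f g, f ≠ g → ∀ e, e ∈ p f → e ∉ p g) ∧
        (∀ s ∈ T, ∀ s' ∈ T, s ≠ s' → ∀ S : Finset V, s ∈ S → s' ∉ S →
          κ ≤ (univ.filter fun f => (h f).1 ∈ S ∧ (h f).2 ∉ S).card) := by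
  intro m
  induction m with
  | zero =>
    intro E' _ _ ends' ρ hμ _ hconn hwalk hnd hdisj
    exact masterBase ends T κ ends' ρ (Nat.le_zero.mp hμ) hconn hwalk hnd hdisj
  | succ m ih =>
    intro E' instF instD ends' ρ hμ heuler hconn hwalk hnd hdisj
    by_cases hμ0 : (univ.filter fun e => (ends' e).1 ∉ T ∨ (ends' e).2 ∉ T).card = 0
    · exact masterBase ends T κ ends' ρ hμ0 hconn hwalk hnd hdisj
    obtain ⟨e1, he1⟩ := card_pos.mp (Nat.pos_of_ne_zero hμ0)
    have he1' : (ends' e1).1 ∉ T ∨ (ends' e1).2 ∉ T := (mem_filter.mp he1).2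
    obtain ⟨v, hvT, a, ha⟩ : ∃ v, v ∉ T ∧ ∃ a, (ends' a).1 = v := by
      rcases he1' with h | h
      · exact ⟨(ends' e1).1, h, e1, rfl⟩
      · refine ⟨(ends' e1).2, h, ?_⟩
        have h0 : 0 < (univ.filter fun e => (ends' e).2 = (ends' e1).2).card :=
          card_pos.mpr ⟨e1, by simp⟩
        rw [← heuler ((ends' e1).2)] at h0
        obtain ⟨a, haa⟩ := card_pos.mp h0
        exact ⟨a, (mem_filter.mp haa).2⟩
    by_cases hloop : ends' a = (v, v)
    · -- delete the loop a
      have hμ'' : (univ.filter fun e : {e : E' // e ≠ a} =>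
          (ends' e.val).1 ∉ T ∨ (ends' e.val).2 ∉ T).card ≤ m := by
        have k := key_del a (fun e : E' => (ends' e).1 ∉ T ∨ (ends' e).2 ∉ T)
        beta_reduce at k ⊢
        simp only [hloop] at k
        simp only [hvT, not_false_iff, true_or, if_true] at k
        omega
      have heuler'' : Euler (fun e : {e : E' // e ≠ a} => ends' e.val) := by
        intro x
        have k1 := key_del a (fun e : E' => (ends' e).1 = x)
        have k2 := key_del a (fun e : E' => (ends' e).2 = x)
        have h0 := heuler x
        beta_reduce at k1 k2 ⊢
        simp only [hloop] at k1 k2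
        by_cases hx : v = x <;> simp only [hx, if_true, if_false] at k1 k2 <;> omega
      have hconn'' : ∀ S, TSep T S → κ ≤ dcut (fun e : {e : E' // e ≠ a} => ends' e.val) S := by
        intro S hsep
        have k := key_del a (fun e : E' => (ends' e).1 ∈ S ∧ (ends' e).2 ∉ S)
        have hc := hconn S hsep
        unfold dcut at hc ⊢
        beta_reduce at k ⊢
        simp only [hloop] at k
        simp only [and_not_self_iff, if_false] at k
        omega
      exact ih {e : E' // e ≠ a} (fun e => ends' e.val) (fun e => ρ e.val) hμ'' heuler''
        hconn'' (fun e => hwalk e.val) (fun e => hnd e.val)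
        (fun e f hef x hx => hdisj e.val f.val (fun hc => hef (Subtype.ext hc)) x hx)
    · -- split off a pair of edges at v
      obtain ⟨u, hau⟩ : ∃ u, ends' a = (v, u) := ⟨(ends' a).2, by rw [Prod.ext_iff]; exact ⟨ha, rfl⟩⟩
      obtain ⟨b, hb2, hbprop⟩ := splitting ends' T κ heuler hconn a v u hau hvT
      obtain ⟨w, hbw⟩ : ∃ w, ends' b = (w, v) := ⟨(ends' b).1, by rw [Prod.ext_iff]; exact ⟨rfl, hb2⟩⟩
      have hvu : u ≠ v := fun h => hloop (by rw [hau, h])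
      have hba : b ≠ a := by
        intro hc
        rw [hc, hau] at hb2
        exact hvu hb2
      have hbprop' : ∀ S, TSep T S → v ∉ S → w ∈ S → u ∈ S → κ + 1 ≤ dcut ends' S := by
        intro S h1 h2 h3 h4
        exact hbprop S h1 h2 (by rw [hbw]; exact h3) h4
      have key : ∀ (pv : V × V → Prop) (_ : DecidablePred pv),
          (univ.filter fun e : {e : E' // e ≠ b} =>
              pv (if e.val = a then (w, u) else ends' e.val)).card
            + ((if pv (v, u) then 1 else 0) + if pv (w, v) then 1 else 0)
          = (univ.filter fun e : E' => pv (ends' e)).card + (if pv (w, u) then 1 else 0) := by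
        intro pv _
        have h2 := key_split a b hba
          (fun e : E' => pv (if e = a then (w, u) else ends' e))
          (fun e : E' => pv (ends' e)) (fun e hea _ => by simp [hea])
        beta_reduce at h2 ⊢
        simpa [hau, hbw] using h2
      have heuler'' : Euler (fun e : {e : E' // e ≠ b} =>
          if e.val = a then (w, u) else ends' e.val) := by
        intro x
        have k1 := key (fun q => q.1 = x) (by infer_instance)
        have k2 := key (fun q => q.2 = x) (by infer_instance)
        have h0 := heuler x
        beta_reduce at k1 k2 ⊢
        split_ifs at k1 k2 <;> omega
      have hconn'' : ∀ S, TSep T S → κ ≤ dcut (fun e : {e : E' // e ≠ b} =>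
          if e.val = a then (w, u) else ends' e.val) S := by
        have hmain : ∀ S, TSep T S → v ∉ S → κ ≤ dcut (fun e : {e : E' // e ≠ b} =>
            if e.val = a then (w, u) else ends' e.val) S := by
          intro S hsep hvS
          have k := key (fun q => q.1 ∈ S ∧ q.2 ∉ S) (by infer_instance)
          have hc := hconn S hsep
          unfold dcut at hc ⊢
          beta_reduce at k ⊢
          simp only [Prod.fst, Prod.snd] at k
          by_cases hwS : w ∈ S
          · by_cases huS : u ∈ S
            · have hb' := hbprop' S hsep hvS hwS huS
              unfold dcut at hb'
              simp only [hvS, hwS, huS, not_true_eq_false, not_false_eq_true,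
                and_true, and_false, true_and, false_and, if_true, if_false] at k
              omega
            · simp only [hvS, hwS, huS, not_true_eq_false, not_false_eq_true,
                and_true, and_false, true_and, false_and, if_true, if_false] at k
              omega
          · simp only [hvS, hwS, not_true_eq_false, not_false_eq_true,
              and_true, and_false, true_and, false_and, if_true, if_false] at k
            omega
        intro S hsep
        by_cases hvS : v ∈ S
        · have h1 := hmain Sᶜ (sep_compl hsep) (by simp [hvS])
          rwa [dcut_compl _ heuler''] at h1
        · exact hmain S hsep hvS
      have hμ'' : (univ.filter fun e : {e : E' // e ≠ b} =>
          ((if e.val = a then (w, u) else ends' e.val) : V × V).1 ∉ T ∨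
            ((if e.val = a then (w, u) else ends' e.val) : V × V).2 ∉ T).card ≤ m := by
        have k := key (fun q => q.1 ∉ T ∨ q.2 ∉ T) (by infer_instance)
        beta_reduce at k ⊢
        simp only [Prod.fst, Prod.snd, hvT, not_false_iff, true_or, or_true, if_true] at k
        by_cases h3 : w ∉ T ∨ u ∉ T <;> simp only [h3, if_true, if_false] at k <;> omega
      have hwalk'' : ∀ e : {e : E' // e ≠ b},
          IsDiwalk ends (if e.val = a then ρ b ++ ρ a else ρ e.val)
            ((if e.val = a then ((w, u) : V × V) else ends' e.val)).1
            ((if e.val = a then ((w, u) : V × V) else ends' e.val)).2 := by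
        intro e
        by_cases hea : e.val = a
        · simp only [if_pos hea]
          have hwb := hwalk b
          have hwa := hwalk a
          rw [hbw] at hwb
          rw [hau] at hwa
          exact isDiwalk_append ends _ _ _ v _ hwb hwa
        · simp only [if_neg hea]
          exact hwalk e.val
      have hnd'' : ∀ e : {e : E' // e ≠ b},
          (if e.val = a then ρ b ++ ρ a else ρ e.val).Nodup := by
        intro e
        by_cases hea : e.val = a
        · simp only [if_pos hea]
          exact List.Nodup.append (hnd b) (hnd a) (fun x hxb hxa => hdisj b a hba x hxb hxa)
        · simp only [if_neg hea]
          exact hnd e.val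
      have hdisj'' : ∀ e f : {e : E' // e ≠ b}, e ≠ f →
          ∀ x ∈ (if e.val = a then ρ b ++ ρ a else ρ e.val),
            x ∉ (if f.val = a then ρ b ++ ρ a else ρ f.val) := by
        intro e f hef x hxe hxf
        by_cases hea : e.val = a <;> by_cases hfa : f.val = a
        · exact hef (Subtype.ext (hea.trans hfa.symm))
        · rw [if_pos hea] at hxe
          rw [if_neg hfa] at hxf
          rcases List.mem_append.mp hxe with h | h
          · exact hdisj b f.val (fun hc => f.2 hc.symm) x h hxf
          · exact hdisj a f.val (fun hc => hfa hc.symm) x h hxf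
        · rw [if_neg hea] at hxe
          rw [if_pos hfa] at hxf
          rcases List.mem_append.mp hxf with h | h
          · exact hdisj e.val b e.2 x hxe h
          · exact hdisj e.val a hea x hxe h
        · rw [if_neg hea] at hxe
          rw [if_neg hfa] at hxf
          exact hdisj e.val f.val (fun hc => hef (Subtype.ext hc)) x hxe hxf
      exact ih {e : E' // e ≠ b} (fun e => if e.val = a then (w, u) else ends' e.val)
        (fun e => if e.val = a then ρ b ++ ρ a else ρ e.val)
        hμ'' heuler'' hconn'' hwalk'' hnd'' hdisj''

end Master

/-- Directed splitting-off (Frank/Jackson): let `D` be a directed Eulerian multigraph,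
`T` a set of special vertices, and suppose every ordered pair of distinct special
vertices has `κ` edge-disjoint directed paths (equivalently, every directed cut
separating them has at least `κ` edges).  Then there is a directed multigraph `H̃` on
the special vertices (given by `n` edges with endpoint map `h`), whose every ordered
pair of distinct special vertices is `κ`-edge-connected, together with directed paths
in `D`, one for each edge of `H̃`, that are pairwise edge-disjoint. -/
theorem stmt_17 {V E : Type*} [Fintype V] [DecidableEq V] [Fintype E] [DecidableEq E]
    (ends : E → V × V) (T : Finset V) (κ : ℕ)
    (heuler : ∀ v, (univ.filter fun e => (ends e).1 = v).card =
      (univ.filter fun e => (ends e).2 = v).card)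
    (hconn : ∀ s ∈ T, ∀ s' ∈ T, s ≠ s' → ∀ S : Finset V, s ∈ S → s' ∉ S →
      κ ≤ (univ.filter fun e => (ends e).1 ∈ S ∧ (ends e).2 ∉ S).card) :
    ∃ (n : ℕ) (h : Fin n → V × V) (p : Fin n → List E),
      (∀ f, (h f).1 ∈ T ∧ (h f).2 ∈ T) ∧
      (∀ f, IsDiwalk ends (p f) (h f).1 (h f).2) ∧
      (∀ f, (p f).Nodup) ∧
      (∀ f g, f ≠ g → ∀ e, e ∈ p f → e ∉ p g) ∧
      (∀ s ∈ T, ∀ s' ∈ T, s ≠ s' → ∀ S : Finset V, s ∈ S → s' ∉ S →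
        κ ≤ (univ.filter fun f => (h f).1 ∈ S ∧ (h f).2 ∉ S).card) := by
  have hconn' : ∀ S, TSep T S → κ ≤ dcut ends S := by
    intro S hsep
    obtain ⟨⟨s, hs⟩, ⟨s', hs'⟩⟩ := hsep
    simp only [mem_inter, mem_sdiff] at hs hs'
    have hne : s ≠ s' := fun h => hs'.2 (h ▸ hs.1)
    exact hconn s hs.2 s' hs'.1 hne S hs.1 hs'.2
  have hwalk : ∀ e : E, IsDiwalk ends [e] (ends e).1 (ends e).2 := by
    intro e
    exact ⟨rfl, rfl⟩
  have hdisj : ∀ e f : E, e ≠ f → ∀ x ∈ [e], x ∉ [f] := by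
    intro e f hef x hx
    simp only [List.mem_singleton] at hx ⊢
    exact hx ▸ hef
  exact master ends T κ ((univ.filter fun e => (ends e).1 ∉ T ∨ (ends e).2 ∉ T).card)
    E ends (fun e => [e]) le_rfl heuler hconn' hwalk
    (fun e => List.nodup_singleton e) hdisj
end
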